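/- arXiv:2509.07926 — 13 statements merged into one kernel-verified Lean document; each statement's English description precedes it below -/
import Mathlib

section
/- Let m and k be positive integers with k ≥ 3. Then b(mk,k) ≤ mk − m. Moreover, if D(mk,k) = {1}, then b(mk,k) = mk − m. -/
/-- `A` is a `k`-term cyclic arithmetic progression mod `N` with common difference `d`:
it is a `k`-element subset of `ZMod N` whose elements are `t, t+d, …, t+(k-1)d`. -/
def IsAPWith (N k : ℕ) (A : Finset (ZMod N)) (d : ZMod N) : Prop :=
  A.card = k ∧ ∃ t : ZMod N, A = (Finset.range k).image (fun i : ℕ => t + (i : ZMod N) * d)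

/-- `A` is a `k`-term cyclic arithmetic progression mod `N`. -/
def IsAP (N k : ℕ) (A : Finset (ZMod N)) : Prop :=
  ∃ d : ZMod N, IsAPWith N k A d

/-- `D(N,k)`: the set of values `gcd(d,k)` where `d` ranges over all `d ∈ {1,…,N-1}` that are
a common difference of some `k`-term cyclic arithmetic progression mod `N`. -/
def Ddiff (N k : ℕ) : Set ℕ :=
  {g | ∃ d : ℕ, 1 ≤ d ∧ d ≤ N - 1 ∧
    (∃ A : Finset (ZMod N), IsAPWith N k A (d : ZMod N)) ∧ g = Nat.gcd d k}

/-- `b(N,k)`: the maximum size of a subset of `ZMod N` containing no `k`-term cyclic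
arithmetic progression mod `N`. -/
noncomputable def bNum (N k : ℕ) : ℕ :=
  sSup {n | ∃ B : Finset (ZMod N), B.card = n ∧ ∀ A ⊆ B, ¬ IsAP N k A}

/-- `χ(N,k)`: the minimum number of parts needed to partition `ZMod N` into subsets none of
which contains a `k`-term cyclic arithmetic progression mod `N` (phrased via colorings). -/
noncomputable def chiNum (N k : ℕ) : ℕ :=
  sInf {r | ∃ c : ZMod N → Fin r, ∀ A : Finset (ZMod N), IsAP N k A → ¬ ∃ i, ∀ x ∈ A, c x = i}

section aux

variable {m k : ℕ}

lemma castInj (hm : 0 < m) (hk : 0 < k) {a b : ℕ} (ha : a < m * k) (hb : b < m * k)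
    (h : (a : ZMod (m*k)) = (b : ZMod (m*k))) : a = b := by
  have := congrArg ZMod.val h
  rwa [ZMod.val_cast_of_lt ha, ZMod.val_cast_of_lt hb] at this

lemma ub_aux (hm : 0 < m) (hk : 3 ≤ k) (B : Finset (ZMod (m*k)))
    (hB : ∀ A ⊆ B, ¬ IsAP (m*k) k A) : B.card ≤ m * k - m := by
  have hk0 : 0 < k := by omega
  have hN : 0 < m * k := Nat.mul_pos hm hk0
  haveI : NeZero (m*k) := ⟨hN.ne'⟩
  set Aj : ℕ → Finset (ZMod (m*k)) :=
    fun j => (Finset.range k).image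
      (fun i : ℕ => ((j*k : ℕ) : ZMod (m*k)) + (i : ZMod (m*k)) * 1) with hAj
  have hmem' : ∀ j, ∀ x ∈ Aj j, ∃ i < k, x = ((j*k + i : ℕ) : ZMod (m*k)) := by
    intro j x hx
    simp only [hAj, Finset.mem_image, Finset.mem_range] at hx
    obtain ⟨i, hi, hxi⟩ := hx
    exact ⟨i, hi, by rw [← hxi]; push_cast; ring⟩
  have hap : ∀ j, IsAP (m*k) k (Aj j) := by
    intro j
    refine ⟨1, ?_, ((j*k : ℕ) : ZMod (m*k)), rfl⟩
    rw [hAj]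
    rw [Finset.card_image_of_injOn, Finset.card_range]
    intro a ha b hb hab
    simp only [Finset.coe_range, Set.mem_Iio] at ha hb
    simp only [mul_one] at hab
    exact castInj hm hk0 (ha.trans_le (Nat.le_mul_of_pos_left k hm))
      (hb.trans_le (Nat.le_mul_of_pos_left k hm)) (add_left_cancel hab)
  have key : ∀ j : ℕ, ∃ x, j < m → x ∈ Aj j ∧ x ∉ B := by
    intro j
    by_cases hj : j < m
    · have hns : ¬ Aj j ⊆ B := fun hsub => hB _ hsub (hap j)
      obtain ⟨x, hx, hxB⟩ := Finset.not_subset.mp hns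
      exact ⟨x, fun _ => ⟨hx, hxB⟩⟩
    · exact ⟨0, fun h => absurd h hj⟩
  choose f hf using key
  have hinj : Set.InjOn f (Finset.range m) := by
    intro a ha b hb hfab
    simp only [Finset.coe_range, Set.mem_Iio] at ha hb
    obtain ⟨hfa, _⟩ := hf a ha
    obtain ⟨hfb, _⟩ := hf b hb
    obtain ⟨i, hi, hxi⟩ := hmem' a (f a) hfa
    obtain ⟨i', hi', hxi'⟩ := hmem' b (f b) hfb
    have heq : ((a*k + i : ℕ) : ZMod (m*k)) = ((b*k + i' : ℕ) : ZMod (m*k)) := by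
      rw [← hxi, ← hxi', hfab]
    have h1 : a*k + i < m*k := by
      calc a*k + i < a*k + k := by omega
      _ = (a+1)*k := by ring
      _ ≤ m*k := Nat.mul_le_mul_right k (by omega)
    have h2 : b*k + i' < m*k := by
      calc b*k + i' < b*k + k := by omega
      _ = (b+1)*k := by ring
      _ ≤ m*k := Nat.mul_le_mul_right k (by omega)
    have hnat := castInj hm hk0 h1 h2 heq
    have e1 : (a*k+i)/k = a := by
      rw [mul_comm, Nat.mul_add_div hk0, Nat.div_eq_of_lt hi, add_zero]
    have e2 : (b*k+i')/k = b := by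
      rw [mul_comm, Nat.mul_add_div hk0, Nat.div_eq_of_lt hi', add_zero]
    rw [← e1, ← e2, hnat]
  have hcard : (Finset.range m).card ≤ (Finset.univ \ B).card := by
    apply Finset.card_le_card_of_injOn f _ hinj
    intro j hj
    simp only [Finset.mem_coe, Finset.coe_range, Set.mem_Iio, Finset.mem_range] at hj
    obtain ⟨_, hnB⟩ := hf j hj
    simp [hnB]
  rw [Finset.card_sdiff_of_subset (Finset.subset_univ B), Finset.card_univ, ZMod.card,
    Finset.card_range] at hcard
  have hle : B.card ≤ m * k := by
    calc B.card ≤ Finset.univ.card := Finset.card_le_card (Finset.subset_univ B)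
    _ = m * k := by rw [Finset.card_univ, ZMod.card]
  omega

lemma lb_aux (hm : 0 < m) (hk : 3 ≤ k) (hD : Ddiff (m*k) k = {1}) :
    ∃ B : Finset (ZMod (m*k)), B.card = m*k - m ∧ ∀ A ⊆ B, ¬ IsAP (m*k) k A := by
  have hk0 : 0 < k := by omega
  have hN : 0 < m * k := Nat.mul_pos hm hk0
  haveI : NeZero (m*k) := ⟨hN.ne'⟩
  haveI : NeZero k := ⟨hk0.ne'⟩
  set φ : ZMod (m*k) →+* ZMod k := ZMod.castHom (dvd_mul_left k m) (ZMod k) with hφ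
  have hφval : ∀ x : ZMod (m*k), φ x = ((x.val : ℕ) : ZMod k) := by
    intro x
    rw [hφ, ZMod.castHom_apply, ← ZMod.natCast_val]
  set S : Finset (ZMod (m*k)) := Finset.univ.filter (fun x => φ x = 0) with hS
  have hSeq : S = (Finset.range m).image (fun j : ℕ => ((j*k : ℕ) : ZMod (m*k))) := by
    ext x
    simp only [hS, Finset.mem_filter, Finset.mem_univ, true_and, Finset.mem_image,
      Finset.mem_range]
    constructor
    · intro hx
      rw [hφval] at hx
      have hdvd : k ∣ x.val := (ZMod.natCast_eq_zero_iff _ _).mp hx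
      obtain ⟨c, hc⟩ := hdvd
      have hc' : c < m := by
        have hvlt := ZMod.val_lt x
        rw [hc] at hvlt
        by_contra h
        push_neg at h
        have : k * m ≤ k * c := Nat.mul_le_mul_left k h
        have : m * k = k * m := Nat.mul_comm m k
        omega
      refine ⟨c, hc', ?_⟩
      have : ((x.val : ℕ) : ZMod (m*k)) = x := by
        rw [ZMod.natCast_val, ZMod.cast_id]
      rw [← this, hc]
      exact congrArg _ (Nat.mul_comm c k)
    · rintro ⟨j, hj, rfl⟩
      rw [map_natCast]
      exact (ZMod.natCast_eq_zero_iff _ _).mpr (dvd_mul_left k j)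
  have hScard : S.card = m := by
    rw [hSeq, Finset.card_image_of_injOn, Finset.card_range]
    intro a ha b hb hab
    simp only [Finset.coe_range, Set.mem_Iio] at ha hb
    have h1 : a*k < m*k := (Nat.mul_lt_mul_right hk0).mpr ha
    have h2 : b*k < m*k := (Nat.mul_lt_mul_right hk0).mpr hb
    have := castInj hm hk0 h1 h2 hab
    exact Nat.eq_of_mul_eq_mul_right hk0 this
  refine ⟨Finset.univ \ S, ?_, ?_⟩
  · rw [Finset.card_sdiff_of_subset (Finset.subset_univ S), Finset.card_univ, ZMod.card, hScard]
  · rintro A hA ⟨d, hcard, t, hAeq⟩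
    by_cases hd : d = 0
    · have : A ⊆ {t} := by
        intro x hx
        rw [hAeq] at hx
        simp only [Finset.mem_image, Finset.mem_range] at hx
        obtain ⟨i, _, hxi⟩ := hx
        simp [← hxi, hd]
      have := Finset.card_le_card this
      simp at this
      omega
    · -- d ≠ 0, so gcd(d.val, k) ∈ Ddiff = {1}
      have hdval : 0 < d.val := by
        rcases Nat.eq_zero_or_pos d.val with h | h
        · exact absurd ((ZMod.val_eq_zero d).mp h) hd
        · exact h
      have hdlt : d.val < m*k := ZMod.val_lt d
      have hdcast : ((d.val : ℕ) : ZMod (m*k)) = d := by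
        rw [ZMod.natCast_val, ZMod.cast_id]
      have hmemD : Nat.gcd d.val k ∈ Ddiff (m*k) k := by
        refine ⟨d.val, hdval, by omega, ⟨A, hcard, t, by rw [hdcast]; exact hAeq⟩, rfl⟩
      rw [hD] at hmemD
      have hcop : Nat.Coprime d.val k := hmemD
      -- φ d is a unit
      have hunit : IsUnit (φ d) := by
        rw [← hdcast, map_natCast]
        exact (ZMod.isUnit_iff_coprime _ _).mpr hcop
      obtain ⟨u, hu⟩ := hunit
      set w : ZMod k := (-φ t) * ((u⁻¹ : (ZMod k)ˣ) : ZMod k) with hw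
      set i : ℕ := w.val with hi
      have hik : i < k := ZMod.val_lt w
      have hwc : ((i : ℕ) : ZMod k) = w := by rw [hi, ZMod.natCast_val, ZMod.cast_id]
      have hxA : t + (i : ZMod (m*k)) * d ∈ A := by
        rw [hAeq]
        exact Finset.mem_image.mpr ⟨i, Finset.mem_range.mpr hik, rfl⟩
      have hxB := hA hxA
      simp only [Finset.mem_sdiff, hS, Finset.mem_filter, Finset.mem_univ, true_and] at hxB
      apply hxB
      rw [map_add, map_mul, map_natCast, hwc, hw, ← hu]
      rw [mul_assoc]
      rw [← Units.val_mul, inv_mul_cancel]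
      simp

end aux

theorem stmt_1 (m k : ℕ) (hm : 0 < m) (hk : 3 ≤ k) :
    bNum (m * k) k ≤ m * k - m ∧
      (Ddiff (m * k) k = {1} → bNum (m * k) k = m * k - m) := by
  have hk0 : 0 < k := by omega
  set Sset := {n | ∃ B : Finset (ZMod (m*k)), B.card = n ∧ ∀ A ⊆ B, ¬ IsAP (m*k) k A}
    with hSset
  have hne : Sset.Nonempty := by
    refine ⟨0, ∅, Finset.card_empty, ?_⟩
    intro A hA hAP
    rw [Finset.subset_empty] at hA
    obtain ⟨d, hcard, _⟩ := hAP
    rw [hA, Finset.card_empty] at hcard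
    omega
  have hbdd : ∀ n ∈ Sset, n ≤ m*k - m := by
    rintro n ⟨B, hBcard, hB⟩
    rw [← hBcard]
    exact ub_aux hm hk B hB
  have hub : bNum (m*k) k ≤ m*k - m := csSup_le hne hbdd
  refine ⟨hub, fun hD => ?_⟩
  obtain ⟨B, hBcard, hB⟩ := lb_aux hm hk hD
  have hmem : m*k - m ∈ Sset := ⟨B, hBcard, hB⟩
  have hlb : m*k - m ≤ bNum (m*k) k :=
    le_csSup ⟨m*k - m, hbdd⟩ hmem
  omega
end

section
/- Let k ≥ 3 be an integer. If D(2k,k) = {1}, then b(2k,k) = 2k − 2; and if D(2k,k) = {1,2}, then b(2k,k) = 2k − 3. -/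
section aux
variable {k : ℕ}


lemma ap_inj (hk : 3 ≤ k) {d t : ZMod (2*k)}
    (hcard : ((Finset.range k).image (fun i : ℕ => t + (i : ZMod (2*k)) * d)).card = k) :
    ∀ i < k, ∀ j < k, t + (i : ZMod (2*k))*d = t + (j : ZMod (2*k))*d → i = j := by
  have h := Finset.card_image_iff.mp (by rw [hcard, Finset.card_range])
  intro i hi j hj hij
  exact h (by simpa using hi) (by simpa using hj) hij

lemma ap_card (hk : 3 ≤ k) {d t : ZMod (2*k)}
    (hinj : ∀ i < k, ∀ j < k, t + (i : ZMod (2*k))*d = t + (j : ZMod (2*k))*d → i = j) :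
    ((Finset.range k).image (fun i : ℕ => t + (i : ZMod (2*k)) * d)).card = k := by
  rw [Finset.card_image_of_injOn, Finset.card_range]
  intro i hi j hj hij
  exact hinj i (by simpa using hi) j (by simpa using hj) hij

lemma inj_small (hk : 3 ≤ k) {d : ZMod (2*k)} (hd : 0 < d.val) (hd2 : d.val ≤ 2)
    (t : ZMod (2*k)) :
    ∀ i < k, ∀ j < k, t + (i : ZMod (2*k))*d = t + (j : ZMod (2*k))*d → i = j := by
  haveI : NeZero (2*k) := ⟨by omega⟩
  have hval : ∀ i < k, ((i : ZMod (2*k))*d).val = i * d.val := by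
    intro i hi
    have h1 : i * d.val ≤ i * 2 := Nat.mul_le_mul_left i hd2
    rw [ZMod.val_mul, ZMod.val_natCast, Nat.mod_eq_of_lt (by omega : i < 2*k),
      Nat.mod_eq_of_lt (by omega)]
  intro i hi j hj hij
  have h2 : (i : ZMod (2*k))*d = (j : ZMod (2*k))*d := add_left_cancel hij
  have h3 : i * d.val = j * d.val := by rw [← hval i hi, ← hval j hj, h2]
  exact Nat.eq_of_mul_eq_mul_right hd h3

/-- An AP of difference 1 starting at q+1 avoids q and any p with (p-q).val > k. -/
lemma block (hk : 3 ≤ k) {p q : ZMod (2*k)} (hpq : k < (p - q).val)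
    (B : Finset (ZMod (2*k))) (hB : ∀ z : ZMod (2*k), z ≠ p → z ≠ q → z ∈ B)
    (hno : ∀ A ⊆ B, ¬ IsAP (2*k) k A) : False := by
  haveI : NeZero (2*k) := ⟨by omega⟩
  have h1val : (1 : ZMod (2*k)).val = 1 := by
    have : (1 : ZMod (2*k)) = ((1 : ℕ) : ZMod (2*k)) := by norm_num
    rw [this, ZMod.val_cast_of_lt (by omega)]
  set A := (Finset.range k).image (fun i : ℕ => (q + 1) + (i : ZMod (2*k)) * 1) with hAdef
  have key : ∀ i < k, (q + 1) + (i : ZMod (2*k)) * 1 ≠ p ∧ (q + 1) + (i : ZMod (2*k)) * 1 ≠ q := by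
    intro i hi
    have hform : (q + 1) + (i : ZMod (2*k)) * 1 = q + ((i + 1 : ℕ) : ZMod (2*k)) := by
      push_cast; ring
    have hval : ((i + 1 : ℕ) : ZMod (2*k)).val = i + 1 := ZMod.val_cast_of_lt (by omega)
    constructor
    · intro h
      have h2 : ((i + 1 : ℕ) : ZMod (2*k)) = p - q := by
        rw [hform] at h
        linear_combination h
      have := congrArg ZMod.val h2
      rw [hval] at this
      omega
    · intro h
      have h2 : ((i + 1 : ℕ) : ZMod (2*k)) = 0 := by
        rw [hform] at h
        linear_combination h
      have := congrArg ZMod.val h2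
      rw [hval, ZMod.val_zero] at this
      omega
  have hsub : A ⊆ B := by
    intro x hx
    rw [hAdef, Finset.mem_image] at hx
    obtain ⟨i, hi, rfl⟩ := hx
    obtain ⟨h1, h2⟩ := key i (Finset.mem_range.mp hi)
    exact hB _ h1 h2
  refine hno A hsub ⟨1, ?_, q + 1, rfl⟩
  exact ap_card hk (inj_small hk (by rw [h1val]; omega) (by rw [h1val]; omega) (q+1))

/-- The set of even-position elements is an AP of difference 2; gives excluded points. -/
lemma two_val (hk : 3 ≤ k) : ((2 : ZMod (2*k))).val = 2 := by
  haveI : NeZero (2*k) := ⟨by omega⟩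
  have : (2 : ZMod (2*k)) = ((2 : ℕ) : ZMod (2*k)) := by norm_num
  rw [this, ZMod.val_cast_of_lt (by omega)]

lemma exists_bad (hk : 3 ≤ k) (B : Finset (ZMod (2*k)))
    (hno : ∀ A ⊆ B, ¬ IsAP (2*k) k A) :
    ∃ x y : ZMod (2*k), x ∉ B ∧ y ∉ B ∧ x.val % 2 = 0 ∧ y.val % 2 = 1 := by
  haveI : NeZero (2*k) := ⟨by omega⟩
  have hdvd : (2 : ℕ) ∣ 2*k := ⟨k, rfl⟩
  have hinj2 : ∀ t : ZMod (2*k), ∀ i < k, ∀ j < k,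
      t + (i : ZMod (2*k))*2 = t + (j : ZMod (2*k))*2 → i = j := by
    intro t
    exact inj_small hk (by rw [two_val hk]; omega) (by rw [two_val hk]) t
  have hval2 : ∀ t : ZMod (2*k), ∀ i : ℕ, (t + (i : ZMod (2*k)) * 2).val % 2 = t.val % 2 := by
    intro t i
    have e1 : ((i : ZMod (2*k))*2).val % 2 = 0 := by
      rw [ZMod.val_mul, Nat.mod_mod_of_dvd _ hdvd, Nat.mul_mod, two_val hk]
      simp
    rw [ZMod.val_add, Nat.mod_mod_of_dvd _ hdvd]
    omega
  -- even class
  have hE : ¬ ((Finset.range k).image (fun i : ℕ => (0 : ZMod (2*k)) + (i : ZMod (2*k)) * 2)) ⊆ B := by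
    intro hsub
    exact hno _ hsub ⟨2, ap_card hk (hinj2 0), 0, rfl⟩
  have hO : ¬ ((Finset.range k).image (fun i : ℕ => (1 : ZMod (2*k)) + (i : ZMod (2*k)) * 2)) ⊆ B := by
    intro hsub
    exact hno _ hsub ⟨2, ap_card hk (hinj2 1), 1, rfl⟩
  obtain ⟨x, hxE, hxB⟩ := Finset.not_subset.mp hE
  obtain ⟨y, hyO, hyB⟩ := Finset.not_subset.mp hO
  rw [Finset.mem_image] at hxE hyO
  obtain ⟨i, _, rfl⟩ := hxE
  obtain ⟨j, _, rfl⟩ := hyO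
  refine ⟨_, _, hxB, hyB, ?_, ?_⟩
  · rw [hval2 0 i, ZMod.val_zero]
  · rw [hval2 1 j]
    have : (1 : ZMod (2*k)).val = 1 := by
      have h2 : (1 : ZMod (2*k)) = ((1 : ℕ) : ZMod (2*k)) := by norm_num
      rw [h2, ZMod.val_cast_of_lt (by omega)]
    rw [this]

lemma ub1 (hk : 3 ≤ k) (B : Finset (ZMod (2*k)))
    (hno : ∀ A ⊆ B, ¬ IsAP (2*k) k A) : B.card ≤ 2*k - 2 := by
  haveI : NeZero (2*k) := ⟨by omega⟩
  obtain ⟨x, y, hxB, hyB, hx, hy⟩ := exists_bad hk B hno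
  have hxy : x ≠ y := by
    intro h; rw [h] at hx; omega
  have hsub : B ⊆ Finset.univ \ {x, y} := by
    intro z hz
    rw [Finset.mem_sdiff]
    refine ⟨Finset.mem_univ _, ?_⟩
    intro hmem
    rw [Finset.mem_insert, Finset.mem_singleton] at hmem
    rcases hmem with rfl | rfl
    · exact hxB hz
    · exact hyB hz
  have hcard : (Finset.univ \ ({x, y} : Finset (ZMod (2*k)))).card = 2*k - 2 := by
    rw [Finset.card_sdiff_of_subset (Finset.subset_univ _), Finset.card_univ, ZMod.card,
      Finset.card_insert_of_notMem (by simpa using hxy), Finset.card_singleton]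
  calc B.card ≤ _ := Finset.card_le_card hsub
    _ = 2*k - 2 := hcard

lemma ub2 (hk : 3 ≤ k) (hkev : k % 2 = 0) (B : Finset (ZMod (2*k)))
    (hno : ∀ A ⊆ B, ¬ IsAP (2*k) k A) : B.card ≤ 2*k - 3 := by
  haveI : NeZero (2*k) := ⟨by omega⟩
  by_contra hcon
  have hge : 2*k - 2 ≤ B.card := by omega
  obtain ⟨x, y, hxB, hyB, hx, hy⟩ := exists_bad hk B hno
  have hxy : x ≠ y := by
    intro h; rw [h] at hx; omega
  have hsub : B ⊆ Finset.univ \ {x, y} := by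
    intro z hz
    rw [Finset.mem_sdiff]
    refine ⟨Finset.mem_univ _, ?_⟩
    intro hmem
    rw [Finset.mem_insert, Finset.mem_singleton] at hmem
    rcases hmem with rfl | rfl
    · exact hxB hz
    · exact hyB hz
  have hcard : (Finset.univ \ ({x, y} : Finset (ZMod (2*k)))).card = 2*k - 2 := by
    rw [Finset.card_sdiff_of_subset (Finset.subset_univ _), Finset.card_univ, ZMod.card,
      Finset.card_insert_of_notMem (by simpa using hxy), Finset.card_singleton]
  have hBeq : B = Finset.univ \ ({x, y} : Finset (ZMod (2*k))) :=
    Finset.eq_of_subset_of_card_le hsub (by rw [hcard]; omega)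
  have hBmem : ∀ z : ZMod (2*k), z ≠ x → z ≠ y → z ∈ B := by
    intro z h1 h2
    rw [hBeq, Finset.mem_sdiff]
    refine ⟨Finset.mem_univ _, ?_⟩
    simp [h1, h2]
  -- j = (x - y).val is odd, hence ≠ 0 and ≠ k
  set j := (x - y).val with hjdef
  have hjlt : j < 2*k := ZMod.val_lt _
  have hj2 : j % 2 = 1 := by
    have h1 : y + (x - y) = x := by ring
    have h2 : x.val = (y.val + j) % (2*k) := by rw [← h1, ZMod.val_add]
    have h3 : x.val % 2 = (y.val + j) % 2 := by
      rw [h2, Nat.mod_mod_of_dvd _ ⟨k, rfl⟩]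
    omega
  have hjk : j ≠ k := by omega
  rcases Nat.lt_or_ge k j with hcase | hcase
  · exact block hk (by rw [← hjdef]; omega : k < (x - y).val) B hBmem hno
  · -- j < k, so (y - x).val = 2k - j > k
    have hj0 : j ≠ 0 := by omega
    have hjk' : j < k := by omega
    have hyx : (y - x).val = 2*k - j := by
      set j' := (y - x).val with hj'def
      have hj'lt : j' < 2*k := ZMod.val_lt _
      have h1 : (x - y) + (y - x) = 0 := by ring
      have h2 : (0 : ZMod (2*k)).val = (j + j') % (2*k) := by rw [← h1, ZMod.val_add]
      rw [ZMod.val_zero] at h2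
      have h3 : (2*k) ∣ (j + j') := Nat.dvd_of_mod_eq_zero h2.symm
      obtain ⟨c, hc⟩ := h3
      have hcases : c = 0 ∨ c = 1 ∨ 2 ≤ c := by omega
      rcases hcases with rfl | rfl | hc2
      · omega
      · omega
      · obtain ⟨e, rfl⟩ : ∃ e, c = e + 2 := ⟨c - 2, by omega⟩
        have h4 : 2*k*(e+2) = 2*k*e + 4*k := by ring
        omega
    exact block hk (by rw [hyx]; omega : k < (y - x).val) B
      (fun z h1 h2 => hBmem z h2 h1) hno



set_option maxHeartbeats 800000 in
lemma odd_case (hk : 3 ≤ k) {d t : ZMod (2*k)} (hd : d.val % 2 = 1)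
    (hinj : ∀ i < k, ∀ j < k, t + (i : ZMod (2*k))*d = t + (j : ZMod (2*k))*d → i = j)
    (h0 : ∀ i < k, t + (i : ZMod (2*k))*d ≠ 0)
    (hkk : ∀ i < k, t + (i : ZMod (2*k))*d ≠ (k : ZMod (2*k))) : False := by
  haveI : NeZero (2*k) := ⟨by omega⟩
  -- d is coprime to 2k
  have hg2k : Nat.gcd d.val (2*k) ∣ 2*k := Nat.gcd_dvd_right _ _
  have hgd : Nat.gcd d.val (2*k) ∣ d.val := Nat.gcd_dvd_left _ _
  have hcop : Nat.Coprime d.val (2*k) := by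
    by_contra hne
    set g := Nat.gcd d.val (2*k) with hgdef
    have hg0 : 0 < g := Nat.gcd_pos_of_pos_right _ (by omega)
    have hgodd : g % 2 = 1 := by
      have h2 : ¬ (2 ∣ g) := by
        rintro ⟨c, hc⟩
        obtain ⟨e, he'⟩ := hgd
        have h3 : d.val = 2 * (c * e) := by rw [he', hc]; ring
        omega
      omega
    have hg3 : 3 ≤ g := by
      have : g ≠ 1 := hne
      omega
    set m := 2*k / g with hmdef
    have hm1 : 1 ≤ m := Nat.div_pos (Nat.le_of_dvd (by omega) hg2k) hg0
    have hmk : m < k := by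
      have h1 : m ≤ 2*k/3 := Nat.div_le_div_left hg3 (by omega)
      have h2 : 2*k/3 < k := (Nat.div_lt_iff_lt_mul (by omega)).mpr (by omega)
      omega
    obtain ⟨e, he⟩ := hgd
    have hmd : (m : ZMod (2*k)) * d = 0 := by
      have h1 : (d.val : ZMod (2*k)) = d := by simp [ZMod.natCast_val, ZMod.cast_id]
      have h2 : m * d.val = (2*k) * e := by
        rw [he, hmdef, ← mul_assoc, Nat.div_mul_cancel hg2k]
      calc (m : ZMod (2*k)) * d = ((m * d.val : ℕ) : ZMod (2*k)) := by push_cast [h1]; ring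
        _ = ((2*k * e : ℕ) : ZMod (2*k)) := by rw [h2]
        _ = 0 := by rw [Nat.cast_mul, ZMod.natCast_self, zero_mul]
    have := hinj m hmk 0 (by omega) (by rw [hmd]; push_cast; ring)
    omega
  set u := ZMod.unitOfCoprime d.val hcop with hudef
  have hu : (u : ZMod (2*k)) = d := by
    rw [hudef, ZMod.coe_unitOfCoprime]; simp [ZMod.natCast_val, ZMod.cast_id]
  have huinv : ((u⁻¹ : (ZMod (2*k))ˣ) : ZMod (2*k)) * d = 1 := by
    rw [← hu, Units.inv_mul]
  set a := ((-t) * ((u⁻¹ : (ZMod (2*k))ˣ) : ZMod (2*k))).val with hadef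
  set b := (((k : ZMod (2*k)) - t) * ((u⁻¹ : (ZMod (2*k))ˣ) : ZMod (2*k))).val with hbdef
  have ha_lt : a < 2*k := ZMod.val_lt _
  have hb_lt : b < 2*k := ZMod.val_lt _
  have haz : ((a : ℕ) : ZMod (2*k)) = (-t) * ((u⁻¹ : (ZMod (2*k))ˣ) : ZMod (2*k)) := by
    rw [hadef]; simp [ZMod.natCast_val, ZMod.cast_id]
  have hbz : ((b : ℕ) : ZMod (2*k)) = ((k : ZMod (2*k)) - t) * ((u⁻¹ : (ZMod (2*k))ˣ) : ZMod (2*k)) := by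
    rw [hbdef]; simp [ZMod.natCast_val, ZMod.cast_id]
  have heq_a : t + (a : ZMod (2*k)) * d = 0 := by
    rw [haz, mul_assoc, huinv]; ring
  have heq_b : t + (b : ZMod (2*k)) * d = (k : ZMod (2*k)) := by
    rw [hbz, mul_assoc, huinv]; ring
  have ha_ge : k ≤ a := by
    by_contra h; exact h0 a (by omega) heq_a
  have hb_ge : k ≤ b := by
    by_contra h; exact hkk b (by omega) heq_b
  -- k * d = k
  have hkd : (k : ZMod (2*k)) * d = (k : ZMod (2*k)) := by
    obtain ⟨c, hc⟩ : ∃ c, d.val = 2*c + 1 := ⟨d.val / 2, by omega⟩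
    have h1 : (d.val : ZMod (2*k)) = d := by simp [ZMod.natCast_val, ZMod.cast_id]
    calc (k : ZMod (2*k)) * d = ((k * d.val : ℕ) : ZMod (2*k)) := by push_cast [h1]; ring
      _ = ((2*k * c + k : ℕ) : ZMod (2*k)) := by rw [hc]; ring_nf
      _ = (k : ZMod (2*k)) := by
          rw [Nat.cast_add, Nat.cast_mul, ZMod.natCast_self, zero_mul, zero_add]
  have hba : ((b : ℕ) : ZMod (2*k)) = ((a + k : ℕ) : ZMod (2*k)) := by
    have h1 : ((b : ZMod (2*k)) - a - k) * d = 0 := by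
      have h2 : (b : ZMod (2*k)) * d - (a : ZMod (2*k)) * d = (k : ZMod (2*k)) := by
        have := heq_b; have := heq_a
        linear_combination heq_b - heq_a
      linear_combination h2 - hkd
    have h3 : ((b : ZMod (2*k)) - a - k) = 0 := by
      have := congrArg (· * ((u⁻¹ : (ZMod (2*k))ˣ) : ZMod (2*k))) h1
      simp only [zero_mul] at this
      rw [mul_assoc] at this
      rw [mul_comm d] at this
      rw [huinv] at this
      simpa using this
    push_cast
    linear_combination h3
  have hmod : b ≡ a + k [MOD 2*k] := (ZMod.natCast_eq_natCast_iff _ _ _).mp hba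
  have hb_eq : b % (2*k) = b := Nat.mod_eq_of_lt hb_lt
  have hak : (a + k) % (2*k) = a - k := by
    rw [Nat.mod_eq_sub_mod (by omega)]
    have h5 : a + k - 2*k = a - k := by omega
    rw [h5]
    exact Nat.mod_eq_of_lt (by omega)
  have : b = a - k := by
    have := hmod
    unfold Nat.ModEq at this
    omega
  omega



lemma even_case (hk : 3 ≤ k) {d t : ZMod (2*k)} (hd : d.val % 2 = 0)
    {z₀ z₁ : ZMod (2*k)} (hz0 : z₀.val % 2 = 0) (hz1 : z₁.val % 2 = 1)
    (hcard : ((Finset.range k).image (fun i : ℕ => t + (i : ZMod (2*k)) * d)).card = k)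
    (h0 : ∀ i < k, t + (i : ZMod (2*k))*d ≠ z₀)
    (h1 : ∀ i < k, t + (i : ZMod (2*k))*d ≠ z₁) : False := by
  haveI : NeZero (2*k) := ⟨by omega⟩
  set A := (Finset.range k).image (fun i : ℕ => t + (i : ZMod (2*k)) * d) with hAdef
  have hdvd : (2 : ℕ) ∣ 2*k := ⟨k, rfl⟩
  -- every element of A has the parity of t
  have hpar : ∀ x ∈ A, x.val % 2 = t.val % 2 := by
    intro x hx
    rw [hAdef, Finset.mem_image] at hx
    obtain ⟨i, hi, rfl⟩ := hx
    have e1 : ((i : ZMod (2*k))*d).val % 2 = 0 := by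
      rw [ZMod.val_mul, Nat.mod_mod_of_dvd _ hdvd, Nat.mul_mod, hd, mul_zero, Nat.zero_mod]
    rw [ZMod.val_add, Nat.mod_mod_of_dvd _ hdvd]
    omega
  -- the parity class has at most k elements
  set P := Finset.univ.filter (fun x : ZMod (2*k) => x.val % 2 = t.val % 2) with hPdef
  have hAP : A ⊆ P := by
    intro x hx
    rw [hPdef, Finset.mem_filter]
    exact ⟨Finset.mem_univ _, hpar x hx⟩
  have hPcard : P.card ≤ k := by
    have hsub : P ⊆ (Finset.range k).image (fun m : ℕ => ((2*m + t.val % 2 : ℕ) : ZMod (2*k))) := by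
      intro x hx
      rw [hPdef, Finset.mem_filter] at hx
      rw [Finset.mem_image]
      refine ⟨x.val / 2, Finset.mem_range.mpr ?_, ?_⟩
      · have := ZMod.val_lt x
        omega
      · have h2 : 2 * (x.val / 2) + t.val % 2 = x.val := by
          have := hx.2
          omega
        rw [h2]
        simp [ZMod.natCast_val, ZMod.cast_id]
    calc P.card ≤ _ := Finset.card_le_card hsub
      _ ≤ k := by
        refine le_trans (Finset.card_image_le) ?_
        simp
  -- the excluded element of the right parity
  have hz : ∃ z, z ∈ P ∧ z ∉ A := by
    rcases Nat.even_or_odd t.val with he | ho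
    · refine ⟨z₀, ?_, ?_⟩
      · rw [hPdef, Finset.mem_filter]
        constructor
        · exact Finset.mem_univ _
        · have : t.val % 2 = 0 := Nat.even_iff.mp he
          omega
      · intro hmem
        rw [hAdef, Finset.mem_image] at hmem
        obtain ⟨i, hi, hieq⟩ := hmem
        exact h0 i (Finset.mem_range.mp hi) hieq
    · refine ⟨z₁, ?_, ?_⟩
      · rw [hPdef, Finset.mem_filter]
        constructor
        · exact Finset.mem_univ _
        · have : t.val % 2 = 1 := Nat.odd_iff.mp ho
          omega
      · intro hmem
        rw [hAdef, Finset.mem_image] at hmem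
        obtain ⟨i, hi, hieq⟩ := hmem
        exact h1 i (Finset.mem_range.mp hi) hieq
  obtain ⟨z, hzP, hzA⟩ := hz
  have hsub2 : A ⊆ P.erase z := by
    intro x hx
    rw [Finset.mem_erase]
    exact ⟨fun h => hzA (h ▸ hx), hAP hx⟩
  have h3 : A.card ≤ P.card - 1 := by
    have := Finset.card_le_card hsub2
    rw [Finset.card_erase_of_mem hzP] at this
    exact this
  rw [hcard] at h3
  omega






lemma no_ap_sub [NeZero (2*k)] (hk : 3 ≤ k) (z₁ : ZMod (2*k)) (hz1 : z₁.val % 2 = 1)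
    (S : Finset (ZMod (2*k))) (h0S : (0 : ZMod (2*k)) ∈ S) (hkS : (k : ZMod (2*k)) ∈ S)
    (hz1S : z₁ ∈ S) :
    ∀ A ⊆ Finset.univ \ S, ¬ IsAP (2*k) k A := by
  rintro A hA ⟨d, hcard, t, rfl⟩
  have havoid : ∀ z ∈ S, ∀ i < k, t + (i : ZMod (2*k))*d ≠ z := by
    intro z hz i hi heq
    have hmem : t + (i : ZMod (2*k))*d ∈ Finset.univ \ S :=
      hA (Finset.mem_image.mpr ⟨i, Finset.mem_range.mpr hi, rfl⟩)
    rw [Finset.mem_sdiff] at hmem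
    exact hmem.2 (heq ▸ hz)
  have hinj := ap_inj hk hcard
  rcases Nat.even_or_odd d.val with he | ho
  · exact even_case hk (Nat.even_iff.mp he) (by rw [ZMod.val_zero]) hz1 hcard
      (havoid 0 h0S) (havoid z₁ hz1S)
  · exact odd_case hk (Nat.odd_iff.mp ho) hinj (havoid 0 h0S) (havoid _ hkS)

lemma val_k (hk : 3 ≤ k) : ((k : ZMod (2*k))).val = k := by
  haveI : NeZero (2*k) := ⟨by omega⟩
  exact ZMod.val_cast_of_lt (by omega)

lemma val_one' (hk : 3 ≤ k) : ((1 : ZMod (2*k))).val = 1 := by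
  haveI : NeZero (2*k) := ⟨by omega⟩
  have : (1 : ZMod (2*k)) = ((1 : ℕ) : ZMod (2*k)) := by norm_num
  rw [this, ZMod.val_cast_of_lt (by omega)]

lemma bnum_eq (hk : 3 ≤ k) (m : ℕ) (B : Finset (ZMod (2*k))) (hBcard : B.card = m)
    (hBno : ∀ A ⊆ B, ¬ IsAP (2*k) k A)
    (hub : ∀ B' : Finset (ZMod (2*k)), (∀ A ⊆ B', ¬ IsAP (2*k) k A) → B'.card ≤ m) :
    bNum (2*k) k = m := by
  have hm : m ∈ {n | ∃ B : Finset (ZMod (2*k)), B.card = n ∧ ∀ A ⊆ B, ¬ IsAP (2*k) k A} :=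
    ⟨B, hBcard, hBno⟩
  have hubset : ∀ n ∈ {n | ∃ B : Finset (ZMod (2*k)), B.card = n ∧ ∀ A ⊆ B, ¬ IsAP (2*k) k A},
      n ≤ m := by
    rintro n ⟨B', hc, hno⟩
    exact hc ▸ hub B' hno
  exact le_antisymm (csSup_le ⟨m, hm⟩ hubset) (le_csSup ⟨m, hubset⟩ hm)

lemma part1 [NeZero (2*k)] (hk : 3 ≤ k) (hkodd : k % 2 = 1) : bNum (2*k) k = 2*k - 2 := by
  set S : Finset (ZMod (2*k)) := {0, (k : ZMod (2*k))} with hSdef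
  have hk0 : (k : ZMod (2*k)) ≠ 0 := by
    intro h
    have := congrArg ZMod.val h
    rw [val_k hk, ZMod.val_zero] at this
    omega
  have hScard : S.card = 2 := by
    rw [hSdef, Finset.card_insert_of_notMem (by simpa using hk0.symm), Finset.card_singleton]
  refine bnum_eq hk (2*k-2) (Finset.univ \ S) ?_ ?_ ?_
  · rw [Finset.card_sdiff_of_subset (Finset.subset_univ _), Finset.card_univ, ZMod.card, hScard]
  · exact no_ap_sub hk (k : ZMod (2*k)) (by rw [val_k hk]; omega) S
      (by simp [hSdef]) (by simp [hSdef]) (by simp [hSdef])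
  · exact ub1 hk

lemma part2 [NeZero (2*k)] (hk : 3 ≤ k) (hkev : k % 2 = 0) : bNum (2*k) k = 2*k - 3 := by
  set S : Finset (ZMod (2*k)) := {0, 1, (k : ZMod (2*k))} with hSdef
  have h01 : (0 : ZMod (2*k)) ≠ 1 := by
    intro h
    have := congrArg ZMod.val h
    rw [val_one' hk, ZMod.val_zero] at this
    omega
  have hk0 : (k : ZMod (2*k)) ≠ 0 := by
    intro h
    have := congrArg ZMod.val h
    rw [val_k hk, ZMod.val_zero] at this
    omega
  have hk1 : (k : ZMod (2*k)) ≠ 1 := by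
    intro h
    have := congrArg ZMod.val h
    rw [val_k hk, val_one' hk] at this
    omega
  have hScard : S.card = 3 := by
    rw [hSdef]
    rw [Finset.card_insert_of_notMem (by simp [h01, hk0.symm]),
      Finset.card_insert_of_notMem (by simpa using hk1.symm), Finset.card_singleton]
  refine bnum_eq hk (2*k-3) (Finset.univ \ S) ?_ ?_ ?_
  · rw [Finset.card_sdiff_of_subset (Finset.subset_univ _), Finset.card_univ, ZMod.card, hScard]
  · exact no_ap_sub hk (1 : ZMod (2*k)) (by rw [val_one' hk]) S
      (by simp [hSdef]) (by simp [hSdef]) (by simp [hSdef])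
  · exact ub2 hk hkev


lemma two_mem (hk : 3 ≤ k) (hkev : k % 2 = 0) : (2 : ℕ) ∈ Ddiff (2*k) k := by
  haveI : NeZero (2*k) := ⟨by omega⟩
  have hval : ((2 : ℕ) : ZMod (2*k)).val = 2 := ZMod.val_cast_of_lt (by omega)
  refine ⟨2, by omega, by omega, ?_, ?_⟩
  · exact ⟨(Finset.range k).image (fun i : ℕ => (0 : ZMod (2*k)) + (i : ZMod (2*k)) * ((2:ℕ) : ZMod (2*k))),
      ap_card hk (inj_small hk (by omega) (by omega) 0), 0, rfl⟩
  · exact (Nat.gcd_eq_left (by omega : 2 ∣ k)).symm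


end aux

theorem stmt_2 (k : ℕ) (hk : 3 ≤ k) :
    (Ddiff (2 * k) k = {1} → bNum (2 * k) k = 2 * k - 2) ∧
      (Ddiff (2 * k) k = {1, 2} → bNum (2 * k) k = 2 * k - 3) := by
  haveI : NeZero (2*k) := ⟨by omega⟩
  constructor
  · intro hD
    have hkodd : k % 2 = 1 := by
      by_contra h
      have hmem := two_mem hk (by omega)
      rw [hD] at hmem
      simp at hmem
    exact part1 hk hkodd
  · intro hD
    have hkev : k % 2 = 0 := by
      have hmem : (2 : ℕ) ∈ Ddiff (2*k) k := by rw [hD]; right; rfl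
      obtain ⟨d, _, _, _, hg⟩ := hmem
      have h2k : 2 ∣ k := hg ▸ Nat.gcd_dvd_right d k
      omega
    exact part2 hk hkev
end

section
/- Let m and k be positive integers with k ≥ 3. Then D(mk,k) = {g ∈ ℤ⁺ : g ≤ m and g divides k}. -/
theorem stmt_4 (m k : ℕ) (hm : 0 < m) (hk : 3 ≤ k) :
    Ddiff (m * k) k = {g : ℕ | 0 < g ∧ g ≤ m ∧ g ∣ k} := by
  have hN : 0 < m * k := Nat.mul_pos hm (by omega)
  have hmk : m * 3 ≤ m * k := Nat.mul_le_mul_left m hk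
  set N := m * k with hNdef
  ext g
  simp only [Ddiff, Set.mem_setOf_eq]
  constructor
  · rintro ⟨d, hd1, hd2, ⟨A, hcard, t, hA⟩, rfl⟩
    refine ⟨Nat.gcd_pos_of_pos_left k hd1, ?_, Nat.gcd_dvd_right d k⟩
    have hinj : Set.InjOn (fun i : ℕ => t + (i : ZMod N) * (d : ZMod N))
        (Finset.range k) := by
      apply Finset.card_image_iff.mp
      rw [← hA, hcard, Finset.card_range]
    set e := Nat.gcd d N with he
    have he0 : 0 < e := Nat.gcd_pos_of_pos_left N hd1
    have heN : e ∣ N := Nat.gcd_dvd_right d N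
    have hed : e ∣ d := Nat.gcd_dvd_left d N
    have hgcd_le : Nat.gcd d k ≤ e :=
      Nat.le_of_dvd he0 (Nat.dvd_gcd (Nat.gcd_dvd_left d k)
        ((Nat.gcd_dvd_right d k).trans (dvd_mul_left k m)))
    -- suffices e ≤ m
    by_contra hcon
    have hem : m + 1 ≤ e := by omega
    set i := N / e with hi
    have hi1 : 1 ≤ i := Nat.one_le_div_iff he0 |>.mpr (Nat.le_of_dvd hN heN)
    have hik : i < k := by
      apply Nat.div_lt_of_lt_mul
      calc N = m * k := rfl
        _ < e * k := by
          apply Nat.mul_lt_mul_of_lt_of_le (by omega) (le_refl k) (by omega)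
    obtain ⟨c, hc⟩ := hed
    have hidN : (i * d : ℕ) = N * c := by
      rw [hc, hi, ← Nat.mul_assoc, Nat.div_mul_cancel heN]
    have hzero : ((i : ZMod N) * (d : ZMod N)) = 0 := by
      have : ((i * d : ℕ) : ZMod N) = 0 := by
        rw [hidN]; push_cast; simp
      push_cast at this
      exact this
    have h0i : (0 : ℕ) = i := by
      apply hinj (Finset.mem_coe.mpr (Finset.mem_range.mpr (by omega)))
        (Finset.mem_coe.mpr (Finset.mem_range.mpr hik))
      simp [hzero]
    omega
  · rintro ⟨hg0, hgm, hgk⟩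
    refine ⟨g, hg0, by omega, ?_, (Nat.gcd_eq_left hgk).symm⟩
    refine ⟨(Finset.range k).image (fun i : ℕ => (0 : ZMod N) + (i : ZMod N) * (g : ZMod N)),
      ?_, 0, rfl⟩
    rw [Finset.card_image_of_injOn, Finset.card_range]
    intro a ha b hb hab
    simp only [Finset.coe_range, Set.mem_Iio] at ha hb
    simp only [zero_add] at hab
    have hcast : ((a * g : ℕ) : ZMod N) = ((b * g : ℕ) : ZMod N) := by push_cast; exact hab
    have hag : a * g < N := lt_of_lt_of_le (Nat.mul_lt_mul_of_lt_of_le ha (le_refl g) hg0)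
      (by calc k * g ≤ m * k := by rw [Nat.mul_comm]; exact Nat.mul_le_mul_right k hgm
        _ = N := rfl)
    have hbg : b * g < N := lt_of_lt_of_le (Nat.mul_lt_mul_of_lt_of_le hb (le_refl g) hg0)
      (by calc k * g ≤ m * k := by rw [Nat.mul_comm]; exact Nat.mul_le_mul_right k hgm
        _ = N := rfl)
    have := congrArg ZMod.val hcast
    rw [ZMod.val_cast_of_lt hag, ZMod.val_cast_of_lt hbg] at this
    exact Nat.eq_of_mul_eq_mul_right hg0 this
end

section
/- Let m and k be positive integers with k ≥ 3. If |D(mk,k)| > 1, then b(mk,k) < mk − m. -/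
theorem stmt_5 (m k : ℕ) (hm : 0 < m) (hk : 3 ≤ k)
    (hcard : (Ddiff (m * k) k).Nontrivial) :
    bNum (m * k) k < m * k - m := by
  have hk0 : 0 < k := by omega
  obtain ⟨N, hN⟩ : ∃ N, m * k = N := ⟨_, rfl⟩
  rw [hN] at hcard ⊢
  have hN0 : 0 < N := hN ▸ Nat.mul_pos hm hk0
  haveI : NeZero N := ⟨hN0.ne'⟩
  have h3m : m * 3 ≤ N := hN ▸ Nat.mul_le_mul_left m hk
  have hcast : ∀ i j : ℕ, i < N → j < N → ((i : ZMod N) = (j : ZMod N)) → i = j := by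
    intro i j hi hj h
    have := congrArg ZMod.val h
    rwa [ZMod.val_cast_of_lt hi, ZMod.val_cast_of_lt hj] at this
  have hk_le_N : k ≤ N := hN ▸ Nat.le_mul_of_pos_left k hm
  -- main bound for each AP-free set
  have key : ∀ B : Finset (ZMod N), (∀ A ⊆ B, ¬ IsAP N k A) → B.card < N - m := by
    intro B hB
    set C := Bᶜ with hCdef
    have hBC : B.card + C.card = N := by
      rw [hCdef, Finset.card_add_card_compl, ZMod.card]
    -- every interval of length k meets C
    have hmeet : ∀ x : ZMod N, ∃ i < k, x + (i : ZMod N) ∈ C := by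
      intro x
      by_contra h
      push_neg at h
      have hAP : IsAP N k ((Finset.range k).image (fun i : ℕ => x + (i : ZMod N) * 1)) := by
        refine ⟨1, ?_, x, rfl⟩
        refine (Finset.card_image_of_injOn ?_).trans (Finset.card_range k)
        intro i hi j hj hij
        simp only [mul_one, add_right_inj] at hij
        exact hcast i j (lt_of_lt_of_le (Finset.mem_coe.mp hi |> Finset.mem_range.mp) hk_le_N)
          (lt_of_lt_of_le (Finset.mem_coe.mp hj |> Finset.mem_range.mp) hk_le_N) hij
      refine hB _ ?_ hAP
      intro a ha
      obtain ⟨i, hi, rfl⟩ := Finset.mem_image.mp ha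
      have hi' := h i (Finset.mem_range.mp hi)
      rw [Finset.mem_compl, not_not] at hi'
      simpa using hi'
    -- m ≤ |C|
    have hsurj : ∀ b ∈ (Finset.univ : Finset (ZMod N)), ∃ p ∈ C ×ˢ Finset.range k,
        p.1 - ((p.2 : ℕ) : ZMod N) = b := by
      intro x _
      obtain ⟨i, hi, hc⟩ := hmeet x
      exact ⟨(x + (i : ZMod N), i), Finset.mem_product.mpr ⟨hc, Finset.mem_range.mpr hi⟩,
        by ring⟩
    have hcardU : (Finset.univ : Finset (ZMod N)).card = N := by
      simp [ZMod.card]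
    have hm_le : m ≤ C.card := by
      have h1 : (Finset.univ : Finset (ZMod N)).card ≤ (C ×ˢ Finset.range k).card :=
        Finset.card_le_card_of_surjOn (fun p : ZMod N × ℕ => p.1 - ((p.2 : ℕ) : ZMod N))
          (by
            intro x hx
            obtain ⟨p, hp, hpe⟩ := hsurj x (Finset.mem_univ x)
            exact ⟨p, hp, hpe⟩)
      rw [hcardU, Finset.card_product, Finset.card_range] at h1
      exact Nat.le_of_mul_le_mul_right (hN.le.trans h1) hk0
    -- |C| ≠ m
    have hne : C.card ≠ m := by
      intro hCm
      -- injectivity of (c, i) ↦ c - i on C × range k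
      have hinj := Finset.inj_on_of_surj_on_of_card_le
        (s := C ×ˢ Finset.range k) (t := Finset.univ)
        (fun p _ => p.1 - ((p.2 : ℕ) : ZMod N))
        (fun a ha => Finset.mem_univ _)
        (fun b hb => by
          obtain ⟨p, hp, hpe⟩ := hsurj b hb
          exact ⟨p, hp, hpe⟩)
        (by rw [hcardU, Finset.card_product, Finset.card_range, hCm, hN])
      -- C is closed under adding k
      have hclosed : ∀ c ∈ C, c + (k : ZMod N) ∈ C := by
        intro c hc
        obtain ⟨i, hi, hci⟩ := hmeet (c + 1)
        rcases Nat.lt_or_ge i (k - 1) with hik | hik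
        · exfalso
          have h1 : (c + 1 + (i : ZMod N), i + 1) ∈ C ×ˢ Finset.range k :=
            Finset.mem_product.mpr ⟨hci, Finset.mem_range.mpr (by omega)⟩
          have h2 : (c, 0) ∈ C ×ˢ Finset.range k :=
            Finset.mem_product.mpr ⟨hc, Finset.mem_range.mpr hk0⟩
          have h3 : c + 1 + (i : ZMod N) - (((i + 1 : ℕ)) : ZMod N)
              = c - ((0 : ℕ) : ZMod N) := by push_cast; ring
          have := hinj h1 h2 h3
          simp at this
        · have hieq : i = k - 1 := by omega
          subst hieq
          have hk1 : k - 1 + 1 = k := by omega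
          have he : c + 1 + ((k - 1 : ℕ) : ZMod N) = c + (k : ZMod N) := by
            have hcc : ((k - 1 : ℕ) : ZMod N) + 1 = ((k - 1 + 1 : ℕ) : ZMod N) := by
              push_cast; ring
            rw [add_assoc, add_comm (1 : ZMod N), hcc, hk1]
          rwa [he] at hci
      -- C is a coset of the subgroup generated by k
      have hCne : C.Nonempty := Finset.card_pos.mp (by omega)
      obtain ⟨c0, hc0⟩ := hCne
      have hmem : ∀ j : ℕ, c0 + ((j * k : ℕ) : ZMod N) ∈ C := by
        intro j
        induction j with
        | zero => simpa using hc0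
        | succ j ih =>
          have h' := hclosed _ ih
          have he : c0 + ((j * k : ℕ) : ZMod N) + (k : ZMod N)
              = c0 + (((j + 1) * k : ℕ) : ZMod N) := by push_cast; ring
          rwa [he] at h'
      have hsub : (Finset.range m).image (fun j : ℕ => c0 + ((j * k : ℕ) : ZMod N)) ⊆ C := by
        intro a ha
        obtain ⟨j, _, rfl⟩ := Finset.mem_image.mp ha
        exact hmem j
      have hCeq : C = (Finset.range m).image (fun j : ℕ => c0 + ((j * k : ℕ) : ZMod N)) := by
        refine (Finset.eq_of_subset_of_card_le hsub ?_).symm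
        rw [hCm, Finset.card_image_of_injOn, Finset.card_range]
        intro a ha b hb hab
        simp only [add_right_inj] at hab
        have ha' : a * k < N := hN ▸
          (Nat.mul_lt_mul_right hk0).mpr (Finset.mem_range.mp (Finset.mem_coe.mp ha))
        have hb' : b * k < N := hN ▸
          (Nat.mul_lt_mul_right hk0).mpr (Finset.mem_range.mp (Finset.mem_coe.mp hb))
        exact Nat.eq_of_mul_eq_mul_right hk0 (hcast _ _ ha' hb' hab)
      -- get a common difference d with gcd(d,k) ≥ 2
      have hexg : ∃ g ∈ Ddiff N k, g ≠ 1 := by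
        obtain ⟨g1, hg1, g2, hg2, hg12⟩ := hcard
        rcases eq_or_ne g1 1 with h | h
        · exact ⟨g2, hg2, by rw [← h]; exact hg12.symm⟩
        · exact ⟨g1, hg1, h⟩
      obtain ⟨g, ⟨d, hd1, hdN, ⟨A0, hA0card, t0, hA0⟩, hgeq⟩, hgne1⟩ := hexg
      have hg2le : 2 ≤ g := by
        have : 0 < Nat.gcd d k := Nat.gcd_pos_of_pos_left k hd1
        omega
      have hgdvdk : g ∣ k := hgeq ▸ Nat.gcd_dvd_right d k
      have hgdvdd : g ∣ d := hgeq ▸ Nat.gcd_dvd_left d k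
      have hgdvdN : g ∣ N := hgdvdk.trans ⟨m, by rw [← hN, mul_comm]⟩
      haveI : Fact (1 < g) := ⟨hg2le⟩
      -- injectivity on range k of progression with difference d
      have hinjd : Set.InjOn (fun i : ℕ => t0 + (i : ZMod N) * (d : ZMod N))
          (Finset.range k) := by
        apply Finset.injOn_of_card_image_eq
        rw [← hA0, hA0card, Finset.card_range]
      -- the AP starting at c0 + 1 with difference d avoids C
      have havoid : ∀ i : ℕ, c0 + 1 + (i : ZMod N) * (d : ZMod N) ∉ C := by
        intro i hiC
        rw [hCeq] at hiC
        obtain ⟨j, _, hj⟩ := Finset.mem_image.mp hiC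
        have h' := congrArg (ZMod.castHom hgdvdN (ZMod g)) hj
        simp only [map_add, map_mul, map_natCast, map_one] at h'
        rw [(ZMod.natCast_eq_zero_iff d g).mpr hgdvdd,
          (ZMod.natCast_eq_zero_iff (j * k) g).mpr (Dvd.dvd.mul_left hgdvdk j)]
          at h'
        simp only [mul_zero, add_zero] at h'
        exact one_ne_zero (by linear_combination -h')
      have hAP : IsAP N k ((Finset.range k).image
          (fun i : ℕ => c0 + 1 + (i : ZMod N) * (d : ZMod N))) := by
        refine ⟨(d : ZMod N), ?_, c0 + 1, rfl⟩
        refine (Finset.card_image_of_injOn ?_).trans (Finset.card_range k)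
        intro i hi j hj hij
        simp only [add_right_inj] at hij
        exact hinjd hi hj (by simp only [add_right_inj]; exact hij)
      refine hB _ ?_ hAP
      intro a ha
      obtain ⟨i, _, rfl⟩ := Finset.mem_image.mp ha
      have h' := havoid i
      rwa [Finset.mem_compl, not_not] at h'
    omega
  -- conclude about the sSup
  have hzero : (0 : ℕ) ∈ {n | ∃ B : Finset (ZMod N), B.card = n ∧ ∀ A ⊆ B, ¬ IsAP N k A} := by
    refine ⟨∅, Finset.card_empty, ?_⟩
    intro A hA ⟨d, hcard', _⟩
    rw [Finset.subset_empty] at hA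
    subst hA
    simp at hcard'
    omega
  have hb : bNum N k ≤ N - m - 1 := by
    apply csSup_le ⟨0, hzero⟩
    rintro n ⟨B, rfl, hBfree⟩
    have := key B hBfree
    omega
  omega
end

section
/- Let m and k be positive integers with k ≥ 3 and m < k. Then b(mk,k) = mk − m if and only if every divisor of k that is greater than 1 is also greater than m. -/
lemma zmod_natCast_inj {n a b : ℕ} [NeZero n] (ha : a < n) (hb : b < n)
    (h : (a : ZMod n) = b) : a = b := by
  have := congrArg ZMod.val h
  rwa [ZMod.val_cast_of_lt ha, ZMod.val_cast_of_lt hb] at this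

/-- the interval window of length k starting at t -/
def win (N k : ℕ) (t : ZMod N) : Finset (ZMod N) :=
  (Finset.range k).image (fun j : ℕ => t + (j : ZMod N))

lemma mem_win {N k : ℕ} {t x : ZMod N} : x ∈ win N k t ↔ ∃ j < k, x = t + (j : ZMod N) := by
  simp [win, eq_comm]

lemma Npos {m k : ℕ} (hm : 0 < m) (hk : 3 ≤ k) : 0 < m * k := Nat.mul_pos hm (by omega)

lemma win_card {m k : ℕ} (hm : 0 < m) (hk : 3 ≤ k) :
    ∀ t : ZMod (m * k), (win (m * k) k t).card = k := by
  haveI : NeZero (m * k) := ⟨(Npos hm hk).ne'⟩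
  intro t
  rw [win, Finset.card_image_of_injOn, Finset.card_range]
  intro a ha b hb hab
  simp only [Finset.coe_range, Set.mem_Iio] at ha hb
  simp only [add_right_inj] at hab
  have hkN : k ≤ m * k := Nat.le_mul_of_pos_left k hm
  exact zmod_natCast_inj (lt_of_lt_of_le ha hkN) (lt_of_lt_of_le hb hkN) hab

lemma win_isAP {m k : ℕ} (hm : 0 < m) (hk : 3 ≤ k) (t : ZMod (m * k)) :
    IsAPWith (m * k) k (win (m * k) k t) 1 :=
  ⟨win_card hm hk t, t, by simp [win]⟩

lemma win_disjoint {m k : ℕ} (hm : 0 < m) (hk : 3 ≤ k) {t : ZMod (m * k)} {i i' : ℕ}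
    (hi : i < m) (hi' : i' < m) (hne : i ≠ i') :
    Disjoint (win (m * k) k (t + ((i * k : ℕ) : ZMod (m * k))))
      (win (m * k) k (t + ((i' * k : ℕ) : ZMod (m * k)))) := by
  haveI : NeZero (m * k) := ⟨(Npos hm hk).ne'⟩
  rw [Finset.disjoint_left]
  intro x hx hx'
  rw [mem_win] at hx hx'
  obtain ⟨j, hj, rfl⟩ := hx
  obtain ⟨j', hj', he⟩ := hx'
  rw [add_assoc, add_assoc, add_right_inj, ← Nat.cast_add, ← Nat.cast_add] at he
  have h1 : i * k + j < m * k := by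
    calc i * k + j < i * k + k := by omega
    _ = (i+1) * k := by ring
    _ ≤ m * k := Nat.mul_le_mul_right k (by omega)
  have h2 : i' * k + j' < m * k := by
    calc i' * k + j' < i' * k + k := by omega
    _ = (i'+1) * k := by ring
    _ ≤ m * k := Nat.mul_le_mul_right k (by omega)
  have heq := zmod_natCast_inj h1 h2 he
  have e1 : (i * k + j) / k = i := by
    rw [mul_comm, Nat.mul_add_div (by omega), Nat.div_eq_of_lt hj, add_zero]
  have e2 : (i' * k + j') / k = i' := by
    rw [mul_comm, Nat.mul_add_div (by omega), Nat.div_eq_of_lt hj', add_zero]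
  exact hne (by rw [← e1, ← e2, heq])

lemma win_cover {m k : ℕ} (hm : 0 < m) (hk : 3 ≤ k) (t : ZMod (m * k)) (x : ZMod (m * k)) :
    ∃ i < m, x ∈ win (m * k) k (t + ((i * k : ℕ) : ZMod (m * k))) := by
  haveI : NeZero (m * k) := ⟨(Npos hm hk).ne'⟩
  set v := (x - t).val with hv
  have hvlt : v < m * k := ZMod.val_lt _
  refine ⟨v / k, Nat.div_lt_of_lt_mul (by rwa [mul_comm] at hvlt), ?_⟩
  rw [mem_win]
  refine ⟨v % k, Nat.mod_lt _ (by omega), ?_⟩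
  rw [add_assoc, ← Nat.cast_add]
  have hdm : v / k * k + v % k = v := by rw [mul_comm]; exact Nat.div_add_mod v k
  rw [hdm, hv, ZMod.natCast_zmod_val]
  ring

lemma inter_win_card_one {m k : ℕ} (hm : 0 < m) (hk : 3 ≤ k) {C : Finset (ZMod (m*k))}
    (hC : C.card = m)
    (hits : ∀ A : Finset (ZMod (m*k)), IsAPWith (m*k) k A 1 → (C ∩ A).Nonempty) :
    ∀ t : ZMod (m*k), (C ∩ win (m*k) k t).card = 1 := by
  intro t
  have hCeq : C = (Finset.range m).biUnion
      (fun i => C ∩ win (m*k) k (t + ((i*k:ℕ) : ZMod (m*k)))) := by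
    ext x
    simp only [Finset.mem_biUnion, Finset.mem_range, Finset.mem_inter]
    constructor
    · intro hx
      obtain ⟨i, hi, hw⟩ := win_cover hm hk t x
      exact ⟨i, hi, hx, hw⟩
    · rintro ⟨i, _, hx, _⟩; exact hx
  have hdisj : ∀ i ∈ Finset.range m, ∀ j ∈ Finset.range m, i ≠ j →
      Disjoint (C ∩ win (m*k) k (t + ((i*k:ℕ) : ZMod (m*k))))
        (C ∩ win (m*k) k (t + ((j*k:ℕ) : ZMod (m*k)))) := by
    intro i hi j hj hij
    exact (win_disjoint hm hk (Finset.mem_range.1 hi) (Finset.mem_range.1 hj) hij).mono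
      Finset.inter_subset_right Finset.inter_subset_right
  have hsum : ∑ i ∈ Finset.range m,
      (C ∩ win (m*k) k (t + ((i*k:ℕ) : ZMod (m*k)))).card = m := by
    rw [← Finset.card_biUnion hdisj, ← hCeq, hC]
  have hone : ∀ i ∈ Finset.range m,
      1 ≤ (C ∩ win (m*k) k (t + ((i*k:ℕ) : ZMod (m*k)))).card := by
    intro i _
    exact Finset.card_pos.2 (hits _ (win_isAP hm hk _))
  have hall := (Finset.sum_eq_sum_iff_of_le hone).1 (by
    rw [hsum, Finset.sum_const, Finset.card_range, smul_eq_mul, mul_one])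
  have h0 := (hall 0 (Finset.mem_range.2 hm)).symm
  simpa using h0

lemma shift_mem {m k : ℕ} (hm : 0 < m) (hk : 3 ≤ k) {C : Finset (ZMod (m*k))}
    (h1 : ∀ t : ZMod (m*k), (C ∩ win (m*k) k t).card = 1)
    {t : ZMod (m*k)} (ht : t ∈ C) : t + ((k:ℕ) : ZMod (m*k)) ∈ C := by
  haveI : NeZero (m * k) := ⟨(Npos hm hk).ne'⟩
  obtain ⟨x, hx⟩ := Finset.card_eq_one.1 (h1 (t + 1))
  have hxmem : x ∈ C ∩ win (m*k) k (t + 1) := hx ▸ Finset.mem_singleton_self x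
  rw [Finset.mem_inter, mem_win] at hxmem
  obtain ⟨hxC, j, hj, hxe⟩ := hxmem
  rcases Nat.lt_or_ge j (k-1) with hjlt | hjge
  · -- x = t + (j+1) ∈ win t, and t ∈ win t; both in C ∩ win t which has card 1
    exfalso
    obtain ⟨y, hy⟩ := Finset.card_eq_one.1 (h1 t)
    have hxw : x ∈ C ∩ win (m*k) k t := by
      rw [Finset.mem_inter, mem_win]
      exact ⟨hxC, j+1, by omega, by rw [hxe]; push_cast; ring⟩
    have htw : t ∈ C ∩ win (m*k) k t := by
      rw [Finset.mem_inter, mem_win]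
      exact ⟨ht, 0, by omega, by simp⟩
    rw [hy, Finset.mem_singleton] at hxw htw
    have hxt : x = t := hxw.trans htw.symm
    rw [hxe] at hxt
    have : ((j+1 : ℕ) : ZMod (m*k)) = 0 := by
      push_cast
      linear_combination hxt
    rw [ZMod.natCast_eq_zero_iff] at this
    have := Nat.le_of_dvd (by omega) this
    have hkN : k ≤ m * k := Nat.le_mul_of_pos_left k hm
    omega
  · -- j = k - 1, so x = t + k
    have hjk : j = k - 1 := by omega
    have : x = t + ((k:ℕ) : ZMod (m*k)) := by
      rw [hxe, hjk]
      have : (1 : ZMod (m*k)) + ((k - 1 : ℕ) : ZMod (m*k)) = ((k:ℕ) : ZMod (m*k)) := by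
        rw [← Nat.cast_one, ← Nat.cast_add]
        congr 1
        omega
      rw [add_assoc, this]
    rw [← this]; exact hxC

lemma rigidity {m k : ℕ} (hm : 0 < m) (hk : 3 ≤ k) {C : Finset (ZMod (m*k))}
    (hC : C.card = m)
    (h1 : ∀ t : ZMod (m*k), (C ∩ win (m*k) k t).card = 1) :
    ∃ c₀ : ZMod (m*k), C = (Finset.range m).image (fun i : ℕ => c₀ + ((i*k:ℕ) : ZMod (m*k))) := by
  haveI : NeZero (m * k) := ⟨(Npos hm hk).ne'⟩
  have hCne : C.Nonempty := Finset.card_pos.1 (by rw [hC]; exact hm)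
  obtain ⟨c₀, hc₀⟩ := hCne
  refine ⟨c₀, ?_⟩
  have hstep : ∀ i : ℕ, c₀ + ((i*k:ℕ) : ZMod (m*k)) ∈ C := by
    intro i
    induction i with
    | zero => simpa using hc₀
    | succ i ih =>
      have := shift_mem hm hk h1 ih
      have he : c₀ + ((i*k:ℕ) : ZMod (m*k)) + ((k:ℕ) : ZMod (m*k))
          = c₀ + (((i+1)*k:ℕ) : ZMod (m*k)) := by push_cast; ring
      rwa [he] at this
  have hsub : (Finset.range m).image (fun i : ℕ => c₀ + ((i*k:ℕ) : ZMod (m*k))) ⊆ C := by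
    intro x hx
    obtain ⟨i, _, rfl⟩ := Finset.mem_image.1 hx
    exact hstep i
  have hcardim : ((Finset.range m).image (fun i : ℕ => c₀ + ((i*k:ℕ) : ZMod (m*k)))).card = m := by
    rw [Finset.card_image_of_injOn, Finset.card_range]
    intro a ha b hb hab
    simp only [Finset.coe_range, Set.mem_Iio] at ha hb
    simp only [add_right_inj] at hab
    have h1' : a * k < m * k := (Nat.mul_lt_mul_right (show 0 < k by omega)).2 ha
    have h2' : b * k < m * k := (Nat.mul_lt_mul_right (show 0 < k by omega)).2 hb
    have := zmod_natCast_inj h1' h2' hab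
    exact Nat.eq_of_mul_eq_mul_right (by omega) this
  exact (Finset.eq_of_subset_of_card_le hsub (by rw [hcardim, hC])).symm

lemma coprime_of_isAPWith {m k : ℕ} (hm : 0 < m) (hk : 3 ≤ k)
    (hdiv : ∀ g : ℕ, g ∣ k → 1 < g → m < g)
    {A : Finset (ZMod (m*k))} {d : ZMod (m*k)} (h : IsAPWith (m*k) k A d) :
    Nat.Coprime d.val k := by
  haveI : NeZero (m * k) := ⟨(Npos hm hk).ne'⟩
  obtain ⟨hcard, t, hA⟩ := h
  rw [hA] at hcard
  have hinj : Set.InjOn (fun i : ℕ => t + (i : ZMod (m*k)) * d) (Finset.range k) := by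
    exact Finset.card_image_iff.1 (by rw [hcard, Finset.card_range])
  have horder : k ≤ addOrderOf d := by
    by_contra hlt
    push_neg at hlt
    have hpos : 0 < addOrderOf d := addOrderOf_pos d
    have hzero : addOrderOf d • d = 0 := addOrderOf_nsmul_eq_zero d
    have : t + ((addOrderOf d : ℕ) : ZMod (m*k)) * d = t + ((0:ℕ) : ZMod (m*k)) * d := by
      rw [← nsmul_eq_mul, hzero]; simp
    have := hinj (by simpa using hlt) (by simp; omega) this
    omega
  have hord : addOrderOf d = (m*k) / ((m*k).gcd d.val) := by
    conv_lhs => rw [← ZMod.natCast_zmod_val d]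
    exact ZMod.addOrderOf_coe d.val (Npos hm hk).ne'
  set x := (m*k).gcd d.val with hx
  have hxdvd : x ∣ m * k := Nat.gcd_dvd_left _ _
  have hxpos : 0 < x := Nat.gcd_pos_of_pos_left _ (Npos hm hk)
  have hxm : x ≤ m := by
    have h1 : x * k ≤ x * ((m*k)/x) := Nat.mul_le_mul_left x (hord ▸ horder)
    rw [Nat.mul_div_cancel' hxdvd] at h1
    exact Nat.le_of_mul_le_mul_right h1 (by omega)
  set g := (d.val).gcd k with hg
  have hgk : g ∣ k := Nat.gcd_dvd_right _ _
  have hgx : g ∣ x := Nat.dvd_gcd (hgk.trans (dvd_mul_left k m)) (Nat.gcd_dvd_left _ _)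
  have hgm : g ≤ m := le_trans (Nat.le_of_dvd hxpos hgx) hxm
  have hg1 : g = 1 := by
    by_contra hne
    have hgpos : 0 < g := Nat.gcd_pos_of_pos_right _ (by omega)
    have : 1 < g := by omega
    exact absurd (hdiv g hgk this) (by omega)
  exact hg1

lemma exists_hit {m k : ℕ} (hm : 0 < m) (hk : 3 ≤ k) {d : ZMod (m*k)}
    (hcop : Nat.Coprime d.val k) (t : ZMod (m*k)) :
    ∃ j < k, (ZMod.castHom (dvd_mul_left k m) (ZMod k)) (t + (j : ZMod (m*k)) * d) = 0 := by
  haveI : NeZero (m * k) := ⟨(Npos hm hk).ne'⟩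
  haveI : NeZero k := ⟨by omega⟩
  set φ := ZMod.castHom (dvd_mul_left k m) (ZMod k) with hφ
  set u := ZMod.unitOfCoprime d.val hcop with hu
  set w : ZMod k := (-(φ t)) * (↑u⁻¹ : ZMod k) with hw
  refine ⟨w.val, ZMod.val_lt w, ?_⟩
  have h1 : ((w.val : ℕ) : ZMod k) = w := ZMod.natCast_zmod_val w
  have h2 : φ d = (d.val : ZMod k) := by
    conv_lhs => rw [← ZMod.natCast_zmod_val d]
    exact map_natCast φ d.val
  have h3 : (d.val : ZMod k) = (u : ZMod k) := (ZMod.coe_unitOfCoprime d.val hcop).symm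
  rw [map_add, map_mul, map_natCast φ, h1, h2, h3, hw]
  have : -φ t * ↑u⁻¹ * ↑u = -φ t * (↑u⁻¹ * ↑u) := by ring
  rw [this, Units.inv_mul]
  ring

theorem stmt_6 (m k : ℕ) (hm : 0 < m) (hk : 3 ≤ k) (hmk : m < k) :
    bNum (m * k) k = m * k - m ↔ ∀ g : ℕ, g ∣ k → 1 < g → m < g := by
  haveI : NeZero (m * k) := ⟨(Npos hm hk).ne'⟩
  haveI : NeZero k := ⟨by omega⟩
  set S := {n | ∃ B : Finset (ZMod (m*k)), B.card = n ∧ ∀ A ⊆ B, ¬ IsAP (m*k) k A} with hS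
  have hcardu : Fintype.card (ZMod (m*k)) = m * k := ZMod.card (m*k)
  -- upper bound
  have hub : ∀ n ∈ S, n ≤ m * k - m := by
    rintro n ⟨B, hBc, hav⟩
    have hnle : n ≤ m * k := by
      have h := Finset.card_le_univ B
      rwa [hBc, hcardu] at h
    have hone : ∀ i ∈ Finset.range m,
        1 ≤ (win (m*k) k (((i*k:ℕ) : ZMod (m*k))) \ B).card := by
      intro i _
      have hnsub : ¬ win (m*k) k (((i*k:ℕ) : ZMod (m*k))) ⊆ B := by
        intro hsub
        exact hav _ hsub ⟨1, win_isAP hm hk _⟩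
      obtain ⟨x, hx, hxB⟩ := Finset.not_subset.1 hnsub
      exact Finset.card_pos.2 ⟨x, Finset.mem_sdiff.2 ⟨hx, hxB⟩⟩
    have hdisj : ∀ i ∈ Finset.range m, ∀ j ∈ Finset.range m, i ≠ j →
        Disjoint (win (m*k) k (((i*k:ℕ) : ZMod (m*k))) \ B)
          (win (m*k) k (((j*k:ℕ) : ZMod (m*k))) \ B) := by
      intro i hi j hj hij
      have := win_disjoint hm hk (t := 0) (Finset.mem_range.1 hi) (Finset.mem_range.1 hj) hij
      simp only [zero_add] at this
      exact this.mono Finset.sdiff_subset Finset.sdiff_subset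
    have hT : m ≤ ((Finset.range m).biUnion
        (fun i => win (m*k) k (((i*k:ℕ) : ZMod (m*k))) \ B)).card := by
      rw [Finset.card_biUnion hdisj]
      calc m = ∑ _i ∈ Finset.range m, 1 := by simp
      _ ≤ _ := Finset.sum_le_sum hone
    have hTsub : ((Finset.range m).biUnion
        (fun i => win (m*k) k (((i*k:ℕ) : ZMod (m*k))) \ B)) ⊆ Finset.univ \ B := by
      intro x hx
      obtain ⟨i, _, hx⟩ := Finset.mem_biUnion.1 hx
      exact Finset.mem_sdiff.2 ⟨Finset.mem_univ x, (Finset.mem_sdiff.1 hx).2⟩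
    have := le_trans hT (Finset.card_le_card hTsub)
    rw [Finset.card_univ_diff, hcardu, hBc] at this
    omega
  have hne : S.Nonempty := by
    refine ⟨0, ∅, Finset.card_empty, ?_⟩
    intro A hA hAP
    obtain ⟨d, hcard, _⟩ := hAP
    rw [Finset.subset_empty.1 hA] at hcard
    simp at hcard
    omega
  have hbdd : BddAbove S := ⟨m * k - m, fun n hn => hub n hn⟩
  have hbNum : bNum (m*k) k = sSup S := rfl
  constructor
  · -- forward
    intro hb g hgk hg1
    by_contra hgm
    push_neg at hgm
    have hmem : m * k - m ∈ S := by
      have := Nat.sSup_mem hne hbdd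
      rwa [← hbNum, hb] at this
    obtain ⟨B, hBc, hav⟩ := hmem
    set C := Finset.univ \ B with hCdef
    have hCcard : C.card = m := by
      rw [hCdef, Finset.card_univ_diff, hcardu, hBc,
        Nat.sub_sub_self (Nat.le_mul_of_pos_right m (by omega))]
    have hits : ∀ A : Finset (ZMod (m*k)), IsAPWith (m*k) k A 1 → (C ∩ A).Nonempty := by
      intro A hAP
      have hnsub : ¬ A ⊆ B := fun hsub => hav A hsub ⟨1, hAP⟩
      obtain ⟨x, hxA, hxB⟩ := Finset.not_subset.1 hnsub
      exact ⟨x, Finset.mem_inter.2 ⟨Finset.mem_sdiff.2 ⟨Finset.mem_univ x, hxB⟩, hxA⟩⟩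
    obtain ⟨c₀, hC⟩ := rigidity hm hk hCcard (inter_win_card_one hm hk hCcard hits)
    -- the AP with difference g starting at c₀ + 1 misses C
    set A : Finset (ZMod (m*k)) :=
      (Finset.range k).image (fun j : ℕ => (c₀ + 1) + (j : ZMod (m*k)) * ((g:ℕ) : ZMod (m*k)))
      with hAdef
    have hAcard : A.card = k := by
      rw [hAdef, Finset.card_image_of_injOn, Finset.card_range]
      intro a ha b hb hab
      simp only [Finset.coe_range, Set.mem_Iio] at ha hb
      simp only [add_right_inj] at hab
      rw [← Nat.cast_mul, ← Nat.cast_mul] at hab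
      have h1 : a * g < m * k := by
        calc a * g ≤ (k-1) * m := Nat.mul_le_mul (by omega) hgm
        _ < k * m := by
          have : 0 < m := hm
          exact (Nat.mul_lt_mul_right this).2 (by omega)
        _ = m * k := mul_comm k m
      have h2 : b * g < m * k := by
        calc b * g ≤ (k-1) * m := Nat.mul_le_mul (by omega) hgm
        _ < k * m := (Nat.mul_lt_mul_right hm).2 (by omega)
        _ = m * k := mul_comm k m
      have := zmod_natCast_inj h1 h2 hab
      exact Nat.eq_of_mul_eq_mul_right (by omega) this
    have hAP : IsAPWith (m*k) k A ((g:ℕ) : ZMod (m*k)) := ⟨hAcard, c₀ + 1, rfl⟩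
    have hnsub : ¬ A ⊆ B := fun hsub => hav A hsub ⟨_, hAP⟩
    obtain ⟨x, hxA, hxB⟩ := Finset.not_subset.1 hnsub
    have hxC : x ∈ C := Finset.mem_sdiff.2 ⟨Finset.mem_univ x, hxB⟩
    rw [hC] at hxC
    obtain ⟨i, hi, hxi⟩ := Finset.mem_image.1 hxC
    rw [hAdef, Finset.mem_image] at hxA
    obtain ⟨j, hj, hxj⟩ := hxA
    rw [Finset.mem_range] at hi hj
    have heq : ((i*k : ℕ) : ZMod (m*k)) = ((1 + j * g : ℕ) : ZMod (m*k)) := by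
      have hcc : c₀ + ((i*k : ℕ) : ZMod (m*k)) = c₀ + ((1 + j * g : ℕ) : ZMod (m*k)) := by
        rw [hxi, ← hxj]; push_cast; ring
      exact add_left_cancel hcc
    have h1 : i * k < m * k := (Nat.mul_lt_mul_right (show 0 < k by omega)).2 hi
    have hm2 : 2 ≤ m := le_trans hg1 hgm
    have h2 : 1 + j * g < m * k := by
      have e1 : j * g ≤ (k-1) * m := Nat.mul_le_mul (by omega) hgm
      have e2 : (k-1) * m + m = k * m := by
        have hk1 : k - 1 + 1 = k := by omega
        calc (k-1) * m + m = ((k-1)+1) * m := by ring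
        _ = k * m := by rw [hk1]
      have e3 : k * m = m * k := mul_comm k m
      omega
    have hnat := zmod_natCast_inj h1 h2 heq
    have hd1 : g ∣ 1 := by
      have ha : g ∣ i * k := Dvd.dvd.mul_left hgk i
      have hb2 : g ∣ j * g := dvd_mul_left g j
      have : g ∣ (i * k - j * g) := Nat.dvd_sub ha hb2
      have he : i * k - j * g = 1 := by omega
      rwa [he] at this
    have := Nat.le_of_dvd (by omega) hd1
    omega
  · -- backward
    intro hdiv
    set K : Finset (ZMod (m*k)) :=
      (Finset.range m).image (fun i : ℕ => ((i*k:ℕ) : ZMod (m*k))) with hKdef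
    have hKcard : K.card = m := by
      rw [hKdef, Finset.card_image_of_injOn, Finset.card_range]
      intro a ha b hb hab
      simp only [Finset.coe_range, Set.mem_Iio] at ha hb
      have h1' : a * k < m * k := (Nat.mul_lt_mul_right (show 0 < k by omega)).2 ha
      have h2' : b * k < m * k := (Nat.mul_lt_mul_right (show 0 < k by omega)).2 hb
      have := zmod_natCast_inj h1' h2' hab
      exact Nat.eq_of_mul_eq_mul_right (by omega) this
    have hmemS : m * k - m ∈ S := by
      refine ⟨Kᶜ, ?_, ?_⟩
      · rw [Finset.card_compl, hcardu, hKcard]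
      · intro A hsub hAP
        obtain ⟨d, hAPd⟩ := hAP
        have hcop := coprime_of_isAPWith hm hk hdiv hAPd
        obtain ⟨hAcard, t, hA⟩ := hAPd
        obtain ⟨j, hj, hφ⟩ := exists_hit hm hk hcop t
        set x := t + (j : ZMod (m*k)) * d with hxdef
        have hxA : x ∈ A := by
          rw [hA, Finset.mem_image]
          exact ⟨j, Finset.mem_range.2 hj, rfl⟩
        have hxK : x ∈ K := by
          have hval : ((x.val : ℕ) : ZMod k) = 0 := by
            have : (ZMod.castHom (dvd_mul_left k m) (ZMod k)) x = 0 := hφ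
            rwa [← ZMod.natCast_zmod_val x, map_natCast] at this
          rw [ZMod.natCast_eq_zero_iff] at hval
          have hxlt : x.val < m * k := ZMod.val_lt x
          obtain ⟨q, hq⟩ := hval
          have hqm : q < m := by
            by_contra hge
            push_neg at hge
            have hle : m * k ≤ k * q := by
              calc m * k = k * m := mul_comm m k
              _ ≤ k * q := Nat.mul_le_mul_left k hge
            omega
          rw [hKdef, Finset.mem_image]
          refine ⟨q, Finset.mem_range.2 hqm, ?_⟩
          rw [show q * k = x.val by rw [mul_comm]; exact hq.symm, ZMod.natCast_zmod_val]
        exact (Finset.mem_compl.1 (hsub hxA)) hxK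
    rw [hbNum]
    exact le_antisymm (csSup_le hne hub) (le_csSup hbdd hmemS)
end

section
/- Let m and k be positive integers with k ≥ 3, let d ∈ D(mk,k), and let A be a k-term cyclic arithmetic progression mod mk with common difference d. Let β ∈ {0,1,…,d−1} be such that every element of A, taken as its representative in {0,1,…,mk−1}, is congruent to β modulo d. Set α := d − β and S := {k−α, 2k−α, …, mk−α} ⊆ Z_{mk}. Then there exists an index j ∈ {1,…,m} such that {jk−α, (j+1)k−α, …, (j+d−1)k−α} (taken modulo mk, with the indices j, j+1, …, j+d−1 taken cyclically modulo m) is a subset of A. -/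
theorem stmt_8 (m k : ℕ) (hm : 0 < m) (hk : 3 ≤ k) (d : ℕ) (hd : d ∈ Ddiff (m * k) k)
    (A : Finset (ZMod (m * k))) (hA : IsAPWith (m * k) k A (d : ZMod (m * k)))
    (β : ℕ) (hβ : β < d) (hAβ : ∀ x ∈ A, x.val % d = β) :
    ∃ j, 1 ≤ j ∧ j ≤ m ∧ ∀ l < d,
      (((j + l) * k : ℕ) : ZMod (m * k)) - ((d - β : ℕ) : ZMod (m * k)) ∈ A := by
  obtain ⟨d', hd1, hd2, -, hdgcd⟩ := hd
  have hk0 : 0 < k := by omega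
  have hdpos : 0 < d := hdgcd ▸ Nat.gcd_pos_of_pos_left k hd1
  have hdk : d ∣ k := hdgcd ▸ Nat.gcd_dvd_right d' k
  obtain ⟨hcard, t, hAt⟩ := hA
  have ht : t ∈ A := by
    rw [hAt]
    exact Finset.mem_image.mpr ⟨0, Finset.mem_range.mpr hk0, by simp⟩
  have hβ' : t.val % d = β := hAβ t ht
  set s := k / d with hs
  have hsd : s * d = k := Nat.div_mul_cancel hdk
  have hspos : 0 < s := Nat.div_pos (Nat.le_of_dvd hk0 hdk) hdpos
  set q := t.val / d with hq
  have htval : q * d + β = t.val := by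
    rw [← hβ', hq]; exact Nat.div_add_mod' t.val d
  haveI : NeZero (m * k) := ⟨by positivity⟩
  have htlt : t.val < m * k := ZMod.val_lt t
  have hqlt : q < m * s := by
    have h1 : q * d ≤ t.val := by omega
    have h2 : q * d < (m * s) * d := by
      calc q * d ≤ t.val := h1
        _ < m * k := htlt
        _ = (m * s) * d := by rw [← hsd]; ring
    exact Nat.lt_of_mul_lt_mul_right h2
  set j := q / s + 1 with hj
  set r := s - 1 - q % s with hr
  have hdm := Nat.div_add_mod' q s
  have hmod : q % s < s := Nat.mod_lt _ hspos
  have h1 : j * s = q + 1 + r := by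
    rw [hj, add_mul, one_mul]
    omega
  have hrs : r < s := by omega
  refine ⟨j, by rw [hj]; exact Nat.le_add_left 1 _, ?_, ?_⟩
  · have hqsm : q / s < m := (Nat.div_lt_iff_lt_mul hspos).mpr (by omega)
    rw [hj]; exact hqsm
  · intro l hl
    set i := r + l * s with hi
    have hik : i < k := by
      calc i < (l + 1) * s := by rw [add_mul, one_mul]; omega
        _ ≤ d * s := Nat.mul_le_mul_right s (by omega)
        _ = k := by rw [mul_comm]; exact hsd
    have h2 : (j + l) * k = q * d + d + i * d := by
      calc (j + l) * k = (j * s + l * s) * d := by rw [← hsd]; ring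
        _ = (q + 1 + r + l * s) * d := by rw [h1]
        _ = q * d + d + (r + l * s) * d := by ring
        _ = q * d + d + i * d := by rw [← hi]
    have hnat : (j + l) * k = t.val + (d - β) + i * d := by omega
    rw [hAt]
    refine Finset.mem_image.mpr ⟨i, Finset.mem_range.mpr hik, ?_⟩
    rw [hnat]
    push_cast
    rw [ZMod.natCast_val, ZMod.cast_id]
    ring
end

section
/- Let m and k be positive integers with k ≥ 3. Write D(mk,k) = {d_0 < d_1 < ⋯ < d_j} and set d_{-1} := 0. For each i ∈ {0,…,j}, define F_i := ⋃_{α = d_{i−1}+1}^{d_i} {d_i·k − α, (d_i+1)·k − α, …, m·k − α} ⊆ Z_{mk}. Then for all i₁, i₂ ∈ {0,1,…,j} with i₁ ≠ i₂, F_{i₁} ∩ F_{i₂} = ∅. -/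
theorem stmt_9 (m k : ℕ) (hm : 0 < m) (hk : 3 ≤ k) (j : ℕ) (e : ℕ → ℕ)
    (he0 : e 0 = 0)
    (hmono : ∀ i ≤ j, e i < e (i + 1))
    (hD : Ddiff (m * k) k = {x | ∃ i, 1 ≤ i ∧ i ≤ j + 1 ∧ x = e i})
    (F : ℕ → Finset (ZMod (m * k)))
    (hF : ∀ i, F i =
      Finset.image (fun p : ℕ × ℕ => ((p.1 * k - p.2 : ℕ) : ZMod (m * k)))
        ((Finset.Icc (e (i + 1)) m) ×ˢ (Finset.Icc (e i + 1) (e (i + 1))))) :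
    ∀ i₁ ≤ j, ∀ i₂ ≤ j, i₁ ≠ i₂ → F i₁ ∩ F i₂ = ∅ := by
  have hNk : 0 < m * k := Nat.mul_pos hm (by omega)
  haveI : NeZero (m * k) := ⟨hNk.ne'⟩
  -- e(i+1) ≤ k for i ≤ j
  have hek : ∀ i ≤ j, e (i + 1) ≤ k := by
    intro i hi
    have hmem : e (i + 1) ∈ {x | ∃ i', 1 ≤ i' ∧ i' ≤ j + 1 ∧ x = e i'} :=
      ⟨i + 1, by omega, by omega, rfl⟩
    rw [← hD] at hmem
    obtain ⟨d, -, -, -, hg⟩ := hmem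
    rw [hg]
    exact Nat.le_of_dvd (by omega) (Nat.gcd_dvd_right d k)
  -- monotonicity of e on [0, j+1]
  have hle : ∀ b, b ≤ j + 1 → ∀ a, a ≤ b → e a ≤ e b := by
    intro b
    induction b with
    | zero =>
      intro _ a ha
      have : a = 0 := Nat.le_zero.mp ha
      rw [this]
    | succ n ih =>
      intro hb a ha
      rcases Nat.eq_or_lt_of_le ha with h | h
      · rw [h]
      · exact le_trans (ih (by omega) a (by omega)) (le_of_lt (hmono n (by omega)))
  -- main disjointness for i₁ < i₂
  have key : ∀ i₁ i₂, i₁ < i₂ → i₂ ≤ j → F i₁ ∩ F i₂ = ∅ := by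
    intro i₁ i₂ hlt hi₂
    rw [Finset.eq_empty_iff_forall_notMem]
    intro x hx
    rw [Finset.mem_inter, hF i₁, hF i₂] at hx
    obtain ⟨h1, h2⟩ := hx
    simp only [Finset.mem_image, Finset.mem_product, Finset.mem_Icc, Prod.exists] at h1 h2
    obtain ⟨a₁, α₁, ⟨⟨ha₁, ha₁'⟩, hα₁, hα₁'⟩, hv1⟩ := h1
    obtain ⟨a₂, α₂, ⟨⟨ha₂, ha₂'⟩, hα₂, hα₂'⟩, hv2⟩ := h2
    have hek₁ : e (i₁ + 1) ≤ k := hek i₁ (by omega)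
    have hek₂ : e (i₂ + 1) ≤ k := hek i₂ hi₂
    have hord : e (i₁ + 1) ≤ e i₂ := hle i₂ (by omega) (i₁ + 1) (by omega)
    have hpos₁ : 1 ≤ e (i₁ + 1) := by have := hmono i₁ (by omega); omega
    have hpos₂ : 1 ≤ e (i₂ + 1) := by have := hmono i₂ hi₂; omega
    -- α₁ < α₂, both in [1, k]
    have hαlt : α₁ < α₂ := by omega
    have hα₁k : α₁ ≤ k := by omega
    have hα₂k : α₂ ≤ k := by omega
    have ha₁pos : 1 ≤ a₁ := by omega
    have ha₂pos : 1 ≤ a₂ := by omega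
    have hb₁ : α₁ ≤ a₁ * k := le_trans hα₁k (Nat.le_mul_of_pos_left k (by omega))
    have hb₂ : α₂ ≤ a₂ * k := le_trans hα₂k (Nat.le_mul_of_pos_left k (by omega))
    have hlt₁ : a₁ * k - α₁ < m * k := by
      have : a₁ * k ≤ m * k := Nat.mul_le_mul_right k ha₁'
      omega
    have hlt₂ : a₂ * k - α₂ < m * k := by
      have : a₂ * k ≤ m * k := Nat.mul_le_mul_right k ha₂'
      omega
    have heq : a₁ * k - α₁ = a₂ * k - α₂ := by
      have hc : ((a₁ * k - α₁ : ℕ) : ZMod (m * k)) = ((a₂ * k - α₂ : ℕ) : ZMod (m * k)) := by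
        rw [hv1, hv2]
      have := congrArg ZMod.val hc
      rwa [ZMod.val_cast_of_lt hlt₁, ZMod.val_cast_of_lt hlt₂] at this
    -- derive contradiction
    have heq' : a₁ * k + α₂ = a₂ * k + α₁ := by omega
    have haa : a₁ < a₂ := by
      by_contra h
      push_neg at h
      have : a₂ * k ≤ a₁ * k := Nat.mul_le_mul_right k h
      omega
    have hexp : a₁ * k + k ≤ a₂ * k := by
      have h' : (a₁ + 1) * k ≤ a₂ * k := Nat.mul_le_mul_right k (by omega)
      rwa [Nat.succ_mul] at h'
    omega
  intro i₁ hi₁ i₂ hi₂ hne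
  rcases lt_or_gt_of_ne hne with h | h
  · exact key i₁ i₂ h hi₂
  · rw [Finset.inter_comm]; exact key i₂ i₁ h hi₁
end

section
/- Let m and k be positive integers with k ≥ 3. Write D(mk,k) = {d_0 < d_1 < ⋯ < d_j} and set d_{-1} := 0. For each i ∈ {0,…,j}, define F_i := ⋃_{α = d_{i−1}+1}^{d_i} {d_i·k − α, (d_i+1)·k − α, …, m·k − α} ⊆ Z_{mk}, and let F := ⋃_{i=0}^{j} F_i. Then |F| = Σ_{i=0}^{j} (d_i − d_{i−1})(m − d_i + 1). -/
lemma ddiff_bound (m k g : ℕ) (hm : 0 < m) (hk : 3 ≤ k)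
    (hg : g ∈ Ddiff (m * k) k) : 1 ≤ g ∧ g ≤ m ∧ g ≤ k := by
  obtain ⟨d, hd1, hd2, ⟨A, hcard, t, hAeq⟩, rfl⟩ := hg
  have hk0 : 0 < k := by omega
  have hmk : 0 < m * k := by positivity
  have : NeZero (m * k) := ⟨by omega⟩
  refine ⟨?_, ?_, Nat.le_of_dvd hk0 (Nat.gcd_dvd_right d k)⟩
  · have : Nat.gcd d k ≠ 0 := fun h => by
      have := Nat.eq_zero_of_gcd_eq_zero_left h; omega
    omega
  · -- g ≤ m via c := gcd (m*k) d ≤ m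
    set c := Nat.gcd (m * k) d with hc
    have hc0 : 0 < c := Nat.gcd_pos_of_pos_left _ hmk
    have hgc : Nat.gcd d k ∣ c :=
      Nat.dvd_gcd ((Nat.gcd_dvd_right d k).trans (dvd_mul_left k m)) (Nat.gcd_dvd_left d k)
    have hcm : c ≤ m := by
      by_contra hcm
      push_neg at hcm
      set n := m * k / c with hn
      have hcdvd : c ∣ m * k := Nat.gcd_dvd_left _ _
      have hnk : n < k := by
        rw [hn, Nat.div_lt_iff_lt_mul hc0]
        calc m * k = k * m := by ring
        _ < k * c := by exact (Nat.mul_lt_mul_left hk0).mpr hcm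
      have hn1 : 1 ≤ n := by
        rw [hn, Nat.one_le_div_iff hc0]
        exact Nat.le_of_dvd hmk hcdvd
      have hinj : Set.InjOn (fun i : ℕ => t + (i : ZMod (m * k)) * d)
          (Finset.range k) := by
        apply Finset.card_image_iff.mp
        rw [← hAeq, hcard, Finset.card_range]
      have hzero : ((n : ZMod (m * k)) * d) = 0 := by
        have : ((n * d : ℕ) : ZMod (m * k)) = 0 := by
          rw [ZMod.natCast_eq_zero_iff]
          obtain ⟨d', hd'⟩ : c ∣ d := Nat.gcd_dvd_right _ _
          refine ⟨d', ?_⟩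
          rw [hn, hd', ← mul_assoc, Nat.div_mul_cancel hcdvd]
        push_cast at this
        exact this
      have h0 : (0 : ℕ) ∈ (Finset.range k : Set ℕ) := by simp; omega
      have hnmem : n ∈ (Finset.range k : Set ℕ) := by simp [hnk]
      have := hinj h0 hnmem (by simp [hzero])
      omega
    exact (Nat.le_of_dvd hc0 hgc).trans hcm

lemma key_inj (m k : ℕ) (hk0 : 0 < k)
    (a b a' b' : ℕ) (ha : 1 ≤ a) (ha2 : a ≤ m) (hb : 1 ≤ b) (hb2 : b ≤ k)
    (ha' : 1 ≤ a') (ha2' : a' ≤ m) (hb' : 1 ≤ b') (hb2' : b' ≤ k)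
    (h : ((a * k - b : ℕ) : ZMod (m * k)) = ((a' * k - b' : ℕ) : ZMod (m * k))) :
    a = a' ∧ b = b' := by
  have hm : 0 < m := by omega
  have : NeZero (m * k) := ⟨by positivity⟩
  have hak : k ≤ a * k := Nat.le_mul_of_pos_left k ha
  have hak' : k ≤ a' * k := Nat.le_mul_of_pos_left k ha'
  have hle : a * k ≤ m * k := Nat.mul_le_mul_right k ha2
  have hle' : a' * k ≤ m * k := Nat.mul_le_mul_right k ha2'
  have hlt : a * k - b < m * k := by omega
  have hlt' : a' * k - b' < m * k := by omega
  have heq : a * k - b = a' * k - b' := by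
    have := congrArg ZMod.val h
    rwa [ZMod.val_cast_of_lt hlt, ZMod.val_cast_of_lt hlt'] at this
  have haa : a = a' := by
    rcases Nat.lt_trichotomy a a' with h1 | h1 | h1
    · have : a * k + k ≤ a' * k := by
        calc a * k + k = (a + 1) * k := by ring
        _ ≤ a' * k := Nat.mul_le_mul_right k (by omega)
      omega
    · exact h1
    · have : a' * k + k ≤ a * k := by
        calc a' * k + k = (a' + 1) * k := by ring
        _ ≤ a * k := Nat.mul_le_mul_right k (by omega)
      omega
  subst haa
  exact ⟨rfl, by omega⟩

theorem stmt_10 (m k : ℕ) (hm : 0 < m) (hk : 3 ≤ k) (j : ℕ) (e : ℕ → ℕ)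
    (he0 : e 0 = 0)
    (hmono : ∀ i ≤ j, e i < e (i + 1))
    (hD : Ddiff (m * k) k = {x | ∃ i, 1 ≤ i ∧ i ≤ j + 1 ∧ x = e i})
    (F : ℕ → Finset (ZMod (m * k)))
    (hF : ∀ i, F i =
      Finset.image (fun p : ℕ × ℕ => ((p.1 * k - p.2 : ℕ) : ZMod (m * k)))
        ((Finset.Icc (e (i + 1)) m) ×ˢ (Finset.Icc (e i + 1) (e (i + 1))))) :
    ((Finset.range (j + 1)).biUnion F).card =
      ∑ i ∈ Finset.range (j + 1), (e (i + 1) - e i) * (m - e (i + 1) + 1) := by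
  have hk0 : 0 < k := by omega
  -- monotonicity of e
  have hemono : ∀ i1 i2, i1 ≤ i2 → i2 ≤ j + 1 → e i1 ≤ e i2 := by
    intro i1 i2 h12 h2
    induction i2 with
    | zero =>
      have h0 : i1 = 0 := by omega
      rw [h0]
    | succ n ih =>
      rcases Nat.eq_or_lt_of_le h12 with rfl | h
      · exact le_refl _
      · exact le_trans (ih (by omega) (by omega)) (le_of_lt (hmono n (by omega)))
  -- bounds on e (i+1)
  have hbound : ∀ i ≤ j, 1 ≤ e (i + 1) ∧ e (i + 1) ≤ m ∧ e (i + 1) ≤ k := by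
    intro i hi
    apply ddiff_bound m k _ hm hk
    rw [hD]
    exact ⟨i + 1, by omega, by omega, rfl⟩
  -- cardinality of each F i
  have hcardF : ∀ i ≤ j, (F i).card = (e (i + 1) - e i) * (m - e (i + 1) + 1) := by
    intro i hi
    obtain ⟨h1, h2, h3⟩ := hbound i hi
    rw [hF i, Finset.card_image_of_injOn, Finset.card_product, Nat.card_Icc, Nat.card_Icc]
    · have e1 : m + 1 - e (i + 1) = m - e (i + 1) + 1 := by omega
      have e2 : e (i + 1) + 1 - (e i + 1) = e (i + 1) - e i := by omega
      rw [e1, e2, mul_comm]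
    · intro p hp q hq hpq
      simp only [Finset.coe_product, Set.mem_prod, Finset.mem_coe, Finset.mem_Icc] at hp hq
      obtain ⟨ha, hb⟩ := key_inj m k hk0 p.1 p.2 q.1 q.2
        (by omega) (by omega) (by omega) (by omega)
        (by omega) (by omega) (by omega) (by omega) hpq
      exact Prod.ext ha hb
  -- pairwise disjointness
  have hdisj : ∀ x ≤ j, ∀ y ≤ j, x < y → Disjoint (F x) (F y) := by
    intro x hx y hy hxy
    rw [Finset.disjoint_left]
    intro z hz hz'
    rw [hF x] at hz
    rw [hF y] at hz'
    simp only [Finset.mem_image, Finset.mem_product, Finset.mem_Icc] at hz hz'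
    obtain ⟨⟨a, b⟩, ⟨⟨ha1, ha2⟩, hb1, hb2⟩, hab⟩ := hz
    obtain ⟨⟨a', b'⟩, ⟨⟨ha1', ha2'⟩, hb1', hb2'⟩, hab'⟩ := hz'
    obtain ⟨hx1, hx2, hx3⟩ := hbound x hx
    obtain ⟨hy1, hy2, hy3⟩ := hbound y hy
    have hxy2 : e (x + 1) ≤ e y := hemono (x + 1) y (by omega) (by omega)
    obtain ⟨ha, hb⟩ := key_inj m k hk0 a b a' b'
      (by omega) (by omega) (by omega) (by omega)
      (by omega) (by omega) (by omega) (by omega)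
      (by rw [hab, hab'])
    omega
  rw [Finset.card_biUnion]
  · apply Finset.sum_congr rfl
    intro i hi
    exact hcardF i (by simpa using Nat.lt_succ_iff.mp (Finset.mem_range.mp hi))
  · intro x hx y hy hxy
    simp only [Finset.coe_range, Set.mem_Iio, Finset.mem_coe, Finset.mem_range, Nat.lt_succ_iff] at hx hy
    rcases Nat.lt_or_ge x y with h | h
    · exact hdisj x hx y hy h
    · exact (hdisj y hy x hx (by omega)).symm
end

section
/- Let m and k be positive integers with k ≥ 3. Write D(mk,k) = {d_0 < d_1 < ⋯ < d_j} and set d_{-1} := 0. For each i ∈ {0,…,j}, define F_i := ⋃_{α = d_{i−1}+1}^{d_i} {d_i·k − α, (d_i+1)·k − α, …, m·k − α} ⊆ Z_{mk}, and let F := ⋃_{i=0}^{j} F_i. Then B := Z_{mk} \ F contains no k-term cyclic arithmetic progression mod mk. -/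
theorem stmt_11 (m k : ℕ) (hm : 0 < m) (hk : 3 ≤ k) (j : ℕ) (e : ℕ → ℕ)
    (he0 : e 0 = 0)
    (hmono : ∀ i ≤ j, e i < e (i + 1))
    (hD : Ddiff (m * k) k = {x | ∃ i, 1 ≤ i ∧ i ≤ j + 1 ∧ x = e i})
    (F : ℕ → Finset (ZMod (m * k)))
    (hF : ∀ i, F i =
      Finset.image (fun p : ℕ × ℕ => ((p.1 * k - p.2 : ℕ) : ZMod (m * k)))
        ((Finset.Icc (e (i + 1)) m) ×ˢ (Finset.Icc (e i + 1) (e (i + 1))))) :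
    ∀ A : Finset (ZMod (m * k)),
      (∀ x ∈ A, x ∉ (Finset.range (j + 1)).biUnion F) → ¬ IsAP (m * k) k A := by
  intro A hAF hAP
  rw [IsAP] at hAP
  simp only [IsAPWith] at hAP
  obtain ⟨d, hcard, t, hAeq⟩ := hAP
  have hk0 : 0 < k := by omega
  have hN : 0 < m * k := Nat.mul_pos hm hk0
  haveI : NeZero (m * k) := ⟨hN.ne'⟩
  set f : ℕ → ZMod (m*k) := fun i => t + (i : ZMod (m*k)) * d with hf
  -- d ≠ 0
  have hd0 : d ≠ 0 := by
    intro h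
    have hsub : A ⊆ {t} := by
      rw [hAeq]
      intro a ha
      simp only [Finset.mem_image, Finset.mem_range] at ha
      obtain ⟨i, _, rfl⟩ := ha
      simp [hf, h]
    have := Finset.card_le_card hsub
    simp only [Finset.card_singleton, hcard] at this
    omega
  set dn := d.val with hdn
  have hdn1 : 1 ≤ dn := by
    rcases Nat.eq_zero_or_pos dn with h | h
    · exact absurd ((ZMod.val_eq_zero d).mp h) hd0
    · exact h
  have hdnN : dn < m * k := ZMod.val_lt d
  set g := Nat.gcd dn k with hg
  have hgk : g ∣ k := Nat.gcd_dvd_right dn k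
  have hgdn : g ∣ dn := Nat.gcd_dvd_left dn k
  have hg1 : 1 ≤ g := Nat.gcd_pos_of_pos_right _ hk0
  have hgle : g ≤ k := Nat.le_of_dvd hk0 hgk
  -- g is a realizable gcd
  have hgD : g ∈ {x | ∃ i, 1 ≤ i ∧ i ≤ j + 1 ∧ x = e i} := by
    rw [← hD]
    simp only [Ddiff, Set.mem_setOf_eq, IsAPWith]
    refine ⟨dn, hdn1, by omega, ⟨A, hcard, t, ?_⟩, hg⟩
    rw [show ((dn : ℕ) : ZMod (m*k)) = d by rw [hdn, ZMod.natCast_val, ZMod.cast_id]]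
    exact hAeq
  obtain ⟨i, hi1, hij, hie⟩ := hgD
  have hbez : (g : ℤ) = dn * Nat.gcdA dn k + k * Nat.gcdB dn k := by
    rw [hg]; exact Nat.gcd_eq_gcd_ab dn k
  clear_value g
  -- monotonicity of e on [0, j+1]
  have emono : ∀ a b : ℕ, a ≤ b → b ≤ j + 1 → e a ≤ e b := by
    intro a b hab hbj
    induction b with
    | zero =>
      have h0 : a = 0 := by omega
      rw [h0]
    | succ n ih =>
      rcases Nat.eq_or_lt_of_le hab with h | h
      · rw [h]
      · have h1 : e a ≤ e n := ih (by omega) (by omega)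
        have h2 : e n < e (n+1) := hmono n (by omega)
        omega
  -- α
  have htg : t.val % g < g := Nat.mod_lt _ hg1
  set α := g - t.val % g with hα
  have hα1 : 1 ≤ α := by omega
  have hαg : α ≤ g := by omega
  have hgα : g ∣ t.val + α := by
    have h1 : t.val % g + g * (t.val / g) = t.val := Nat.mod_add_div t.val g
    have h2 : g * (t.val / g + 1) = g * (t.val / g) + g := by ring
    exact ⟨t.val / g + 1, by omega⟩
  clear_value α
  -- index i0
  have hpi : α ≤ e ((i - 1) + 1) := by
    have h1 : i - 1 + 1 = i := by omega
    rw [h1, ← hie]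
    omega
  have hex : ∃ n, α ≤ e (n + 1) := ⟨i - 1, hpi⟩
  set i0 := Nat.find hex with hi0
  have hi0i : i0 ≤ i - 1 := Nat.find_min' hex hpi
  have hi0j : i0 ≤ j := by omega
  have hαE : α ≤ e (i0 + 1) := Nat.find_spec hex
  have hi0α : e i0 < α := by
    rcases Nat.eq_zero_or_pos i0 with h | h
    · rw [h, he0]; omega
    · have hmin := Nat.find_min hex (show i0 - 1 < i0 by omega)
      have h1 : i0 - 1 + 1 = i0 := by omega
      rw [h1] at hmin
      omega
  clear_value i0
  set E := e (i0 + 1) with hE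
  have hE1 : 1 ≤ E := le_trans hα1 hαE
  have hEg : E ≤ g := by rw [hie]; exact emono (i0+1) i (by omega) (by omega)
  clear_value E
  -- decompose k and dn by g
  obtain ⟨k1, hk1⟩ := hgk
  obtain ⟨d1, hd1⟩ := hgdn
  have hk11 : 1 ≤ k1 := by
    rcases Nat.eq_zero_or_pos k1 with h | h
    · rw [h, Nat.mul_zero] at hk1; omega
    · exact h
  -- Bezout: find L with k ∣ L * dn + (t.val + α)
  obtain ⟨L, hL⟩ : ∃ L : ℕ, (k:ℤ) ∣ (L * dn + (t.val + α)) := by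
    obtain ⟨s, hs⟩ := hgα
    set a := Nat.gcdA dn k with ha
    set b := Nat.gcdB dn k with hb
    set Lz : ℤ := (-(s * a)) % k with hLz
    have hLz0 : 0 ≤ Lz := Int.emod_nonneg _ (by exact_mod_cast hk0.ne')
    refine ⟨Lz.toNat, ⟨b * s - ((-(s*a))/k) * dn, ?_⟩⟩
    have htn : (Lz.toNat : ℤ) = Lz := Int.toNat_of_nonneg hLz0
    have hdef : Lz = -(s*a) - k * ((-(s*a))/k) := by
      rw [hLz, Int.emod_def]
    have hgs : (t.val : ℤ) + α = g * s := by exact_mod_cast hs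
    rw [htn, hdef, hgs, hbez]
    ring
  -- ℓ0
  set ℓ0 := L % k1 with hℓ0
  have hℓ0lt : ℓ0 < k1 := Nat.mod_lt _ hk11
  have hmd0 : ℓ0 + k1 * (L / k1) = L := Nat.mod_add_div L k1
  clear_value ℓ0
  have hkey : ∀ s' : ℕ, (k:ℤ) ∣ ((ℓ0 + s' * k1) * dn + (t.val + α) : ℤ) := by
    intro s'
    obtain ⟨c, hc⟩ := hL
    have hmd : (ℓ0 : ℤ) + k1 * (L / k1) = L := by exact_mod_cast hmd0
    have hkk : (k:ℤ) = g * k1 := by exact_mod_cast hk1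
    have hdd : (dn:ℤ) = g * d1 := by exact_mod_cast hd1
    refine ⟨c - d1 * (L / k1) + s' * d1, ?_⟩
    have hl : (ℓ0:ℤ) = L - k1 * (L/k1) := by linarith
    rw [hl, hdd, hkk]
    rw [hdd, hkk] at hc
    linear_combination hc
  -- values of f mod k
  have hval : ∀ ℓ : ℕ, (f ℓ).val % k = (t.val + ℓ * dn) % k := by
    intro ℓ
    have h1 : f ℓ = ((t.val + ℓ * dn : ℕ) : ZMod (m*k)) := by
      push_cast
      rw [ZMod.natCast_val, ZMod.cast_id, hdn, ZMod.natCast_val, ZMod.cast_id]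
    rw [h1, ZMod.val_natCast]
    exact Nat.mod_mod_of_dvd _ ⟨m, by ring⟩
  clear_value dn
  -- for each s', f (ℓ0 + s' * k1) has residue k - α mod k
  have hres : ∀ s' : ℕ, (f (ℓ0 + s' * k1)).val % k = k - α := by
    intro s'
    rw [hval]
    obtain ⟨M, hM⟩ : k ∣ ((ℓ0 + s' * k1) * dn + (t.val + α)) := by
      have h := hkey s'
      exact_mod_cast h
    rcases M with _ | M'
    · rw [Nat.mul_zero] at hM; omega
    · have h3 : k * (M' + 1) = k * M' + k := by ring
      have h2 : t.val + (ℓ0 + s' * k1) * dn = k * M' + (k - α) := by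
        omega
      rw [h2, Nat.mul_add_mod]
      exact Nat.mod_eq_of_lt (by omega)
  -- ℓ's are in range k
  have hℓlt : ∀ s' < g, ℓ0 + s' * k1 < k := by
    intro s' hs'
    have h1 : (s' + 1) * k1 ≤ g * k1 := Nat.mul_le_mul_right _ (by omega)
    have h2 : (s' + 1) * k1 = s' * k1 + k1 := by ring
    omega
  -- injectivity of f on range k
  have hinj : Set.InjOn f (Finset.range k) := by
    apply Finset.card_image_iff.mp
    rw [← hAeq, hcard, Finset.card_range]
  -- the g-element subset S
  set S := (Finset.range g).image (fun s' => f (ℓ0 + s' * k1)) with hS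
  have hSA : S ⊆ A := by
    intro a ha
    simp only [hS, Finset.mem_image, Finset.mem_range] at ha
    obtain ⟨s', hs', rfl⟩ := ha
    rw [hAeq]
    exact Finset.mem_image.mpr ⟨ℓ0 + s' * k1, Finset.mem_range.mpr (hℓlt s' hs'), rfl⟩
  have hScard : S.card = g := by
    rw [hS, Finset.card_image_of_injOn, Finset.card_range]
    intro s1 hs1 s2 hs2 hfe
    simp only [Finset.coe_range, Set.mem_Iio] at hs1 hs2
    have h1 : ℓ0 + s1 * k1 = ℓ0 + s2 * k1 := by
      apply hinj _ _ hfe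
      · simp only [Finset.coe_range, Set.mem_Iio]; exact hℓlt s1 hs1
      · simp only [Finset.coe_range, Set.mem_Iio]; exact hℓlt s2 hs2
    exact Nat.eq_of_mul_eq_mul_right hk11 (by omega)
  -- allowed set
  set allowed := (Finset.Icc 1 (E-1)).image (fun x => ((x * k - α : ℕ) : ZMod (m*k))) with hal
  have hSal : S ⊆ allowed := by
    intro a ha
    have haA : a ∈ A := hSA ha
    have hv : a.val % k = k - α := by
      simp only [hS, Finset.mem_image, Finset.mem_range] at ha
      obtain ⟨s', _, rfl⟩ := ha
      exact hres s'
    obtain ⟨q, hdm, hqm⟩ : ∃ q, a.val = k * q + (k - α) ∧ q < m := by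
      refine ⟨a.val / k, ?_, ?_⟩
      · conv_lhs => rw [← Nat.div_add_mod a.val k]
        rw [hv]
      · exact Nat.div_lt_of_lt_mul (lt_of_lt_of_eq (ZMod.val_lt a) (Nat.mul_comm m k))
    have hexp : (q + 1) * k = k * q + k := by ring
    have hvx : a.val = (q + 1) * k - α := by omega
    have hca : (((q+1) * k - α : ℕ) : ZMod (m*k)) = a := by
      rw [← hvx, ZMod.natCast_val, ZMod.cast_id]
    have hxE : q + 1 ≤ E - 1 := by
      by_contra hcon
      push_neg at hcon
      have hxE' : E ≤ q + 1 := by omega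
      have haF : a ∈ F i0 := by
        rw [hF i0, ← hE]
        refine Finset.mem_image.mpr ⟨(q+1, α), ?_, hca⟩
        rw [Finset.mem_product, Finset.mem_Icc, Finset.mem_Icc]
        exact ⟨⟨hxE', by omega⟩, by omega, hαE⟩
      exact hAF a haA (Finset.mem_biUnion.mpr ⟨i0, Finset.mem_range.mpr (by omega), haF⟩)
    exact Finset.mem_image.mpr ⟨q+1, Finset.mem_Icc.mpr ⟨by omega, hxE⟩, hca⟩
  have hcontra : g ≤ E - 1 := by
    calc g = S.card := hScard.symm
    _ ≤ allowed.card := Finset.card_le_card hSal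
    _ ≤ (Finset.Icc 1 (E-1)).card := Finset.card_image_le
    _ = E - 1 := by rw [Nat.card_Icc]; omega
  omega
end

section
/- If p ≥ 3 is prime, then (p−1)² ≤ b(p²,p) ≤ p(p−1). -/
/-- natural number casts into `ZMod N` are injective below `N` -/
lemma castInjBelow {N : ℕ} [NeZero N] {i j : ℕ} (hi : i < N) (hj : j < N)
    (h : (i : ZMod N) = (j : ZMod N)) : i = j := by
  have := congrArg ZMod.val h
  rwa [ZMod.val_cast_of_lt hi, ZMod.val_cast_of_lt hj] at this

lemma digitBound {p a b : ℕ} (ha : a < p) (hb : b < p) : a + b * p < p ^ 2 := by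
  have h1 : a + b * p < p + b * p := by omega
  have h2 : p + b * p = (b + 1) * p := by ring
  have h3 : (b + 1) * p ≤ p * p := Nat.mul_le_mul_right p (by omega)
  have : p * p = p ^ 2 := (sq p).symm
  omega

lemma digitsUnique {p a b a' b' : ℕ} (ha : a < p) (ha' : a' < p)
    (h : a + b * p = a' + b' * p) : a = a' ∧ b = b' := by
  have hp : 0 < p := by omega
  have hma : (a + b * p) % p = a := by
    rw [Nat.add_mul_mod_self_right, Nat.mod_eq_of_lt ha]
  have hma' : (a' + b' * p) % p = a' := by
    rw [Nat.add_mul_mod_self_right, Nat.mod_eq_of_lt ha']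
  have haa : a = a' := by rw [← hma, ← hma', h]
  constructor
  · exact haa
  · have : b * p = b' * p := by omega
    exact Nat.eq_of_mul_eq_mul_right hp this

theorem stmt_12 (p : ℕ) (hp : p.Prime) (hp3 : 3 ≤ p) :
    (p - 1) ^ 2 ≤ bNum (p ^ 2) p ∧ bNum (p ^ 2) p ≤ p * (p - 1) := by
  haveI : Fact p.Prime := ⟨hp⟩
  have hp0 : 0 < p := hp.pos
  have hN0 : 0 < p ^ 2 := by positivity
  haveI : NeZero (p ^ 2) := ⟨by omega⟩
  have hdvd : p ∣ p ^ 2 := dvd_pow_self p (by norm_num)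
  set f : ZMod (p ^ 2) →+* ZMod p := ZMod.castHom hdvd (ZMod p) with hf
  set S : Set ℕ := {n | ∃ B : Finset (ZMod (p ^ 2)), B.card = n ∧ ∀ A ⊆ B, ¬ IsAP (p ^ 2) p A}
    with hS
  -- S is bounded above
  have hbdd : BddAbove S := by
    refine ⟨p ^ 2, fun n hn => ?_⟩
    obtain ⟨B, hB, -⟩ := hn
    calc n = B.card := hB.symm
      _ ≤ Fintype.card (ZMod (p ^ 2)) := Finset.card_le_univ B
      _ = p ^ 2 := ZMod.card _
  -- key cast lemma
  have fcast : ∀ n : ℕ, f ((n : ZMod (p ^ 2))) = (n : ZMod p) := fun n => map_natCast f n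
  constructor
  · -- lower bound: exhibit B of size (p-1)^2 with no p-AP
    set B : Finset (ZMod (p ^ 2)) :=
      ((Finset.Ico 1 p) ×ˢ (Finset.Ico 1 p)).image
        (fun ab => ((ab.1 + ab.2 * p : ℕ) : ZMod (p ^ 2))) with hB
    have hmem : (p - 1) ^ 2 ∈ S := by
      refine ⟨B, ?_, ?_⟩
      · -- cardinality
        rw [hB, Finset.card_image_of_injOn, Finset.card_product, Nat.card_Ico]
        · ring
        · rintro ⟨a, b⟩ hab ⟨a', b'⟩ hab' h
          simp only [Finset.coe_product, Set.mem_prod, Finset.mem_coe,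
            Finset.mem_Ico] at hab hab'
          have h1 : a + b * p < p ^ 2 := digitBound hab.1.2 hab.2.2
          have h2 : a' + b' * p < p ^ 2 := digitBound hab'.1.2 hab'.2.2
          have := digitsUnique hab.1.2 hab'.1.2 (castInjBelow h1 h2 h)
          simp [this.1, this.2]
      · -- no AP subset
        rintro A hAB ⟨d, hcard, t, hA⟩
        by_cases hfd : f d = 0
        · -- constant residue case
          have hsub : A ⊆ B.filter (fun x => f x = f t) := by
            intro x hx
            rw [hA] at hx
            obtain ⟨i, hi, rfl⟩ := Finset.mem_image.mp hx
            refine Finset.mem_filter.mpr ⟨hAB (hA ▸ hx), ?_⟩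
            show f (t + (i : ZMod (p ^ 2)) * d) = f t
            rw [map_add, map_mul, hfd, mul_zero, add_zero]
          have hfilt : B.filter (fun x => f x = f t) ⊆
              (Finset.Ico 1 p).image
                (fun b => (((f t).val + b * p : ℕ) : ZMod (p ^ 2))) := by
            intro x hx
            obtain ⟨hxB, hxf⟩ := Finset.mem_filter.mp hx
            rw [hB] at hxB
            obtain ⟨⟨a, b⟩, hab, rfl⟩ := Finset.mem_image.mp hxB
            simp only [Finset.mem_product, Finset.mem_Ico] at hab
            have : (a : ZMod p) = f t := by
              rw [← hxf, fcast]
              push_cast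
              simp [ZMod.natCast_self]
            have hav : a = (f t).val := by
              rw [← this, ZMod.val_cast_of_lt hab.1.2]
            exact Finset.mem_image.mpr ⟨b, Finset.mem_Ico.mpr hab.2, by rw [← hav]⟩
          have hle : A.card ≤ p - 1 := by
            calc A.card ≤ (B.filter (fun x => f x = f t)).card := Finset.card_le_card hsub
              _ ≤ ((Finset.Ico 1 p).image
                    (fun b => (((f t).val + b * p : ℕ) : ZMod (p ^ 2)))).card :=
                  Finset.card_le_card hfilt
              _ ≤ (Finset.Ico 1 p).card := Finset.card_image_le
              _ = p - 1 := Nat.card_Ico 1 p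
          omega
        · -- unit difference case: AP hits residue 0
          set i : ℕ := ((- f t) * (f d)⁻¹).val with hi
          have hilt : i < p := ZMod.val_lt _
          have hx : t + (i : ZMod (p ^ 2)) * d ∈ A := by
            rw [hA]
            exact Finset.mem_image.mpr ⟨i, Finset.mem_range.mpr hilt, rfl⟩
          have hfx : f (t + (i : ZMod (p ^ 2)) * d) = 0 := by
            have hcast : ((i : ℕ) : ZMod p) = (- f t) * (f d)⁻¹ :=
              ZMod.natCast_rightInverse _
            rw [map_add, map_mul, fcast, hcast]
            field_simp
            ring
          have hxB := hAB hx
          rw [hB] at hxB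
          obtain ⟨⟨a, b⟩, hab, heq⟩ := Finset.mem_image.mp hxB
          simp only [Finset.mem_product, Finset.mem_Ico] at hab
          have : (a : ZMod p) = 0 := by
            have := congrArg f heq
            rw [fcast] at this
            push_cast at this
            rw [ZMod.natCast_self] at this
            simpa [hfx] using this
          rw [ZMod.natCast_eq_zero_iff] at this
          have := Nat.le_of_dvd (by omega) this
          omega
    calc (p - 1) ^ 2 ≤ sSup S := le_csSup hbdd hmem
      _ = bNum (p ^ 2) p := rfl
  · -- upper bound
    have hne : S.Nonempty := by
      refine ⟨0, ∅, Finset.card_empty, ?_⟩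
      intro A hA hAP
      obtain ⟨d, hcard, -⟩ := hAP
      rw [Finset.subset_empty] at hA
      rw [hA, Finset.card_empty] at hcard
      omega
    refine csSup_le hne ?_
    rintro n ⟨B, hBcard, hnoAP⟩
    by_contra hlt
    push_neg at hlt
    -- complement is small
    have hcompl : Bᶜ.card < p := by
      have := Finset.card_compl B
      rw [hBcard] at this
      have hcard_univ : Fintype.card (ZMod (p ^ 2)) = p ^ 2 := ZMod.card _
      have hpp : p * (p - 1) = p ^ 2 - p := by
        obtain ⟨q, rfl⟩ : ∃ q, p = q + 1 := ⟨p - 1, by omega⟩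
        have h1 : (q + 1) * (q + 1 - 1) = (q + 1) * q := by norm_num
        rw [h1, eq_comm]
        exact Nat.sub_eq_of_eq_add (by ring)
      omega
    -- find a residue not hit by the complement
    have : ∃ a : ZMod p, a ∉ Bᶜ.image f := by
      by_contra hall
      push_neg at hall
      have : (Finset.univ : Finset (ZMod p)) ⊆ Bᶜ.image f := fun a _ => hall a
      have h1 : p ≤ (Bᶜ.image f).card := by
        have := Finset.card_le_card this
        rwa [Finset.card_univ, ZMod.card] at this
      have h2 : (Bᶜ.image f).card ≤ Bᶜ.card := Finset.card_image_le
      omega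
    obtain ⟨a, ha⟩ := this
    -- the full fiber over a is contained in B and is a p-AP
    set A : Finset (ZMod (p ^ 2)) :=
      (Finset.range p).image (fun i => ((a.val + i * p : ℕ) : ZMod (p ^ 2))) with hA
    have hAsub : A ⊆ B := by
      intro x hx
      obtain ⟨i, hi, rfl⟩ := Finset.mem_image.mp hx
      by_contra hxB
      have hxc : ((a.val + i * p : ℕ) : ZMod (p ^ 2)) ∈ Bᶜ := Finset.mem_compl.mpr hxB
      have : f ((a.val + i * p : ℕ) : ZMod (p ^ 2)) = a := by
        rw [fcast]
        push_cast
        simp [ZMod.natCast_self, ZMod.natCast_rightInverse a]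
      exact ha (Finset.mem_image.mpr ⟨_, hxc, this⟩)
    refine hnoAP A hAsub ⟨(p : ZMod (p ^ 2)), ?_, (a.val : ZMod (p ^ 2)), ?_⟩
    · -- card = p
      rw [hA, Finset.card_image_of_injOn, Finset.card_range]
      intro i hi j hj h
      simp only [Finset.coe_range, Set.mem_Iio] at hi hj
      have hav : a.val < p := ZMod.val_lt a
      have h1 : a.val + i * p < p ^ 2 := digitBound hav hi
      have h2 : a.val + j * p < p ^ 2 := digitBound hav hj
      exact (digitsUnique hav hav (castInjBelow h1 h2 h)).2
    · rw [hA]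
      apply Finset.image_congr
      intro i hi
      push_cast
      ring
end

section
/- Let k ≥ 3 and take m = k. Write D(k²,k) = {d_0 < d_1 < ⋯ < d_j}, set d_{-1} := 0, define F_i := ⋃_{α = d_{i−1}+1}^{d_i} {d_i·k − α, (d_i+1)·k − α, …, k·k − α} ⊆ Z_{k²} for each i ∈ {0,…,j}, and let F := ⋃_{i=0}^{j} F_i. List the elements of F in increasing order of their representatives in {0,1,…,k²−1} as f_1 < f_2 < ⋯ < f_{|F|}, and define F' := {f_l : ⌈l/⌊k/2⌋⌉ is odd} and F'' := {f_l : ⌈l/⌊k/2⌋⌉ is even}. Then neither F' nor F'' contains all of the elements k−1, 2k−1, …, k²−1 of Z_{k²}. -/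
private lemma auxP1 (k q p1 p2 v : ℕ) (h2 : p1 ≤ k) (h3 : 1 ≤ p2) (h4 : p2 ≤ p1)
    (hv : v + p2 = p1 * k) (hl : q * k ≤ v) (hu : v + 1 ≤ q * k + k) (hq : q + 2 ≤ k) :
    p1 = q + 1 := by
  rcases lt_trichotomy p1 (q + 1) with h | h | h
  · have h5 : p1 * k ≤ q * k := Nat.mul_le_mul (by omega) (le_refl k)
    omega
  · exact h
  · exfalso
    have h5 : (q + 2) * k ≤ p1 * k := Nat.mul_le_mul (by omega) (le_refl k)
    have h6 : (q + 2) * k = q * k + 2 * k := by ring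
    omega

private lemma auxDiv (k d : ℕ) (hd : d ∣ k) (h1 : 1 ≤ d) (h2 : d < k) : d ≤ k / 2 := by
  obtain ⟨t, ht⟩ := hd
  have ht0 : t ≠ 0 := by rintro rfl; simp at ht; omega
  have ht1 : t ≠ 1 := by rintro rfl; simp at ht; omega
  have h3 : d * 2 ≤ d * t := Nat.mul_le_mul (le_refl d) (by omega)
  omega

theorem stmt_14 (k : ℕ) (hk : 3 ≤ k) (j : ℕ) (e : ℕ → ℕ)
    (he0 : e 0 = 0)
    (hmono : ∀ i ≤ j, e i < e (i + 1))
    (hD : Ddiff (k * k) k = {x | ∃ i, 1 ≤ i ∧ i ≤ j + 1 ∧ x = e i})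
    (F : ℕ → Finset (ZMod (k * k)))
    (hF : ∀ i, F i =
      Finset.image (fun p : ℕ × ℕ => ((p.1 * k - p.2 : ℕ) : ZMod (k * k)))
        ((Finset.Icc (e (i + 1)) k) ×ˢ (Finset.Icc (e i + 1) (e (i + 1)))))
    (f : ℕ → ZMod (k * k))
    -- f lists the elements of F = ⋃ᵢ Fᵢ in increasing order of representatives:
    -- f 1, f 2, …, f |F|
    (hfsurj : ∀ x ∈ (Finset.range (j + 1)).biUnion F,
      ∃ l, 1 ≤ l ∧ l ≤ ((Finset.range (j + 1)).biUnion F).card ∧ f l = x)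
    (hfmem : ∀ l, 1 ≤ l → l ≤ ((Finset.range (j + 1)).biUnion F).card →
      f l ∈ (Finset.range (j + 1)).biUnion F)
    (hfmono : ∀ l₁ l₂, 1 ≤ l₁ → l₁ < l₂ → l₂ ≤ ((Finset.range (j + 1)).biUnion F).card →
      (f l₁).val < (f l₂).val) :
    -- F' = {f l : ⌈l/⌊k/2⌋⌉ odd} does not contain all of k-1, 2k-1, …, k²-1,
    -- and neither does F'' = {f l : ⌈l/⌊k/2⌋⌉ even}.
    (¬ ∀ q, 1 ≤ q → q ≤ k →
        ∃ l, 1 ≤ l ∧ l ≤ ((Finset.range (j + 1)).biUnion F).card ∧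
          Odd ((l + k / 2 - 1) / (k / 2)) ∧ f l = ((q * k - 1 : ℕ) : ZMod (k * k))) ∧
      (¬ ∀ q, 1 ≤ q → q ≤ k →
        ∃ l, 1 ≤ l ∧ l ≤ ((Finset.range (j + 1)).biUnion F).card ∧
          Even ((l + k / 2 - 1) / (k / 2)) ∧ f l = ((q * k - 1 : ℕ) : ZMod (k * k))) := by
  have hkk9 : 9 ≤ k * k := by nlinarith
  have hkk : k ≤ k * k := Nat.le_mul_of_pos_left k (by omega)
  haveI : NeZero (k * k) := ⟨by omega⟩
  set c := ((Finset.range (j + 1)).biUnion F).card with hc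
  set m := k / 2 with hm
  have hm1 : 1 ≤ m := by omega
  -- e is monotone
  have emono : ∀ b, b ≤ j + 1 → ∀ a, a ≤ b → e a ≤ e b := by
    intro b
    induction b with
    | zero => intro _ a ha; have : a = 0 := by omega
              rw [this]
    | succ n ih =>
      intro hb a ha
      rcases Nat.eq_or_lt_of_le ha with h | h
      · rw [h]
      · exact le_trans (ih (by omega) a (by omega)) (le_of_lt (hmono n (by omega)))
  -- 1 ∈ D(k², k), hence e 1 = 1
  have h1D : (1 : ℕ) ∈ Ddiff (k * k) k := by
    refine ⟨1, le_refl 1, by omega, ⟨(Finset.range k).image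
      (fun i : ℕ => (0 : ZMod (k * k)) + (i : ZMod (k * k)) * ((1 : ℕ) : ZMod (k * k))),
      ?_, 0, rfl⟩, (Nat.gcd_one_left k).symm⟩
    rw [Finset.card_image_of_injOn, Finset.card_range]
    intro a ha b hb hab
    simp only [Finset.coe_range, Set.mem_Iio] at ha hb
    simp only [Nat.cast_one, mul_one, zero_add] at hab
    have := congrArg ZMod.val hab
    rwa [ZMod.val_natCast_of_lt (by omega), ZMod.val_natCast_of_lt (by omega)] at this
  have he1 : e 1 = 1 := by
    rw [hD] at h1D
    obtain ⟨i', hi'1, hi'2, hei'⟩ := h1D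
    have h1 : e 1 ≤ e i' := emono i' hi'2 1 hi'1
    have h2 : 0 < e 1 := by
      have h := hmono 0 (by omega)
      simpa [he0] using h
    omega
  have hval : ∀ n : ℕ, n < k * k → ((n : ZMod (k * k))).val = n :=
    fun n hn => ZMod.val_natCast_of_lt hn
  have hvalq : ∀ q : ℕ, q ≤ k → ((q * k - 1 : ℕ) : ZMod (k * k)).val = q * k - 1 := by
    intro q hq
    have h := Nat.mul_le_mul hq (le_refl k)
    exact hval _ (by omega)
  -- decomposition of elements of the union
  have hdec : ∀ x ∈ (Finset.range (j + 1)).biUnion F,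
      ∃ i p1 p2 : ℕ, i ≤ j ∧ e (i + 1) ≤ p1 ∧ p1 ≤ k ∧ 1 ≤ p2 ∧ p2 ≤ e (i + 1) ∧
        e (i + 1) ∣ k ∧ x.val + p2 = p1 * k := by
    intro x hx
    rw [Finset.mem_biUnion] at hx
    obtain ⟨i, hi, hxi⟩ := hx
    rw [Finset.mem_range] at hi
    rw [hF i, Finset.mem_image] at hxi
    obtain ⟨⟨p1, p2⟩, hp, hpx⟩ := hxi
    rw [Finset.mem_product, Finset.mem_Icc, Finset.mem_Icc] at hp
    obtain ⟨⟨h1, h2⟩, h3, h4⟩ := hp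
    have hdvd : e (i + 1) ∣ k := by
      have hmemD : e (i + 1) ∈ Ddiff (k * k) k := by
        rw [hD]; exact ⟨i + 1, by omega, by omega, rfl⟩
      obtain ⟨d, _, _, _, hg⟩ := hmemD
      exact hg ▸ Nat.gcd_dvd_right d k
    have hp2 : 1 ≤ p2 := by omega
    have hp21 : p2 ≤ p1 := le_trans h4 h1
    have hmul : p1 * k ≤ k * k := Nat.mul_le_mul h2 (le_refl k)
    have hpk : p1 * 1 ≤ p1 * k := Nat.mul_le_mul (le_refl p1) (by omega)
    have hpx' : ((p1 * k - p2 : ℕ) : ZMod (k * k)) = x := hpx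
    have hvx : x.val = p1 * k - p2 := by
      rw [← hpx']; exact hval _ (by omega)
    exact ⟨i, p1, p2, by omega, h1, h2, hp2, h4, hdvd, by omega⟩
  -- all elements of the union have val ≥ k - 1
  have hvalmin : ∀ x ∈ (Finset.range (j + 1)).biUnion F, k - 1 ≤ x.val := by
    intro x hx
    obtain ⟨i, p1, p2, _, h1, h2, hp2, h4, _, hveq⟩ := hdec x hx
    have hp21 : p2 ≤ p1 := le_trans h4 h1
    rcases Nat.lt_or_ge p1 2 with h | h
    · have hp11 : p1 = 1 := by omega
      rw [hp11, one_mul] at hveq; omega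
    · have := Nat.add_le_mul h (show 2 ≤ k by omega)
      omega
  -- membership of the targets q*k - 1
  have hmemq : ∀ q : ℕ, 1 ≤ q → q ≤ k →
      ((q * k - 1 : ℕ) : ZMod (k * k)) ∈ (Finset.range (j + 1)).biUnion F := by
    intro q h1 h2
    rw [Finset.mem_biUnion]
    refine ⟨0, Finset.mem_range.mpr (by omega), ?_⟩
    rw [hF 0, Finset.mem_image]
    refine ⟨(q, 1), ?_, rfl⟩
    rw [Finset.mem_product, Finset.mem_Icc, Finset.mem_Icc]
    simp only [show (0 : ℕ) + 1 = 1 from rfl]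
    omega
  -- positions of the targets
  have hLex : ∀ q : ℕ, ∃ lq : ℕ, 1 ≤ q → q ≤ k →
      1 ≤ lq ∧ lq ≤ c ∧ f lq = ((q * k - 1 : ℕ) : ZMod (k * k)) := by
    intro q
    by_cases h : 1 ≤ q ∧ q ≤ k
    · obtain ⟨l, hl⟩ := hfsurj _ (hmemq q h.1 h.2)
      exact ⟨l, fun _ _ => hl⟩
    · exact ⟨1, fun h1 h2 => absurd ⟨h1, h2⟩ h⟩
  choose L hL using hLex
  have huniq : ∀ l l' : ℕ, 1 ≤ l → l ≤ c → 1 ≤ l' → l' ≤ c → f l = f l' → l = l' := by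
    intro l l' h1 h2 h3 h4 hf'
    rcases lt_trichotomy l l' with h | h | h
    · exact absurd (congrArg ZMod.val hf') (Nat.ne_of_lt (hfmono l l' h1 h h4))
    · exact h
    · exact absurd (congrArg ZMod.val hf'.symm) (Nat.ne_of_lt (hfmono l' l h3 h h2))
  have hLlt : ∀ q q' : ℕ, 1 ≤ q → q < q' → q' ≤ k → L q < L q' := by
    intro q q' h1 h2 h3
    obtain ⟨ha1, ha2, ha3⟩ := hL q h1 (by omega)
    obtain ⟨hb1, hb2, hb3⟩ := hL q' (by omega) h3
    have hv1 : (f (L q)).val = q * k - 1 := by rw [ha3]; exact hvalq q (by omega)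
    have hv2 : (f (L q')).val = q' * k - 1 := by rw [hb3]; exact hvalq q' h3
    have hqq : q * k < q' * k := by
      exact Nat.mul_lt_mul_of_pos_right h2 (by omega)
    have hqk : 1 * k ≤ q * k := Nat.mul_le_mul h1 (le_refl k)
    by_contra hcon
    push_neg at hcon
    rcases Nat.eq_or_lt_of_le hcon with h | h
    · rw [h] at hv2
      omega
    · have := hfmono (L q') (L q) hb1 h ha2
      omega
  have hLq : ∀ q : ℕ, 1 ≤ q → q ≤ k → q ≤ L q := by
    intro q
    induction q with
    | zero => intro h _; omega
    | succ n ih =>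
      intro _ h2
      rcases Nat.eq_zero_or_pos n with h | h
      · subst h
        simpa using (hL 1 (by omega) (by omega)).1
      · have h3 := ih (by omega) (by omega)
        have h4 := hLlt n (n + 1) h (by omega) h2
        omega
  have hL1 : L 1 = 1 := by
    obtain ⟨h1, h2, h3⟩ := hL 1 (by omega) (by omega)
    by_contra hcon
    have hlt : 1 < L 1 := by omega
    have h4 := hfmono 1 (L 1) (by omega) hlt h2
    have h5 : (f (L 1)).val = 1 * k - 1 := by rw [h3]; exact hvalq 1 (by omega)
    have h6 := hvalmin (f 1) (hfmem 1 (by omega) (by omega))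
    omega
  -- jump bound
  have hjump : ∀ q : ℕ, 1 ≤ q → q + 2 ≤ k → L (q + 1) ≤ L q + m := by
    intro q h1 h2
    obtain ⟨ha1, ha2, ha3⟩ := hL q h1 (by omega)
    obtain ⟨hb1, hb2, hb3⟩ := hL (q + 1) (by omega) (by omega)
    have hab : L q < L (q + 1) := hLlt q (q + 1) h1 (by omega) (by omega)
    have hva : (f (L q)).val = q * k - 1 := by rw [ha3]; exact hvalq q (by omega)
    have hvb : (f (L (q + 1))).val = (q + 1) * k - 1 := by
      rw [hb3]; exact hvalq (q + 1) (by omega)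
    have hqk : 1 * k ≤ q * k := Nat.mul_le_mul h1 (le_refl k)
    have hq1k : (q + 1) * k = q * k + k := by ring
    have hbound : ∀ t, L q < t → t ≤ L (q + 1) →
        1 ≤ t ∧ t ≤ c ∧ q * k ≤ (f t).val ∧ (f t).val + 1 ≤ q * k + k := by
      intro t htl htr
      have ht1 : 1 ≤ t := by omega
      have htc : t ≤ c := le_trans htr hb2
      have hlow : q * k - 1 < (f t).val := by
        have := hfmono (L q) t ha1 htl htc
        omega
      have hhigh : (f t).val ≤ (q + 1) * k - 1 := by
        rcases Nat.eq_or_lt_of_le htr with h | h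
        · rw [h]; omega
        · have := hfmono t (L (q + 1)) ht1 h hb2
          omega
      exact ⟨ht1, htc, by omega, by omega⟩
    have hcard : (Finset.Ioc (L q) (L (q + 1))).card ≤ (Finset.Icc 1 m).card := by
      apply Finset.card_le_card_of_injOn (fun t => (q + 1) * k - (f t).val)
      · intro t ht
        rw [Finset.mem_coe, Finset.mem_Ioc] at ht
        obtain ⟨ht1, htc, hlo, hhi⟩ := hbound t ht.1 ht.2
        obtain ⟨i, p1, p2, hij, hh1, hh2, hh3, hh4, hdvd, hveq⟩ :=
          hdec (f t) (hfmem t ht1 htc)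
        have hp1 : p1 = q + 1 :=
          auxP1 k q p1 p2 (f t).val hh2 hh3 (le_trans hh4 hh1) hveq hlo hhi h2
        have hgt : (q + 1) * k - (f t).val = p2 := by
          rw [← hp1]; omega
        simp only [Finset.mem_coe, Finset.mem_Icc, hgt]
        refine ⟨hh3, ?_⟩
        have he1p : 1 ≤ e (i + 1) := by omega
        have helt : e (i + 1) < k := by omega
        exact le_trans hh4 (auxDiv k (e (i + 1)) hdvd he1p helt)
      · intro t ht t' ht' hgg
        simp only [Finset.coe_Ioc, Set.mem_Ioc] at ht ht'
        obtain ⟨ht1, htc, hlo, hhi⟩ := hbound t ht.1 ht.2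
        obtain ⟨ht1', htc', hlo', hhi'⟩ := hbound t' ht'.1 ht'.2
        simp only [hq1k] at hgg
        have hveq : (f t).val = (f t').val := by omega
        rcases lt_trichotomy t t' with h | h | h
        · have := hfmono t t' ht1 h htc'
          omega
        · exact h
        · have := hfmono t' t ht1' h htc
          omega
    rw [Nat.card_Ioc, Nat.card_Icc] at hcard
    omega
  -- the first q whose position exceeds m
  set S : Set ℕ := {q : ℕ | 1 ≤ q ∧ q ≤ k ∧ m < L q} with hS
  have hQne : (m + 1) ∈ S := by
    refine ⟨by omega, by omega, ?_⟩
    have := hLq (m + 1) (by omega) (by omega)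
    omega
  set Q := sInf S with hQdef
  have hQmem : Q ∈ S := Nat.sInf_mem ⟨m + 1, hQne⟩
  obtain ⟨hQ1, hQk, hQL⟩ := hQmem
  have hQle : Q ≤ m + 1 := Nat.sInf_le hQne
  have hQ2 : 2 ≤ Q := by
    by_contra h
    have hQ1' : Q = 1 := by omega
    rw [hQ1', hL1] at hQL
    omega
  have hQprev : L (Q - 1) ≤ m := by
    have hnm : Q - 1 ∉ S := Nat.notMem_of_lt_sInf (hQdef ▸ (show Q - 1 < Q by omega))
    by_contra hcc
    exact hnm ⟨by omega, by omega, by omega⟩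
  have hQjump : L Q ≤ L (Q - 1) + m := by
    have hj := hjump (Q - 1) (by omega) (by omega)
    have hQQ : Q - 1 + 1 = Q := by omega
    rwa [hQQ] at hj
  have hblock2 : (L Q + m - 1) / m = 2 :=
    Nat.div_eq_of_lt_le (by omega) (by omega)
  constructor
  · intro hall
    obtain ⟨l, hl1, hlc, hodd, hfl⟩ := hall Q hQ1 hQk
    obtain ⟨hq1, hq2, hq3⟩ := hL Q hQ1 hQk
    have hlL : l = L Q := huniq l (L Q) hl1 hlc hq1 hq2 (by rw [hfl, hq3])
    rw [hlL, hblock2] at hodd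
    rw [Nat.odd_iff] at hodd
    omega
  · intro hall
    obtain ⟨l, hl1, hlc, heven, hfl⟩ := hall 1 (by omega) (by omega)
    obtain ⟨hq1, hq2, hq3⟩ := hL 1 (by omega) (by omega)
    have hlL : l = L 1 := huniq l (L 1) hl1 hlc hq1 hq2 (by rw [hfl, hq3])
    have hb1 : (1 + m - 1) / m = 1 := by
      have h0 : 1 + m - 1 = m := by omega
      rw [h0, Nat.div_self (by omega)]
    rw [hlL, hL1, hb1] at heven
    rw [Nat.even_iff] at heven
    omega
end

section
/- Let k ≥ 3 be an integer. Then 2 ≤ χ(k²,k) ≤ 3. -/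
open Finset in
set_option maxHeartbeats 1000000 in
lemma exists_good_ge4 (k : ℕ) (hk : 4 ≤ k) :
    ∃ c : ZMod (k^2) → Fin 3, ∀ (t d : ZMod (k^2)),
      ((Finset.range k).image (fun i : ℕ => t + (i : ZMod (k^2)) * d)).card = k →
      ∃ x ∈ (Finset.range k).image (fun i : ℕ => t + (i : ZMod (k^2)) * d),
        ∃ y ∈ (Finset.range k).image (fun i : ℕ => t + (i : ZMod (k^2)) * d),
          c x ≠ c y := by
  classical
  have hk0 : 0 < k := by omega
  have hkk : k < k^2 := by nlinarith
  have h2k : 2*k < k^2 := by nlinarith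
  haveI : NeZero k := ⟨by omega⟩
  haveI : Fact (1 < k^2) := ⟨by nlinarith⟩
  haveI : NeZero (k^2) := ⟨by positivity⟩
  set N := k^2 with hN
  let π : ZMod N →+* ZMod k := ZMod.castHom (dvd_pow_self k two_ne_zero) (ZMod k)
  let f : ℕ → ZMod N := fun a => if a = 0 then ((2*k : ℕ) : ZMod N) else (a : ZMod N)
  let S : Finset (ZMod N) := (Finset.range k).image f
  let c : ZMod N → Fin 3 := fun x => if x ∈ S then 2 else if (π x).val < k/2 then 0 else 1
  have hπnat : ∀ a : ℕ, π (a : ZMod N) = (a : ZMod k) := fun a => map_natCast π a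
  have hvalid : ∀ y : ZMod N, ((y.val : ℕ) : ZMod N) = y := fun y => by
    rw [ZMod.natCast_val, ZMod.cast_id]
  have hvalidk : ∀ y : ZMod k, ((y.val : ℕ) : ZMod k) = y := fun y => by
    rw [ZMod.natCast_val, ZMod.cast_id]
  have hπf : ∀ a : ℕ, a < k → π (f a) = (a : ZMod k) := by
    intro a ha
    by_cases h : a = 0
    · simp [f, h, hπnat]
    · simp [f, h, hπnat]
  have hfinj : ∀ a ∈ Finset.range k, ∀ b ∈ Finset.range k, f a = f b → a = b := by
    intro a ha b hb hab
    simp only [mem_range] at ha hb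
    have hva : ∀ x : ℕ, x < k → ((x : ZMod N)).val = x := fun x hx =>
      ZMod.val_cast_of_lt (by omega)
    simp only [f] at hab
    by_cases h0a : a = 0 <;> by_cases h0b : b = 0
    · omega
    · exfalso
      rw [if_pos h0a, if_neg h0b] at hab
      have := congrArg ZMod.val hab
      rw [ZMod.val_cast_of_lt h2k, ZMod.val_cast_of_lt (by omega : b < N)] at this
      omega
    · exfalso
      rw [if_neg h0a, if_pos h0b] at hab
      have := congrArg ZMod.val hab
      rw [ZMod.val_cast_of_lt (by omega : a < N), ZMod.val_cast_of_lt h2k] at this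
      omega
    · rw [if_neg h0a, if_neg h0b] at hab
      have := congrArg ZMod.val hab
      rwa [ZMod.val_cast_of_lt (by omega : a < N), ZMod.val_cast_of_lt (by omega : b < N)] at this
  have hScard : S.card = k := by
    rw [Finset.card_image_of_injOn hfinj, Finset.card_range]
  have hfS : ∀ a : ℕ, a < k → f a ∈ S := fun a ha =>
    Finset.mem_image_of_mem f (Finset.mem_range.mpr ha)
  refine ⟨c, ?_⟩
  intro t d hcard
  set A := (Finset.range k).image (fun i : ℕ => t + (i : ZMod N) * d) with hA
  by_cases hkd : π d = 0
  · -- Case 1 : k ∣ d, A is a full fiber of π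
    have hπA : ∀ x ∈ A, π x = π t := by
      intro x hx
      rw [hA, Finset.mem_image] at hx
      obtain ⟨i, _, rfl⟩ := hx
      simp [map_add, map_mul, hπnat, hkd]
    -- the fiber equals the image of b ↦ t + b*k
    let u : ℕ → ZMod N := fun b => t + ((b*k : ℕ) : ZMod N)
    have hu_inj : ∀ a ∈ Finset.range k, ∀ b ∈ Finset.range k, u a = u b → a = b := by
      intro a ha b hb hab
      simp only [mem_range] at ha hb
      have : ((a*k : ℕ) : ZMod N) = ((b*k : ℕ) : ZMod N) := by
        have := hab
        simpa [u, add_right_cancel_iff] using this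
      have := congrArg ZMod.val this
      have hak : a*k < N := by rw [hN, pow_two]; exact (Nat.mul_lt_mul_right hk0).mpr ha
      have hbk : b*k < N := by rw [hN, pow_two]; exact (Nat.mul_lt_mul_right hk0).mpr hb
      rw [ZMod.val_cast_of_lt hak, ZMod.val_cast_of_lt hbk] at this
      exact Nat.eq_of_mul_eq_mul_right hk0 this
    let Fib : Finset (ZMod N) := Finset.univ.filter (fun x => π x = π t)
    have hult : ∀ b ∈ Finset.range k, u b ∈ Fib := by
      intro b _
      simp only [Fib, Finset.mem_filter, Finset.mem_univ, true_and, u]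
      rw [map_add, hπnat]
      have : ((b*k : ℕ) : ZMod k) = 0 := by
        simp [Nat.cast_mul, ZMod.natCast_self]
      rw [this, add_zero]
    have hfib_sub : Fib ⊆ (Finset.range k).image u := by
      intro x hx
      simp only [Fib, Finset.mem_filter, Finset.mem_univ, true_and] at hx
      have hx0 : π (x - t) = 0 := by rw [map_sub, hx, sub_self]
      have hdvd : k ∣ (x - t).val := by
        have : (((x - t).val : ℕ) : ZMod k) = 0 := by
          rw [← hπnat]
          rw [hvalid (x - t)]
          exact hx0
        exact (ZMod.natCast_eq_zero_iff _ _).mp this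
      obtain ⟨q, hq⟩ := hdvd
      have hqlt : q < k := by
        have hlt := ZMod.val_lt (x - t)
        rw [hq, hN, pow_two] at hlt
        exact Nat.lt_of_mul_lt_mul_left hlt
      refine Finset.mem_image.mpr ⟨q, Finset.mem_range.mpr hqlt, ?_⟩
      have : x - t = ((q * k : ℕ) : ZMod N) := by
        rw [← hvalid (x - t), hq]; ring_nf
      simp only [u]
      rw [← this]; ring
    have hfibcard : Fib.card = k := by
      have h1 : ((Finset.range k).image u).card = k := by
        rw [Finset.card_image_of_injOn hu_inj, Finset.card_range]
      have h2 : (Finset.range k).image u ⊆ Fib := by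
        intro x hx
        obtain ⟨b, hb, rfl⟩ := Finset.mem_image.mp hx
        exact hult b hb
      have heq : Fib = (Finset.range k).image u := Finset.Subset.antisymm hfib_sub h2
      rw [heq, h1]
    have hAfib : A = Fib := by
      apply Finset.eq_of_subset_of_card_le
      · intro x hx
        simp only [Fib, Finset.mem_filter, Finset.mem_univ, true_and]
        exact hπA x hx
      · rw [hfibcard, hcard]
    -- s := f ((π t).val) is the unique element of S in A
    set s : ZMod N := f ((π t).val) with hs
    have hπs : π s = π t := by
      rw [hs, hπf _ (ZMod.val_lt (π t)), hvalidk]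
    have hsA : s ∈ A := by
      rw [hAfib]
      simp only [Fib, Finset.mem_filter, Finset.mem_univ, true_and]
      exact hπs
    have hsS : s ∈ S := hfS _ (ZMod.val_lt (π t))
    obtain ⟨y, hyA, hys⟩ := Finset.exists_mem_ne (by rw [hcard]; omega) s
    have hyS : y ∉ S := by
      intro hyS
      obtain ⟨a, hak, hay⟩ := Finset.mem_image.mp hyS
      rw [Finset.mem_range] at hak
      have hπy : π y = π t := hπA y hyA
      have : (a : ZMod k) = π t := by rw [← hπf a hak, hay, hπy]
      have hav : a = (π t).val := by
        have := congrArg ZMod.val this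
        rwa [ZMod.val_cast_of_lt hak] at this
      exact hys (by rw [← hay, hav])
    refine ⟨s, hsA, y, hyA, ?_⟩
    have hcs : c s = 2 := by simp [c, hsS]
    have hcy : c y = 0 ∨ c y = 1 := by
      simp only [c, if_neg hyS]
      split_ifs
      · exact Or.inl rfl
      · exact Or.inr rfl
    rw [hcs]
    rcases hcy with h | h <;> rw [h] <;> decide
  · -- Case 2 : k ∤ d
    set h : ℕ := (π d).val with hh_def
    set t0 : ℕ := (π t).val with ht0_def
    set g : ℕ := Nat.gcd h k with hg_def
    have hh0 : 0 < h := Nat.pos_of_ne_zero (fun h0 => hkd ((ZMod.val_eq_zero _).mp h0))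
    have hhk : h < k := ZMod.val_lt (π d)
    have hg0 : 0 < g := Nat.gcd_pos_of_pos_left _ hh0
    have hgk : g ∣ k := Nat.gcd_dvd_right h k
    have hgh : g ≤ h := Nat.le_of_dvd hh0 (Nat.gcd_dvd_left h k)
    have hg2 : 2*g ≤ k := by
      obtain ⟨m, hm⟩ := hgk
      have hm2 : 2 ≤ m := by
        rcases Nat.lt_or_ge m 2 with h' | h'
        · interval_cases m <;> omega
        · exact h'
      nlinarith
    have hπdh : (h : ZMod k) = π d := hvalidk (π d)
    have hπtt : (t0 : ZMod k) = π t := hvalidk (π t)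
    -- solving j * (π d) = g * w
    have hsolve : ∀ w : ZMod k, ∃ j : ℕ, j < k ∧ (j : ZMod k) * (π d) = (g : ZMod k) * w := by
      intro w
      have hbez : (g : ℤ) = h * Nat.gcdA h k + k * Nat.gcdB h k := Nat.gcd_eq_gcd_ab h k
      have hgz : (g : ZMod k) = (h : ZMod k) * ((Nat.gcdA h k : ℤ) : ZMod k) := by
        have := congrArg (fun z : ℤ => (z : ZMod k)) hbez
        push_cast at this
        simpa [ZMod.natCast_self] using this
      refine ⟨(((Nat.gcdA h k : ℤ) : ZMod k) * w).val, ZMod.val_lt _, ?_⟩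
      rw [hvalidk, ← hπdh, hgz]
      ring
    set c1 : ℕ := t0 % g with hc1
    set q : ℕ := t0 / g with hq
    have hdm : g * q + c1 = t0 := Nat.div_add_mod t0 g
    have hc1g : c1 < g := Nat.mod_lt _ hg0
    have e1 : (c1 : ZMod k) = π t + (g : ZMod k) * (-(q : ZMod k)) := by
      have : ((g * q + c1 : ℕ) : ZMod k) = (t0 : ZMod k) := by rw [hdm]
      push_cast at this
      rw [hπtt] at this
      linear_combination this
    have e2 : ((c1 + (k - g) : ℕ) : ZMod k) = π t + (g : ZMod k) * (-(q : ZMod k) - 1) := by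
      have hkg : ((k - g : ℕ) : ZMod k) = - (g : ZMod k) := by
        have : ((k - g : ℕ) : ZMod k) = (k : ZMod k) - (g : ZMod k) :=
          Nat.cast_sub (le_of_lt (lt_of_le_of_lt (le_of_eq rfl) (lt_of_le_of_lt hgh hhk)))
        rw [this, ZMod.natCast_self, zero_sub]
      push_cast [hkg]
      rw [e1]
      ring
    obtain ⟨j1, hj1k, hj1⟩ := hsolve (-(q : ZMod k))
    obtain ⟨j2, hj2k, hj2⟩ := hsolve (-(q : ZMod k) - 1)
    set x1 : ZMod N := t + (j1 : ZMod N) * d with hx1def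
    set x2 : ZMod N := t + (j2 : ZMod N) * d with hx2def
    have hx1A : x1 ∈ A := by
      rw [hA]; exact Finset.mem_image_of_mem _ (Finset.mem_range.mpr hj1k)
    have hx2A : x2 ∈ A := by
      rw [hA]; exact Finset.mem_image_of_mem _ (Finset.mem_range.mpr hj2k)
    have hπx1 : (π x1).val = c1 := by
      have : π x1 = (c1 : ZMod k) := by
        rw [hx1def, map_add, map_mul, hπnat, hj1, e1]
      rw [this]
      exact ZMod.val_cast_of_lt (by omega : c1 < k)
    have hπx2 : (π x2).val = c1 + (k - g) := by
      have : π x2 = ((c1 + (k - g) : ℕ) : ZMod k) := by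
        rw [hx2def, map_add, map_mul, hπnat, hj2, e2]
      rw [this]
      exact ZMod.val_cast_of_lt (by omega : c1 + (k - g) < k)
    have hc1lt : c1 < k/2 := by omega
    have hc2ge : ¬ (c1 + (k - g) < k/2) := by omega
    by_cases hAS : A ⊆ S
    · exfalso
      -- then A = S, and we show S is not an AP
      have hAeq : A = S := Finset.eq_of_subset_of_card_le hAS (by rw [hScard, hcard])
      have hmem : ∀ a : ℕ, a < k → ∃ i, i < k ∧ t + (i : ZMod N) * d = f a := by
        intro a ha
        have : f a ∈ A := by rw [hAeq]; exact hfS a ha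
        rw [hA, Finset.mem_image] at this
        obtain ⟨i, hi, hieq⟩ := this
        exact ⟨i, Finset.mem_range.mp hi, hieq⟩
      have hmem' : ∀ a : ℕ, ∃ i, i < k ∧ (a < k → t + (i : ZMod N) * d = f a) := by
        intro a
        by_cases ha : a < k
        · obtain ⟨i, h1, h2⟩ := hmem a ha; exact ⟨i, h1, fun _ => h2⟩
        · exact ⟨0, hk0, fun h' => absurd h' ha⟩
      choose J hJlt hJeq using hmem'
      have hfval : ∀ a : ℕ, 1 ≤ a → a < k → f a = (a : ZMod N) := by
        intro a h1 _; simp only [f, if_neg (show ¬ a = 0 by omega)]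
      have hd1 : ∀ a : ℕ, 1 ≤ a → a + 1 < k →
          ((J (a+1) : ZMod N) - (J a : ZMod N)) * d = 1 := by
        intro a h1 h2
        have ea : t + (J a : ZMod N) * d = (a : ZMod N) := by
          rw [hJeq a (by omega), hfval a h1 (by omega)]
        have eb : t + (J (a+1) : ZMod N) * d = ((a+1 : ℕ) : ZMod N) := by
          rw [hJeq (a+1) (by omega), hfval (a+1) (by omega) (by omega)]
        push_cast at eb
        linear_combination eb - ea
      set v : ℤ := (J 2 : ℤ) - (J 1 : ℤ) with hv
      have hvd : ((v : ℤ) : ZMod N) * d = 1 := by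
        have := hd1 1 le_rfl (by omega)
        push_cast [hv]
        push_cast at this
        exact this
      have hvb : |v| ≤ (k : ℤ) - 1 := by
        have h1 := hJlt 1; have h2 := hJlt 2
        rw [abs_le]
        constructor <;> (simp only [hv]; push_cast; omega)
      have hcong : ∀ w : ℤ, |w| ≤ (k:ℤ) - 1 → ((w : ℤ) : ZMod N) * d = 1 → w = v := by
        intro w hwb hw
        have hz : ((w - v : ℤ) : ZMod N) = 0 := by
          have h0 : ((w - v : ℤ) : ZMod N) * d = 0 := by
            push_cast
            rw [sub_mul]
            rw [hw, hvd]
            ring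
          have := congrArg (fun z => z * ((v : ℤ) : ZMod N)) h0
          simp only [zero_mul] at this
          calc ((w - v : ℤ) : ZMod N) = ((w - v : ℤ) : ZMod N) * (((v : ℤ) : ZMod N) * d) := by
                rw [hvd, mul_one]
            _ = ((w - v : ℤ) : ZMod N) * d * ((v : ℤ) : ZMod N) := by ring
            _ = 0 := this
        have hdvd : ((N : ℕ) : ℤ) ∣ (w - v) := (ZMod.intCast_zmod_eq_zero_iff_dvd _ _).mp hz
        have hNlarge : 2*(k:ℤ) - 2 < (N:ℤ) := by
          have : (N:ℤ) = (k:ℤ)^2 := by rw [hN]; push_cast; ring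
          nlinarith [(by exact_mod_cast hk : (4:ℤ) ≤ k)]
        have hz0 : w - v = 0 := Int.eq_zero_of_abs_lt_dvd hdvd (by
          calc |w - v| ≤ |w| + |v| := abs_sub _ _
            _ ≤ 2*(k:ℤ) - 2 := by omega
            _ < (N:ℤ) := hNlarge)
        omega
      have hstep : ∀ a : ℕ, 1 ≤ a → a + 1 < k → (J (a+1) : ℤ) = J a + v := by
        intro a h1 h2
        have hb : |(J (a+1) : ℤ) - J a| ≤ (k:ℤ) - 1 := by
          have b1 := hJlt (a+1); have b2 := hJlt a
          rw [abs_le]; constructor <;> push_cast <;> omega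
        have := hcong ((J (a+1) : ℤ) - J a) hb (by push_cast; push_cast at hd1 ⊢; exact hd1 a h1 h2)
        omega
      have hlin : ∀ m : ℕ, 1 + m < k → (J (1+m) : ℤ) = J 1 + m * v := by
        intro m
        induction m with
        | zero => intro _; simp
        | succ n ih =>
          intro hmk
          have hn := ih (by omega)
          have hs := hstep (1+n) (by omega) (by omega)
          have : (1 + (n+1)) = (1+n) + 1 := by omega
          rw [this, hs, hn]
          push_cast
          ring
      have hvne : v ≠ 0 := by
        intro h0
        rw [h0] at hvd
        simp only [Int.cast_zero, zero_mul] at hvd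
        exact zero_ne_one hvd
      have hva : v = 1 ∨ v = -1 := by
        by_contra hcon
        push_neg at hcon
        have hv2 : 2 ≤ v ∨ v ≤ -2 := by omega
        have hfin := hlin (k - 2) (by omega)
        have b1 := hJlt (1 + (k-2)); have b2 := hJlt 1
        have hcast : ((k - 2 : ℕ) : ℤ) = (k : ℤ) - 2 := by push_cast [Nat.cast_sub (by omega : 2 ≤ k)]; ring
        rw [hcast] at hfin
        rcases hv2 with h' | h'
        · have : ((k:ℤ) - 2) * v ≥ ((k:ℤ) - 2) * 2 := by
            apply mul_le_mul_of_nonneg_left h' (by push_cast; omega)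
          have hJub : (J (1 + (k-2)) : ℤ) < k := by push_cast; omega
          have hJlb : (0:ℤ) ≤ (J 1 : ℤ) := by positivity
          omega
        · have : ((k:ℤ) - 2) * v ≤ ((k:ℤ) - 2) * (-2) := by
            apply mul_le_mul_of_nonneg_left h' (by push_cast; omega)
          have hJub : (J 1 : ℤ) < k := by push_cast; omega
          have hJlb : (0:ℤ) ≤ (J (1 + (k-2)) : ℤ) := by positivity
          omega
      -- the element 2k gives the contradiction
      obtain ⟨j0, hj0k, hj0⟩ := hmem 0 hk0
      have hj0' : t + (j0 : ZMod N) * d = ((2*k : ℕ) : ZMod N) := by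
        rw [hj0]; simp [f]
      have e1' : t + (J 1 : ZMod N) * d = ((1:ℕ) : ZMod N) := by
        rw [hJeq 1 (by omega), hfval 1 le_rfl (by omega)]
      set w : ℤ := (j0 : ℤ) - (J 1 : ℤ) with hw
      have hsub : ((w : ℤ) : ZMod N) * d = ((2*k - 1 : ℕ) : ZMod N) := by
        have hc : ((2*k - 1 : ℕ) : ZMod N) = ((2*k : ℕ) : ZMod N) - ((1:ℕ) : ZMod N) := by
          push_cast [Nat.cast_sub (by omega : 1 ≤ 2*k)]
          ring
        rw [hc]
        push_cast [hw]
        push_cast at hj0' e1'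
        linear_combination hj0' - e1'
      have hwb : |w| ≤ (k:ℤ) - 1 := by
        have b1 := hj0k; have b2 := hJlt 1
        rw [abs_le]; constructor <;> simp only [hw] <;> push_cast <;> omega
      have hfinal : ∀ w2 : ℤ, |w2| ≤ (k:ℤ) - 1 → ((w2 : ℤ) : ZMod N) = ((2*k - 1 : ℕ) : ZMod N) → False := by
        intro w2 hw2b heq
        have hz : ((w2 - (2*(k:ℤ) - 1) : ℤ) : ZMod N) = 0 := by
          push_cast
          rw [show ((w2 :ZMod N) = ((2*k - 1 : ℕ) : ZMod N)) from heq]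
          push_cast [Nat.cast_sub (by omega : 1 ≤ 2*k)]
          ring
        have hdvd : ((N : ℕ) : ℤ) ∣ (w2 - (2*(k:ℤ) - 1)) := (ZMod.intCast_zmod_eq_zero_iff_dvd _ _).mp hz
        have hNZ : (N:ℤ) = (k:ℤ)^2 := by rw [hN]; push_cast; ring
        have hk4 : (4:ℤ) ≤ k := by exact_mod_cast hk
        have hz0 : w2 - (2*(k:ℤ) - 1) = 0 := Int.eq_zero_of_abs_lt_dvd hdvd (by
          rw [abs_lt]; constructor <;> nlinarith [abs_le.mp hw2b])
        have := abs_le.mp hw2b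
        omega
      rcases hva with h' | h'
      · -- d = 1
        have hd : d = 1 := by
          have := hvd
          rw [h'] at this
          simpa using this
        apply hfinal w hwb
        rw [← hsub, hd, mul_one]
      · -- d = -1
        have hd : d = -1 := by
          have := hvd
          rw [h'] at this
          have h2 : (-1 : ZMod N) * d = 1 := by exact_mod_cast this
          linear_combination -h2
        apply hfinal (-w) (by rw [abs_neg]; exact hwb)
        rw [← hsub, hd]
        push_cast
        ring
    · obtain ⟨y0, hy0A, hy0S⟩ := Finset.not_subset.mp hAS
      by_cases hx1S : x1 ∈ S
      · refine ⟨x1, hx1A, y0, hy0A, ?_⟩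
        have h1 : c x1 = 2 := by simp [c, hx1S]
        have h2 : c y0 = 0 ∨ c y0 = 1 := by
          simp only [c, if_neg hy0S]
          split_ifs
          · exact Or.inl rfl
          · exact Or.inr rfl
        rw [h1]
        rcases h2 with h' | h' <;> rw [h'] <;> decide
      · refine ⟨x1, hx1A, x2, hx2A, ?_⟩
        have h1 : c x1 = 0 := by simp [c, hx1S, hπx1, hc1lt]
        have h2 : c x2 = 1 ∨ c x2 = 2 := by
          simp only [c]
          split_ifs with hS hv
          · exact Or.inr rfl
          · rw [hπx2] at hv; exact absurd hv hc2ge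
          · exact Or.inl rfl
        rw [h1]
        rcases h2 with h' | h' <;> rw [h'] <;> decide

def apColoring3 : ZMod 9 → Fin 3 := ![0, 0, 1, 0, 0, 1, 1, 2, 2]

set_option maxHeartbeats 1000000 in
lemma exists_good_3 : ∃ c : ZMod (3^2) → Fin 3, ∀ (t d : ZMod (3^2)),
    ((Finset.range 3).image (fun i : ℕ => t + (i : ZMod (3^2)) * d)).card = 3 →
    ∃ x ∈ (Finset.range 3).image (fun i : ℕ => t + (i : ZMod (3^2)) * d),
      ∃ y ∈ (Finset.range 3).image (fun i : ℕ => t + (i : ZMod (3^2)) * d),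
        c x ≠ c y :=
  ⟨apColoring3, by decide⟩

lemma good_coloring (k : ℕ) (hk : 3 ≤ k) :
    ∃ c : ZMod (k^2) → Fin 3, ∀ A : Finset (ZMod (k^2)),
      IsAP (k^2) k A → ¬ ∃ i, ∀ x ∈ A, c x = i := by
  have key : ∃ c : ZMod (k^2) → Fin 3, ∀ (t d : ZMod (k^2)),
      ((Finset.range k).image (fun i : ℕ => t + (i : ZMod (k^2)) * d)).card = k →
      ∃ x ∈ (Finset.range k).image (fun i : ℕ => t + (i : ZMod (k^2)) * d),
        ∃ y ∈ (Finset.range k).image (fun i : ℕ => t + (i : ZMod (k^2)) * d),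
          c x ≠ c y := by
    rcases eq_or_lt_of_le hk with h3 | h4
    · subst h3
      exact exists_good_3
    · exact exists_good_ge4 k (by omega)
  obtain ⟨c, hc⟩ := key
  refine ⟨c, ?_⟩
  rintro A ⟨d, hcard, t, rfl⟩ ⟨i, hi⟩
  obtain ⟨x, hx, y, hy, hxy⟩ := hc t d hcard
  exact hxy (by rw [hi x hx, hi y hy])

theorem stmt_15 (k : ℕ) (hk : 3 ≤ k) :
    2 ≤ chiNum (k ^ 2) k ∧ chiNum (k ^ 2) k ≤ 3 := by
  haveI : NeZero (k^2) := ⟨by positivity⟩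
  obtain ⟨c, hc⟩ := good_coloring k hk
  have h3 : 3 ∈ {r | ∃ c : ZMod (k^2) → Fin r,
      ∀ A : Finset (ZMod (k^2)), IsAP (k^2) k A → ¬ ∃ i, ∀ x ∈ A, c x = i} := ⟨c, hc⟩
  have hlb : ∀ r ∈ {r | ∃ c : ZMod (k^2) → Fin r,
      ∀ A : Finset (ZMod (k^2)), IsAP (k^2) k A → ¬ ∃ i, ∀ x ∈ A, c x = i}, 2 ≤ r := by
    rintro r ⟨c', hc'⟩
    by_contra hle
    push_neg at hle
    interval_cases r
    · exact (c' 0).elim0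
    · set A0 : Finset (ZMod (k^2)) :=
        (Finset.range k).image (fun i : ℕ => (0 : ZMod (k^2)) + (i : ZMod (k^2)) * 1) with hA0
      have hcard : A0.card = k := by
        rw [hA0, Finset.card_image_of_injOn, Finset.card_range]
        intro a ha b hb hab
        simp only [Finset.coe_range, Set.mem_Iio] at ha hb
        simp only [zero_add, mul_one] at hab
        have := congrArg ZMod.val hab
        rwa [ZMod.val_cast_of_lt (by nlinarith : a < k^2),
          ZMod.val_cast_of_lt (by nlinarith : b < k^2)] at this
      have hAP : IsAP (k^2) k A0 := ⟨1, hcard, 0, rfl⟩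
      exact hc' A0 hAP ⟨0, fun x _ => Subsingleton.elim _ _⟩
  constructor
  · exact hlb _ (Nat.sInf_mem (⟨3, h3⟩ : Set.Nonempty _))
  · exact Nat.sInf_le h3
end

section
/- Let m and k be integers with 3 ≤ k < m. Then 2 ≤ χ(mk,k) ≤ 3 + ⌈(m−k)·k / (k−1)⌉. -/
lemma divBounds (v c p : ℕ) (hc : 0 < c) (h : v / c = p) : p * c ≤ v ∧ v < p * c + c := by
  constructor
  · rw [← h]; exact Nat.div_mul_le_self v c
  · have := (Nat.div_lt_iff_lt_mul hc).mp (by omega : v / c < p + 1)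
    calc v < (p+1)*c := this
    _ = p*c + c := by ring

lemma pigeonAux (k L lo : ℕ) (x : ℕ → ℕ) (hL : L < k)
    (hinj : ∀ i j, i < k → j < k → x i = x j → i = j)
    (hmem : ∀ i, i < k → lo ≤ x i ∧ x i < lo + L) : False := by
  have hinj' : Set.InjOn x (Finset.range k) := by
    intro i hi j hj h
    exact hinj i j (by simpa using hi) (by simpa using hj) h
  have hcard : ((Finset.range k).image x).card = k := by
    rw [Finset.card_image_of_injOn hinj', Finset.card_range]
  have hsub : (Finset.range k).image x ⊆ Finset.Ico lo (lo + L) := by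
    intro v hv
    simp only [Finset.mem_image, Finset.mem_range] at hv
    obtain ⟨i, hi, rfl⟩ := hv
    simpa [Finset.mem_Ico] using hmem i hi
  have := Finset.card_le_card hsub
  rw [hcard, Nat.card_Ico] at this
  omega

lemma exists_hit_s17 (m D T ρ : ℕ) (hm : 0 < m) (hρ : ρ < m)
    (hcong : ρ % Nat.gcd D m = T % Nat.gcd D m) :
    ∃ i, i < m / Nat.gcd D m ∧ (T + i * D) % m = ρ := by
  set g := Nat.gcd D m with hg
  have hgpos : 0 < g := Nat.gcd_pos_of_pos_right D hm
  set m' := m / g with hm'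
  set D' := D / g with hD'
  have hmm : g * m' = m := Nat.mul_div_cancel' (Nat.gcd_dvd_right D m)
  have hDD : g * D' = D := Nat.mul_div_cancel' (Nat.gcd_dvd_left D m)
  have hm'pos : 0 < m' :=
    Nat.div_pos (Nat.le_of_dvd hm (Nat.gcd_dvd_right D m)) hgpos
  have hcop : Nat.Coprime D' m' := Nat.coprime_div_gcd_div_gcd hgpos
  haveI : NeZero m' := ⟨hm'pos.ne'⟩
  have hdvd : (g : ℤ) ∣ (ρ : ℤ) - (T : ℤ) := by
    have h1 : (ρ : ℤ) % g = (T : ℤ) % g := by exact_mod_cast congrArg (Nat.cast : ℕ → ℤ) hcong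
    exact Int.dvd_of_emod_eq_zero (Int.emod_eq_emod_iff_emod_sub_eq_zero.mp h1)
  obtain ⟨z, hz⟩ := hdvd
  let u : (ZMod m')ˣ := ZMod.unitOfCoprime D' hcop
  set i : ℕ := (((z : ZMod m')) * (↑u⁻¹ : ZMod m')).val with hi
  refine ⟨i, ZMod.val_lt _, ?_⟩
  have hu : ((u : (ZMod m')ˣ) : ZMod m') = (D' : ZMod m') := ZMod.coe_unitOfCoprime D' hcop
  have key : ((i * D' : ℕ) : ZMod m') = ((z : ZMod m')) := by
    push_cast
    rw [hi, ZMod.natCast_val, ZMod.cast_id, mul_assoc, ← hu]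
    rw [← Units.val_mul]
    simp
  have key2 : ((i * D' : ℕ) : ℤ) ≡ z [ZMOD (m' : ℕ)] := by
    have : (((i * D' : ℕ) : ℤ) : ZMod m') = ((z : ℤ) : ZMod m') := by
      push_cast
      push_cast at key
      exact key
    exact (ZMod.intCast_eq_intCast_iff _ _ _).mp this
  have key3 : (m' : ℤ) ∣ (z - (i * D' : ℕ)) := Int.ModEq.dvd key2
  obtain ⟨w, hw⟩ := key3
  have hfin : (m : ℤ) ∣ ((T + i * D : ℕ) : ℤ) - (ρ : ℤ) := by
    have hDint : (D : ℤ) = (g : ℤ) * D' := by exact_mod_cast hDD.symm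
    have hmint : (m : ℤ) = (g : ℤ) * m' := by exact_mod_cast hmm.symm
    refine ⟨-w, ?_⟩
    push_cast
    push_cast at hw hz
    rw [hDint, hmint]
    linear_combination -hz - (g:ℤ) * hw
  have : (T + i * D) % m = ρ % m := by
    have hmod : ((T + i * D : ℕ)) ≡ ρ [MOD m] := by
      rw [Nat.modEq_iff_dvd]
      rcases hfin with ⟨c, hc⟩
      exact ⟨-c, by push_cast at hc ⊢; linarith⟩
    exact hmod
  rw [Nat.mod_eq_of_lt hρ] at this
  exact this

/-- the coloring for `k+1 ≤ m ≤ 3k-3` -/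
def gT (k m v : ℕ) : ℕ := if v < m then 3 + v / (k-1) else (v % m) / ((m+2)/3)

lemma schemeT_core (k m T D i₀ : ℕ) (hk : 3 ≤ k) (hm : k + 1 ≤ m) (hm3 : m ≤ 3*k - 3)
    (hcol0 : ∀ i, i < k → gT k m ((T + i * D) % (m*k)) = i₀)
    (hinj0 : ∀ i j, i < k → j < k → (T + i*D) % (m*k) = (T + j*D) % (m*k) → i = j) :
    False := by
  have hmpos : 0 < m := by omega
  have hN : 0 < m * k := by positivity
  set a : ℕ := (m+2)/3 with ha
  have ha3 : 3*a ≤ m + 2 ∧ m + 2 < 3*a + 3 := by omega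
  have hak : a ≤ k - 1 := by omega
  set x : ℕ → ℕ := fun i => (T + i * D) % (m*k) with hxdef
  have hcol : ∀ i, i < k → gT k m (x i) = i₀ := hcol0
  have hinj : ∀ i j, i < k → j < k → x i = x j → i = j := hinj0
  have hxm : ∀ i, (x i) % m = (T + i*D) % m := fun i => Nat.mod_mod_of_dvd _ ⟨k, rfl⟩
  by_cases hi0 : i₀ < 3
  · -- arc case
    have harc : ∀ i, i < k → m ≤ x i ∧ (x i % m) / a = i₀ := by
      intro i hi
      have h := hcol i hi
      rw [gT] at h
      by_cases hlt : x i < m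
      · exfalso
        rw [if_pos hlt] at h
        have h3 : 3 ≤ i₀ := by rw [← h]; exact Nat.le_add_right _ _
        omega
      · rw [if_neg hlt] at h; exact ⟨by omega, h⟩
    by_cases hDm : m ∣ D
    · -- transversal case
      have hres : ∀ i, x i % m = T % m := by
        intro i
        obtain ⟨e, rfl⟩ := hDm
        rw [hxm, show i * (m*e) = i*e*m by ring, Nat.add_mul_mod_self_right]
      have hwinj : Set.InjOn (fun i => x i / m) (Finset.range k) := by
        intro i hi j hj hij
        simp only [Finset.coe_range, Set.mem_Iio] at hi hj
        simp only at hij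
        apply hinj i j hi hj
        have d1 := Nat.div_add_mod (x i) m
        have d2 := Nat.div_add_mod (x j) m
        rw [hres i] at d1
        rw [hres j] at d2
        rw [hij] at d1
        omega
      have hcard : ((Finset.range k).image (fun i => x i / m)).card = k := by
        rw [Finset.card_image_of_injOn hwinj, Finset.card_range]
      have hsub : (Finset.range k).image (fun i => x i / m) ⊆ Finset.range k := by
        intro v hv
        simp only [Finset.mem_image, Finset.mem_range] at hv ⊢
        obtain ⟨i, hi, rfl⟩ := hv
        have : x i < m * k := Nat.mod_lt _ hN
        exact Nat.div_lt_of_lt_mul (by omega)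
      have heq : (Finset.range k).image (fun i => x i / m) = Finset.range k :=
        Finset.eq_of_subset_of_card_le hsub (by rw [Finset.card_range, hcard])
      have h0 : (0:ℕ) ∈ (Finset.range k).image (fun i => x i / m) := by
        rw [heq]; simp only [Finset.mem_range]; omega
      simp only [Finset.mem_image, Finset.mem_range] at h0
      obtain ⟨i, hi, hquo⟩ := h0
      have hxi : x i < m := by
        by_contra hcon
        have : 0 < x i / m := Nat.div_pos (by omega) hmpos
        omega
      exact absurd hxi (not_lt.mpr (harc i hi).1)
    · -- m does not divide D
      set g := Nat.gcd D m with hg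
      have hgpos : 0 < g := Nat.gcd_pos_of_pos_right D hmpos
      have hgdvd : g ∣ m := Nat.gcd_dvd_right D m
      have hglt : g < m := by
        rcases Nat.lt_or_ge g m with h | h
        · exact h
        · exfalso
          have : g = m := le_antisymm (Nat.le_of_dvd hmpos hgdvd) h
          exact hDm (this ▸ Nat.gcd_dvd_left D m)
      have h2g : 2*g ≤ m := by
        obtain ⟨c, hc⟩ := hgdvd
        have hc0 : c ≠ 0 := by rintro rfl; omega
        have hc1 : c ≠ 1 := by rintro rfl; omega
        calc 2*g = g*2 := by ring
          _ ≤ g*c := Nat.mul_le_mul_left g (by omega)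
          _ = m := hc.symm
      by_cases hmg : m / g ≤ k
      · -- full coset: two far-apart residues
        have hu1 : T % g < m := lt_of_lt_of_le (Nat.mod_lt T hgpos) (by omega)
        obtain ⟨i1, hi1, hr1⟩ := exists_hit_s17 m D T (T % g) hmpos hu1 (by
          rw [Nat.mod_mod_of_dvd _ (dvd_refl g)]
          )
        obtain ⟨i2, hi2, hr2⟩ := exists_hit_s17 m D T (T % g + (m - g)) hmpos
          (by have := Nat.mod_lt T hgpos; omega) (by
          have hdg : g ∣ m - g := Nat.dvd_sub hgdvd (dvd_refl g)
          obtain ⟨c, hc⟩ := hdg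
          rw [hc, Nat.add_mul_mod_self_left, Nat.mod_mod_of_dvd _ (dvd_refl g)])
        rw [← hg] at hi1 hi2
        have hb1 := (harc i1 (by omega)).2
        have hb2 := (harc i2 (by omega)).2
        rw [hxm i1, hr1] at hb1
        rw [hxm i2, hr2] at hb2
        have hapos : 0 < a := by omega
        have B1 := divBounds _ _ _ hapos hb1
        have B2 := divBounds _ _ _ hapos hb2
        omega
      · -- residues pairwise distinct: pigeonhole in the arc
        set m' := m / g with hm'
        set D' := D / g with hD'
        have hmm : g * m' = m := Nat.mul_div_cancel' hgdvd
        have hDD : g * D' = D := Nat.mul_div_cancel' (Nat.gcd_dvd_left D m)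
        have hcop : Nat.Coprime D' m' := Nat.coprime_div_gcd_div_gcd hgpos
        have hm'gt : k < m / g := by omega
        have haux : ∀ i j, i < j → j < k → x i % m = x j % m → False := by
          intro i j hij0 hj hij
          have hmod : (T + i*D) % m = (T + j*D) % m := by rw [← hxm, ← hxm, hij]
          have hdvd : m ∣ (j - i) * D := by
            have h1 : (T + i*D) ≡ (T + j*D) [MOD m] := hmod
            have h3 : (T + i*D) ≤ (T + j*D) := by
              have : i*D ≤ j*D := Nat.mul_le_mul_right D (by omega)
              omega
            have h4 := (Nat.modEq_iff_dvd' h3).mp h1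
            have heq : (T + j*D) - (T + i*D) = (j - i)*D := by
              rw [Nat.sub_mul]; omega
            rwa [heq] at h4
          have hdvd2 : m' ∣ (j - i) * D' := by
            have h5 : g * m' ∣ g * ((j-i) * D') := by
              rw [show g * ((j-i)*D') = (j-i)*(g*D') by ring, hDD, hmm]
              exact hdvd
            exact (mul_dvd_mul_iff_left (by omega : g ≠ 0)).mp h5
          have h6 : m' ∣ (j - i) := (Nat.Coprime.dvd_of_dvd_mul_right hcop.symm) hdvd2
          have := Nat.le_of_dvd (by omega) h6
          omega
        have hresinj : ∀ i j, i < k → j < k → x i % m = x j % m → i = j := by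
          intro i j hi hj hij
          rcases Nat.lt_trichotomy i j with h | h | h
          · exact (haux i j h hj hij).elim
          · exact h
          · exact (haux j i h hi hij.symm).elim
        refine pigeonAux k a (i₀*a) (fun i => x i % m) (by omega) hresinj ?_
        intro i hi
        have hb := (harc i hi).2
        have hapos : 0 < a := by omega
        exact divBounds _ _ _ hapos hb
  · -- i₀ ≥ 3 : within one transversal part
    have hpart : ∀ i, i < k → x i < m ∧ x i / (k-1) = i₀ - 3 := by
      intro i hi
      have h := hcol i hi
      rw [gT] at h
      by_cases hlt : x i < m
      · rw [if_pos hlt] at h; exact ⟨hlt, by omega⟩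
      · exfalso
        rw [if_neg hlt, ← ha] at h
        have hxa : x i % m < m := Nat.mod_lt _ hmpos
        have hlt2 : (x i % m) / a < 3 := by
          rw [Nat.div_lt_iff_lt_mul (by omega : 0 < a)]
          omega
        omega
    refine pigeonAux k (k-1) ((i₀-3)*(k-1)) x (by omega) hinj ?_
    intro i hi
    have ⟨h1, h2⟩ := hpart i hi
    have := divBounds _ _ _ (by omega : 0 < k-1) h2
    omega

/-- the block coloring for `m ≥ 2k`. -/
def g4 (s c v : ℕ) : ℕ := if v < s then (v / c) % 3 else 3 + (v - s) / c

lemma noWrapAux (k c s E : ℕ) (hk : 3 ≤ k) (hc : c = k - 1) (hs1 : s ≤ k*k) (hE : 1 ≤ E)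
    (y : ℕ → ℕ) (hstep : ∀ i, i + 1 < k → y (i+1) = y i + E)
    (hys : ∀ i, i < k → y i < s)
    (hcol : ∀ i, i < k → (y i / c) % 3 = (y 0 / c) % 3) : False := by
  have hc0 : 0 < c := by omega
  have hlin : ∀ i, i < k → y i = y 0 + i * E := by
    intro i hi
    induction i with
    | zero => simp
    | succ n ih =>
      rw [hstep n hi, ih (by omega)]
      ring
  have hEk : E ≤ k + 1 := by
    have h1 : y (k-1) = y 0 + (k-1)*E := hlin (k-1) (by omega)
    have h2 : y (k-1) < s := hys (k-1) (by omega)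
    have h3 : (k-1)*E ≤ k*k - 1 := by omega
    have h4 : (k-1)*(k+1) + 1 = k*k := by
      cases k with
      | zero => omega
      | succ n => simp only [Nat.add_sub_cancel]; ring
    have h5 : (k-1)*E ≤ (k-1)*(k+1) := by omega
    exact Nat.le_of_mul_le_mul_left h5 (by omega : 0 < k-1)
  have hE2c : E ≤ 2 * c := by omega
  -- all block indices equal
  have hblock : ∀ i, i + 1 < k → y (i+1) / c = y i / c := by
    intro i hi
    have hup : y (i+1) / c ≤ y i / c + 2 := by
      rw [hstep i hi]
      calc (y i + E) / c ≤ (y i + 2 * c) / c := Nat.div_le_div_right (by omega)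
        _ = y i / c + 2 := by rw [Nat.add_mul_div_right _ _ hc0]
    have hlo : y i / c ≤ y (i+1) / c := by
      rw [hstep i hi]
      exact Nat.div_le_div_right (by omega)
    have e1 := hcol i (by omega)
    have e2 := hcol (i+1) hi
    omega
  have hball : ∀ i, i < k → y i / c = y 0 / c := by
    intro i hi
    induction i with
    | zero => rfl
    | succ n ih => rw [hblock n hi]; exact ih (by omega)
  have B0 := divBounds _ _ _ hc0 (rfl : y 0 / c = y 0 / c)
  have Bk := divBounds _ _ _ hc0 (hball (k-1) (by omega))
  have hyk : y (k-1) = y 0 + (k-1)*E := hlin (k-1) (by omega)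
  have hkE : k - 1 ≤ (k-1)*E := by
    calc k-1 = (k-1)*1 := by ring
    _ ≤ (k-1)*E := Nat.mul_le_mul_left _ hE
  omega

lemma scheme4_core (k M s c T D i₀ : ℕ) (hk : 3 ≤ k) (hc : c = k - 1)
    (hs1 : s ≤ k*k) (hs2 : 2*s ≤ M + 1) (hD : D < M) (hM : 0 < M)
    (hcol0 : ∀ i, i < k → g4 s c ((T + i * D) % M) = i₀)
    (hinj0 : ∀ i j, i < k → j < k → (T + i*D) % M = (T + j*D) % M → i = j) :
    False := by
  have hc0 : 0 < c := by omega
  set x : ℕ → ℕ := fun i => (T + i * D) % M with hxdef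
  have hcol : ∀ i, i < k → g4 s c (x i) = i₀ := hcol0
  have hinj : ∀ i j, i < k → j < k → x i = x j → i = j := hinj0
  have hxlt : ∀ i, x i < M := fun i => Nat.mod_lt _ hM
  have hDpos : 0 < D := by
    by_contra h
    have h0 : D = 0 := by omega
    have : x 0 = x 1 := by rw [hxdef]; simp [h0]
    exact absurd (hinj 0 1 (by omega) (by omega) this) (by omega)
  have hstep : ∀ i, i + 1 < k → x (i+1) = (x i + D) % M := by
    intro i hi
    rw [hxdef]
    simp only
    rw [Nat.mod_add_mod, show T + (i+1)*D = T + i*D + D by ring]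
  have hdich : ∀ i, i + 1 < k → (x (i+1) = x i + D ∨ x i + D = x (i+1) + M) := by
    intro i hi
    rcases Nat.lt_or_ge (x i + D) M with h | h
    · left; rw [hstep i hi, Nat.mod_eq_of_lt h]
    · right
      rw [hstep i hi]
      have h2 : x i + D < 2 * M := by have := hxlt i; omega
      have : (x i + D) % M = x i + D - M := by
        rw [Nat.mod_eq_sub_mod h, Nat.mod_eq_of_lt (by omega)]
      omega
  by_cases hi0 : i₀ < 3
  · -- special region
    have hxs : ∀ i, i < k → x i < s ∧ (x i / c) % 3 = i₀ := by
      intro i hi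
      have h := hcol i hi
      rw [g4] at h
      by_cases hlt : x i < s
      · rw [if_pos hlt] at h; exact ⟨hlt, h⟩
      · exfalso
        rw [if_neg hlt] at h
        have h3 : 3 ≤ i₀ := by rw [← h]; exact Nat.le_add_right _ _
        omega
    -- no mixed steps
    by_cases hall : ∀ i, i + 1 < k → x (i+1) = x i + D
    · -- ascending
      refine noWrapAux k c s D hk hc hs1 (by omega) x hall (fun i hi => (hxs i hi).1) ?_
      intro i hi
      rw [(hxs i hi).2, (hxs 0 (by omega)).2]
    · -- some step wraps; then all steps wrap
      push_neg at hall
      obtain ⟨j, hj, hjw⟩ := hall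
      have hjw2 : x j + D = x (j+1) + M := by
        rcases hdich j hj with h | h
        · exact absurd h hjw
        · exact h
      have hDbig : M ≤ x j + D := by omega
      have hDge : M - s + 1 ≤ D := by
        have := (hxs j (by omega)).1
        omega
      have hallw : ∀ i, i + 1 < k → x i + D = x (i+1) + M := by
        intro i hi
        rcases hdich i hi with h | h
        · exfalso
          have h1 := (hxs (i+1) hi).1
          have : D ≤ s - 1 := by omega
          omega
        · exact h
      -- reversed sequence ascends with step E := M - D
      set E : ℕ := M - D with hE
      have hEpos : 1 ≤ E := by omega
      set y : ℕ → ℕ := fun i => x (k - 1 - i) with hy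
      refine noWrapAux k c s E hk hc hs1 hEpos y ?_ ?_ ?_
      · intro i hi
        have h1 : k - 1 - (i+1) + 1 < k := by omega
        have h2 := hallw (k - 1 - (i+1)) h1
        have h3 : k - 1 - (i+1) + 1 = k - 1 - i := by omega
        rw [hy]
        simp only
        rw [← h3]
        omega
      · intro i hi
        exact (hxs (k-1-i) (by omega)).1
      · intro i hi
        rw [hy]
        simp only
        rw [(hxs (k-1-i) (by omega)).2, (hxs (k-1-0) (by omega)).2]
  · -- tail intervals
    have hxs : ∀ i, i < k → s ≤ x i ∧ (x i - s) / c = i₀ - 3 := by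
      intro i hi
      have h := hcol i hi
      rw [g4] at h
      by_cases hlt : x i < s
      · exfalso
        rw [if_pos hlt] at h
        have : (x i / c) % 3 < 3 := Nat.mod_lt _ (by omega)
        omega
      · rw [if_neg hlt] at h
        exact ⟨by omega, by omega⟩
    refine pigeonAux k c (s + (i₀-3)*c) x (by omega) hinj ?_
    intro i hi
    obtain ⟨h1, h2⟩ := hxs i hi
    have := divBounds _ _ _ hc0 h2
    omega

lemma mono_bridge (N k : ℕ) [NeZero N] (hkN : k ≤ N) (gN : ℕ → ℕ) (R : ℕ)
    (hR : ∀ v, v < N → gN v < R)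
    (hkill : ∀ T D i₀ : ℕ, T < N → D < N →
      (∀ i, i < k → gN ((T + i * D) % N) = i₀) →
      (∀ i j, i < k → j < k → (T + i*D) % N = (T + j*D) % N → i = j) → False) :
    ∃ c : ZMod N → Fin R, ∀ A : Finset (ZMod N), IsAP N k A → ¬ ∃ i, ∀ x ∈ A, c x = i := by
  refine ⟨fun x => ⟨gN x.val, hR _ (ZMod.val_lt x)⟩, ?_⟩
  rintro A ⟨d, hcard, t, hA⟩ ⟨i₀, hmono⟩
  set f : ℕ → ZMod N := fun i => t + (i : ZMod N) * d with hf
  have hinj : Set.InjOn f (Finset.range k) := by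
    apply Finset.injOn_of_card_image_eq
    rw [← hA, hcard, Finset.card_range]
  have hval : ∀ i, i < k → (f i).val = (t.val + i * d.val) % N := by
    intro i hi
    rw [hf]
    simp only
    rw [ZMod.val_add, ZMod.val_mul, ZMod.val_natCast, Nat.mod_eq_of_lt (by omega : i < N)]
    rw [Nat.add_mod_mod]
  have hcol : ∀ i, i < k → gN ((t.val + i * d.val) % N) = i₀.val := by
    intro i hi
    have hmem : f i ∈ A := by
      rw [hA]
      exact Finset.mem_image_of_mem f (Finset.mem_range.mpr hi)
    have := hmono (f i) hmem
    have hv : gN ((f i).val) = i₀.val := congrArg Fin.val this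
    rwa [hval i hi] at hv
  have hinjN : ∀ i j, i < k → j < k →
      (t.val + i*d.val) % N = (t.val + j*d.val) % N → i = j := by
    intro i j hi hj hij
    apply hinj (Finset.mem_coe.mpr (Finset.mem_range.mpr hi))
      (Finset.mem_coe.mpr (Finset.mem_range.mpr hj))
    apply ZMod.val_injective
    rw [hval i hi, hval j hj, hij]
  exact hkill t.val d.val i₀.val (ZMod.val_lt t) (ZMod.val_lt d) hcol hinjN


theorem stmt_17 (m k : ℕ) (hk : 3 ≤ k) (hkm : k < m) :
    2 ≤ chiNum (m * k) k ∧
      chiNum (m * k) k ≤ 3 + ((m - k) * k + (k - 1) - 1) / (k - 1) := by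
  have hNpos : 0 < m * k := Nat.mul_pos (by omega) (by omega)
  haveI : NeZero (m * k) := ⟨hNpos.ne'⟩
  have hkN : k ≤ m * k := Nat.le_mul_of_pos_left k (by omega)
  have hmk1 : k*k ≤ m*k := Nat.mul_le_mul_right k (by omega)
  have hKk : k ≤ k*k := Nat.le_mul_of_pos_left k (by omega)
  have hq : (m - k) * k + (k - 1) - 1 = m*k - k*k + k - 2 := by
    have h1 : (m-k)*k = m*k - k*k := Nat.sub_mul m k k
    omega
  set q : ℕ := (m*k - k*k + k - 2)/(k-1) with hqdef
  have hRform : 3 + ((m - k) * k + (k - 1) - 1) / (k - 1) = 3 + q := by rw [hq]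
  -- q ≥ 1
  have hApos : k - 1 ≤ m*k - k*k + k - 2 := by
    have : m*k ≥ k*k + k := by
      calc k*k + k = (k+1)*k := by ring
      _ ≤ m*k := Nat.mul_le_mul_right k (by omega)
    omega
  have hqpos : 1 ≤ q := by
    rw [hqdef]
    rw [Nat.le_div_iff_mul_le (by omega : 0 < k-1)]
    omega
  -- membership of 3 + q in the coloring set
  have hmem : (3 + q) ∈ {r | ∃ c : ZMod (m*k) → Fin r,
      ∀ A : Finset (ZMod (m*k)), IsAP (m*k) k A → ¬ ∃ i, ∀ x ∈ A, c x = i} := by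
    by_cases hm3 : m ≤ 3*k - 3
    · -- scheme T
      refine mono_bridge (m*k) k hkN (gT k m) (3+q) ?_ ?_
      · -- color bound
        intro v hv
        rw [gT]
        by_cases hvm : v < m
        · rw [if_pos hvm]
          have hdivlt : v / (k-1) < q := by
            have h1 : v / (k-1) ≤ (m-1)/(k-1) := Nat.div_le_div_right (by omega)
            have h2 : (m-1)/(k-1) + 1 = (m + k - 2)/(k-1) := by
              rw [show m + k - 2 = (m-1) + (k-1) by omega, Nat.add_div_right _ (by omega)]
            have h3 : (m + k - 2)/(k-1) ≤ q := by
              rcases Nat.lt_or_ge m (k+2) with hm2 | hm2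
              · -- m = k + 1 : both sides are 2
                have hmeq : m = k + 1 := by omega
                subst hmeq
                have e1 : (k + 1 + k - 2)/(k-1) = 2 :=
                  Nat.div_eq_of_lt_le (by omega) (by omega)
                have e2 : q = 2 := by
                  rw [hqdef]
                  have h7 : (k+1)*k = k*k + k := by ring
                  exact Nat.div_eq_of_lt_le (by omega) (by omega)
                omega
              · -- m ≥ k + 2 : suffices m + k*k ≤ m*k
                rw [hqdef]
                apply Nat.div_le_div_right
                have key : m + k*k ≤ m*k := by
                  have h4 : (k+2)*(k-1) ≤ m*(k-1) := Nat.mul_le_mul_right (k-1) hm2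
                  have h5 : (k+2)*(k-1) = k*k + k - 2 := by
                    cases k with
                    | zero => omega
                    | succ n => simp only [Nat.add_sub_cancel]; ring_nf; omega
                  have h6 : m*(k-1) + m = m*k := by
                    cases k with
                    | zero => omega
                    | succ n => simp only [Nat.add_sub_cancel]; ring
                  omega
                omega
            omega
          omega
        · rw [if_neg hvm]
          have ha : 0 < (m+2)/3 ∧ m ≤ 3*((m+2)/3) := by omega
          have : (v % m) / ((m+2)/3) < 3 := by
            rw [Nat.div_lt_iff_lt_mul ha.1]
            have : v % m < m := Nat.mod_lt _ (by omega)
            omega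
          omega
      · intro T D i₀ hT hD hcol hinj
        exact schemeT_core k m T D i₀ hk (by omega) (by omega) hcol hinj
    · -- scheme 4
      have hm2k : 3*k - 2 ≤ m := by omega
      have h2K : 2*(k*k) ≤ m*k := by
        have := Nat.mul_le_mul_right k (show 2*k ≤ m by omega)
        calc 2*(k*k) = (2*k)*k := by ring
        _ ≤ m*k := this
      have hdm := Nat.div_add_mod (m*k - k*k + k - 2) (k-1)
      rw [← hqdef] at hdm
      have hmodlt : (m*k - k*k + k - 2) % (k-1) < k - 1 := Nat.mod_lt _ (by omega)
      set s : ℕ := m*k - (k-1)*q with hs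
      have hs1 : s ≤ k*k := by omega
      have hs2 : 2*s ≤ m*k + 1 := by omega
      refine mono_bridge (m*k) k hkN (g4 s (k-1)) (3+q) ?_ ?_
      · intro v hv
        rw [g4]
        by_cases hvs : v < s
        · rw [if_pos hvs]
          have : (v / (k-1)) % 3 < 3 := Nat.mod_lt _ (by omega)
          omega
        · rw [if_neg hvs]
          have hMs : s + (k-1)*q = m*k := by omega
          have hvb : v - s < (k-1)*q := by omega
          have : (v - s)/(k-1) < q := by
            rw [Nat.div_lt_iff_lt_mul (by omega : 0 < k-1)]
            calc v - s < (k-1)*q := hvb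
            _ = q*(k-1) := mul_comm _ _
          omega
      · intro T D i₀ hT hD hcol hinj
        exact scheme4_core k (m*k) s (k-1) T D i₀ hk rfl hs1 hs2 hD hNpos hcol hinj
  constructor
  · -- lower bound
    rw [chiNum]
    by_contra hcon
    have hcon' : sInf {r | ∃ c : ZMod (m*k) → Fin r,
        ∀ A : Finset (ZMod (m*k)), IsAP (m*k) k A → ¬ ∃ i, ∀ x ∈ A, c x = i} ≤ 1 :=
      Nat.lt_succ_iff.mp (Nat.lt_of_not_le hcon)
    have hSne : Set.Nonempty {r | ∃ c : ZMod (m*k) → Fin r,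
        ∀ A : Finset (ZMod (m*k)), IsAP (m*k) k A → ¬ ∃ i, ∀ x ∈ A, c x = i} := ⟨3+q, hmem⟩
    have hx := Nat.sInf_mem hSne
    simp only [Set.mem_setOf_eq] at hx
    obtain ⟨c, hc⟩ := hx
    have hAP : IsAP (m*k) k ((Finset.range k).image
        (fun i : ℕ => (0 : ZMod (m*k)) + (i : ZMod (m*k)) * 1)) := by
      refine ⟨1, ?_, 0, rfl⟩
      rw [Finset.card_image_of_injOn, Finset.card_range]
      intro i hi j hj hij
      simp only [Finset.coe_range, Set.mem_Iio] at hi hj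
      simp only [mul_one, zero_add] at hij
      have hv : ((i : ZMod (m*k))).val = ((j : ZMod (m*k))).val := by rw [hij]
      rwa [ZMod.val_natCast, ZMod.val_natCast,
        Nat.mod_eq_of_lt (lt_of_lt_of_le hi hkN),
        Nat.mod_eq_of_lt (lt_of_lt_of_le hj hkN)] at hv
    refine hc _ hAP ⟨c 0, fun x _ => ?_⟩
    have h1 : (c x).val = 0 := Nat.lt_one_iff.mp (lt_of_lt_of_le (c x).isLt hcon')
    have h2 : (c 0).val = 0 := Nat.lt_one_iff.mp (lt_of_lt_of_le (c 0).isLt hcon')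
    exact Fin.ext (h1.trans h2.symm)
  · -- upper bound
    rw [hRform, chiNum]
    exact Nat.sInf_le hmem
end
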